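/- arXiv:1906.04399 — 6 statements merged into one kernel-verified Lean document; each statement's English description precedes it below -/
import Mathlib

section
/- (Stanley shuffle invariance) Let π, τ be permutations of disjoint finite alphabets and π', τ' permutations of (possibly different) disjoint alphabets. If Des(π) = Des(π') and Des(τ) = Des(τ'), then there is a descent-set-preserving bijection between the shuffle set π ⧢ τ and the shuffle set π' ⧢ τ'. Equivalently, the multiset of descent sets of shuffles of π and τ depends only on Des(π), Des(τ), and the lengths of π and τ. -/
open scoped Classical

/-- Successor in `Fin n` (cyclic, but only used under the guard `i+1 < n`). -/
def finSucc {n : ℕ} (i : Fin n) : Fin n := ⟨((i : ℕ) + 1) % n, Nat.mod_lt _ i.pos⟩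

def pDes {n : ℕ} (π : Equiv.Perm (Fin n)) : Finset (Fin n) :=
  Finset.univ.filter fun i => (i : ℕ) + 1 < n ∧ π (finSucc i) < π i

/-- The inverse `J`-class `R_J^{-1} = {σ : Des σ⁻¹ ⊆ J}`, as a multiset. -/
noncomputable def RinvM (n : ℕ) (J : Finset (Fin n)) : Multiset (Equiv.Perm (Fin n)) :=
  (Finset.univ.filter fun σ : Equiv.Perm (Fin n) => pDes σ⁻¹ ⊆ J).val

/-- Product of multisets of permutations (with multiplicity). -/
def mprod {n : ℕ} (A B : Multiset (Equiv.Perm (Fin n))) : Multiset (Equiv.Perm (Fin n)) :=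
  A.bind fun a => B.map fun b => a * b

/-- The composition `co(J)` of `n` corresponding to `J ⊆ [n-1]`, as a list of parts. -/
def compList (n : ℕ) (J : Finset (Fin n)) : List ℕ :=
  let l := (J.sort (· ≤ ·)).map fun i => (i : ℕ) + 1
  List.zipWith (· - ·) (l ++ [n]) (0 :: l)

/-- `co(J)` as a multiset of parts (so `compM n J = compM n K` means `J ∼ K`). -/
def compM (n : ℕ) (J : Finset (Fin n)) : Multiset ℕ := (compList n J : Multiset ℕ)
/-- `IsShuffle u v w`: `w` is an interleaving of `u` and `v`. -/
inductive IsShuffle {α : Type*} : List α → List α → List α → Prop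
  | nil : IsShuffle [] [] []
  | left {a : α} {u v w : List α} : IsShuffle u v w → IsShuffle (a :: u) v (a :: w)
  | right {a : α} {u v w : List α} : IsShuffle u v w → IsShuffle u (a :: v) (a :: w)

/-- `IsShuffleN L w`: `w` is a shuffle of all the words in the list `L`. -/
inductive IsShuffleN {α : Type*} : List (List α) → List α → Prop
  | nil : IsShuffleN [] []
  | cons {u : List α} {L : List (List α)} {w z : List α} :
      IsShuffleN L w → IsShuffle u w z → IsShuffleN (u :: L) z

/-- Split a list into consecutive blocks of the given sizes. -/
def splitSizes {α : Type*} : List α → List ℕ → List (List α)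
  | _, [] => []
  | l, k :: ks => l.take k :: splitSizes (l.drop k) ks

/-- The one-line notation of a permutation of `Fin n`. -/
def oneLine {n : ℕ} (π : Equiv.Perm (Fin n)) : List (Fin n) :=
  (List.finRange n).map π
/-- Descent set of a word of integers (0-indexed positions). -/
noncomputable def DesW (w : List ℤ) : Finset ℕ :=
  (Finset.range w.length).filter fun i =>
    if h : i + 1 < w.length then w.get ⟨i + 1, h⟩ < w.get ⟨i, Nat.lt_of_succ_lt h⟩
    else False

/- ===== auxiliary development ===== -/
namespace StanleyAux

open List

variable {α : Type*}

theorem nil_shuffle : ∀ (v : List α), IsShuffle [] v v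
  | [] => .nil
  | _ :: v => .right (nil_shuffle v)

theorem shuffle_nil : ∀ (u : List α), IsShuffle u [] u
  | [] => .nil
  | _ :: u => .left (shuffle_nil u)

theorem _root_.IsShuffle.perm {u v w : List α} (h : IsShuffle u v w) : w.Perm (u ++ v) := by
  induction h with
  | nil => simp
  | left h ih => exact ih.cons _
  | right h ih => exact (ih.cons _).trans List.perm_middle.symm

theorem _root_.IsShuffle.sublist_left {u v w : List α} (h : IsShuffle u v w) : u.Sublist w := by
  induction h with
  | nil => exact .slnil
  | left h ih => exact ih.cons₂ _
  | right h ih => exact ih.cons _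

theorem _root_.IsShuffle.sublist_right {u v w : List α} (h : IsShuffle u v w) : v.Sublist w := by
  induction h with
  | nil => exact .slnil
  | left h ih => exact ih.cons _
  | right h ih => exact ih.cons₂ _

theorem _root_.IsShuffle.nil_inv {u v : List α} (h : IsShuffle u v []) : u = [] ∧ v = [] := by
  cases h; exact ⟨rfl, rfl⟩

theorem _root_.IsShuffle.append {u v c u' v' d : List α} (h1 : IsShuffle u v c)
    (h2 : IsShuffle u' v' d) : IsShuffle (u ++ u') (v ++ v') (c ++ d) := by
  induction h1 with
  | nil => simpa using h2
  | left h ih => exact .left ih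
  | right h ih => exact .right ih

theorem shuffle_append_split : ∀ (c : List α) {d u v : List α}, IsShuffle u v (c ++ d) →
    ∃ u1 u2 v1 v2, u = u1 ++ u2 ∧ v = v1 ++ v2 ∧ IsShuffle u1 v1 c ∧ IsShuffle u2 v2 d
  | [], d, u, v, h => ⟨[], u, [], v, rfl, rfl, .nil, h⟩
  | a :: c, d, u, v, h => by
    cases h with
    | left h =>
      obtain ⟨u1, u2, v1, v2, rfl, rfl, h1, h2⟩ := shuffle_append_split c h
      exact ⟨a :: u1, u2, v1, v2, rfl, rfl, .left h1, h2⟩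
    | right h =>
      obtain ⟨u1, u2, v1, v2, rfl, rfl, h1, h2⟩ := shuffle_append_split c h
      exact ⟨u1, u2, a :: v1, v2, rfl, rfl, .right h1, h2⟩

theorem exists_sorted_shuffle [LinearOrder α] :
    ∀ u v : List α, Chain' (· ≤ ·) u → Chain' (· ≤ ·) v →
      ∃ c, IsShuffle u v c ∧ Chain' (· ≤ ·) c ∧
        ∀ x : α, Chain' (· ≤ ·) (x :: u) → Chain' (· ≤ ·) (x :: v) →
          Chain' (· ≤ ·) (x :: c) := by
  intro u
  induction u with
  | nil => exact fun v _ hv => ⟨v, nil_shuffle v, hv, fun x _ h2 => h2⟩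
  | cons a u ihu =>
    intro v
    induction v with
    | nil => exact fun hu _ => ⟨a :: u, shuffle_nil _, hu, fun x h1 _ => h1⟩
    | cons b v ihv =>
      intro hu hv
      by_cases hab : a ≤ b
      · obtain ⟨c, hc1, hc2, hc3⟩ := ihu (b :: v) hu.tail hv
        have hac : Chain' (· ≤ ·) (a :: c) :=
          hc3 a hu (List.isChain_cons_cons.mpr ⟨hab, hv⟩)
        refine ⟨a :: c, .left hc1, hac, fun x hx1 hx2 => ?_⟩
        exact List.isChain_cons_cons.mpr ⟨(List.isChain_cons_cons.mp hx1).1, hac⟩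
      · have hba : b ≤ a := le_of_lt (not_le.mp hab)
        obtain ⟨c, hc1, hc2, hc3⟩ := ihv hu hv.tail
        have hbc : Chain' (· ≤ ·) (b :: c) :=
          hc3 b (List.isChain_cons_cons.mpr ⟨hba, hu⟩) hv
        refine ⟨b :: c, .right hc1, hbc, fun x hx1 hx2 => ?_⟩
        exact List.isChain_cons_cons.mpr ⟨(List.isChain_cons_cons.mp hx2).1, hbc⟩

/-! ### splitSizes lemmas -/

@[simp] theorem length_splitSizes : ∀ (ks : List ℕ) (l : List α),
    (splitSizes l ks).length = ks.length
  | [], _ => rfl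
  | _ :: ks, l => by simp [splitSizes, length_splitSizes ks]

theorem flatten_splitSizes : ∀ (ks : List ℕ) (l : List α), l.length ≤ ks.sum →
    (splitSizes l ks).flatten = l
  | [], l, h => by
    simp only [List.sum_nil, Nat.le_zero, List.length_eq_zero_iff] at h
    simp [splitSizes, h]
  | k :: ks, l, h => by
    simp only [splitSizes, List.flatten_cons]
    rw [flatten_splitSizes ks (l.drop k) (by simp at h ⊢; omega), List.take_append_drop]

theorem map_length_splitSizes : ∀ (ks : List ℕ) (l : List α), ks.sum ≤ l.length →
    (splitSizes l ks).map List.length = ks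
  | [], _, _ => rfl
  | k :: ks, l, h => by
    simp only [List.sum_cons] at h
    simp only [splitSizes, List.map_cons, List.length_take]
    rw [map_length_splitSizes ks (l.drop k) (by simp; omega)]
    congr 1
    omega

theorem splitSizes_flatten : ∀ (cs : List (List α)),
    splitSizes cs.flatten (cs.map List.length) = cs
  | [] => rfl
  | c :: cs => by
    simp only [List.flatten_cons, List.map_cons, splitSizes, List.take_left, List.drop_left]
    rw [splitSizes_flatten cs]

/-! ### Shuffles3 -/

inductive Shuffles3 : List (List α) → List (List α) → List (List α) → Prop
  | nil : Shuffles3 [] [] []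
  | cons {u v c : List α} {ps ts cs : List (List α)} :
      IsShuffle u v c → Shuffles3 ps ts cs → Shuffles3 (u :: ps) (v :: ts) (c :: cs)

theorem Shuffles3.flattenS {ps ts cs : List (List α)} (h : Shuffles3 ps ts cs) :
    IsShuffle ps.flatten ts.flatten cs.flatten := by
  induction h with
  | nil => exact .nil
  | cons h1 h2 ih => exact h1.append ih

theorem shuffle_decomp : ∀ (ks : List ℕ) {u v w : List α}, ks.sum = w.length →
    IsShuffle u v w →
    ∃ ps ts, ps.flatten = u ∧ ts.flatten = v ∧ Shuffles3 ps ts (splitSizes w ks)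
  | [], u, v, w, hs, h => by
    have hw : w = [] := by
      have := List.length_eq_zero_iff.mp (by simpa using hs.symm)
      exact this
    subst hw
    obtain ⟨rfl, rfl⟩ := h.nil_inv
    exact ⟨[], [], rfl, rfl, .nil⟩
  | k :: ks, u, v, w, hs, h => by
    have h' : IsShuffle u v (w.take k ++ w.drop k) := by rw [List.take_append_drop]; exact h
    obtain ⟨u1, u2, v1, v2, rfl, rfl, h1, h2⟩ := shuffle_append_split (w.take k) h'
    have hks : ks.sum = (w.drop k).length := by
      simp only [List.sum_cons] at hs; simp; omega
    obtain ⟨ps, ts, rfl, rfl, h3⟩ := shuffle_decomp ks hks h2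
    exact ⟨u1 :: ps, v1 :: ts, rfl, rfl, .cons h1 h3⟩

theorem Shuffles3.countP {ps ts cs : List (List α)} (P : α → Bool) (h : Shuffles3 ps ts cs)
    (hp : ∀ x ∈ ps.flatten, P x) (ht : ∀ x ∈ ts.flatten, ¬ P x) :
    cs.map (fun c => c.countP P) = ps.map List.length := by
  induction h with
  | nil => rfl
  | @cons u v c ps ts cs h1 h2 ih =>
    simp only [List.flatten_cons, List.mem_append] at hp ht
    simp only [List.map_cons]
    rw [ih (fun x hx => hp x (Or.inr hx)) (fun x hx => ht x (Or.inr hx))]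
    congr 1
    rw [h1.perm.countP_eq, List.countP_append]
    rw [List.countP_eq_length.mpr (fun x hx => hp x (Or.inl hx)),
      List.countP_eq_zero.mpr (fun x hx => ht x (Or.inl hx))]
    omega

theorem Shuffles3.len {ps ts cs : List (List α)} (h : Shuffles3 ps ts cs) :
    cs.map List.length = List.zipWith (· + ·) (ps.map List.length) (ts.map List.length) := by
  induction h with
  | nil => rfl
  | cons h1 h2 ih =>
    simp only [List.map_cons, List.zipWith_cons_cons]
    rw [ih]; congr 1
    simpa using h1.perm.length_eq

theorem Shuffles3.sub {ps ts cs : List (List α)} (h : Shuffles3 ps ts cs) :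
    List.zipWith (· - ·) (cs.map List.length) (ps.map List.length) = ts.map List.length := by
  induction h with
  | nil => rfl
  | cons h1 h2 ih =>
    simp only [List.map_cons, List.zipWith_cons_cons]
    rw [ih]; congr 1
    have := h1.perm.length_eq
    simp at this; omega

theorem Shuffles3.forall₂_le {ps ts cs : List (List α)} (h : Shuffles3 ps ts cs) :
    List.Forall₂ (· ≤ ·) (ps.map List.length) (cs.map List.length) := by
  induction h with
  | nil => exact .nil
  | cons h1 h2 ih => exact .cons h1.sublist_left.length_le ih

theorem Shuffles3.sorted_left [LinearOrder α] {ps ts cs : List (List α)}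
    (h : Shuffles3 ps ts cs) (hc : ∀ c ∈ cs, Chain' (· ≤ ·) c) :
    ∀ u ∈ ps, Chain' (· ≤ ·) u := by
  induction h with
  | nil => simp
  | cons h1 h2 ih =>
    intro u hu
    rcases List.mem_cons.mp hu with rfl | hu
    · exact (hc _ (List.mem_cons_self)).sublist h1.sublist_left
    · exact ih (fun c hc' => hc c (List.mem_cons_of_mem _ hc')) u hu

theorem Shuffles3.sorted_right [LinearOrder α] {ps ts cs : List (List α)}
    (h : Shuffles3 ps ts cs) (hc : ∀ c ∈ cs, Chain' (· ≤ ·) c) :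
    ∀ v ∈ ts, Chain' (· ≤ ·) v := by
  induction h with
  | nil => simp
  | cons h1 h2 ih =>
    intro v hv
    rcases List.mem_cons.mp hv with rfl | hv
    · exact (hc _ (List.mem_cons_self)).sublist h1.sublist_right
    · exact ih (fun c hc' => hc c (List.mem_cons_of_mem _ hc')) v hv

theorem Shuffles3.sorted_unique [LinearOrder α] {ps ts cs cs' : List (List α)}
    (h : Shuffles3 ps ts cs) (h' : Shuffles3 ps ts cs')
    (hc : ∀ c ∈ cs, Chain' (· ≤ ·) c) (hc' : ∀ c ∈ cs', Chain' (· ≤ ·) c) : cs = cs' := by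
  induction h generalizing cs' with
  | nil => cases h'; rfl
  | @cons u v c ps ts cs h1 h2 ih =>
    cases h' with
    | @cons _ _ c' _ _ cs0 h1' h2' =>
      congr 1
      · have s1 : List.Pairwise (· ≤ ·) c := List.isChain_iff_pairwise.mp (hc _ (List.mem_cons_self))
        have s2 : List.Pairwise (· ≤ ·) c' := List.isChain_iff_pairwise.mp (hc' _ (List.mem_cons_self))
        exact List.Perm.eq_of_pairwise' s1 s2 (h1.perm.trans h1'.perm.symm)
      · exact ih h2' (fun c hc0 => hc c (List.mem_cons_of_mem _ hc0))
          (fun c hc0 => hc' c (List.mem_cons_of_mem _ hc0))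

theorem exists_shuffles3_sorted [LinearOrder α] :
    ∀ (ps ts : List (List α)), ps.length = ts.length →
      (∀ u ∈ ps, Chain' (· ≤ ·) u) → (∀ v ∈ ts, Chain' (· ≤ ·) v) →
      ∃ cs, Shuffles3 ps ts cs ∧ ∀ c ∈ cs, Chain' (· ≤ ·) c
  | [], [], _, _, _ => ⟨[], .nil, by simp⟩
  | [], v :: ts, h, _, _ => by simp at h
  | u :: ps, [], h, _, _ => by simp at h
  | u :: ps, v :: ts, h, hp, ht => by
    obtain ⟨c, hc1, hc2, _⟩ := exists_sorted_shuffle u v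
      (hp u (List.mem_cons_self)) (ht v (List.mem_cons_self))
    obtain ⟨cs, hcs1, hcs2⟩ := exists_shuffles3_sorted ps ts (by simpa using h)
      (fun x hx => hp x (List.mem_cons_of_mem _ hx))
      (fun x hx => ht x (List.mem_cons_of_mem _ hx))
    refine ⟨c :: cs, .cons hc1 hcs1, ?_⟩
    intro c' hc'
    rcases List.mem_cons.mp hc' with rfl | hc' 
    · exact hc2
    · exact hcs2 c' hc'

/-! ### partial sums and cut sets -/

def psums : List ℕ → List ℕ
  | [] => [0]
  | a :: l => 0 :: (psums l).map (a + ·)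

theorem zero_mem_psums (l : List ℕ) : 0 ∈ psums l := by
  cases l <;> simp [psums]

def diffs : ℕ → List ℕ → List ℕ
  | _, [] => []
  | a, c :: l => (c - a) :: diffs c l

theorem sum_diffs : ∀ (l : List ℕ) (a b : ℕ), List.Chain (· ≤ ·) a (l ++ [b]) →
    a + (diffs a (l ++ [b])).sum = b
  | [], a, b, h => by
    simp only [List.Chain, List.nil_append, List.isChain_cons_cons, List.isChain_singleton, and_true] at h
    simp [diffs]; omega
  | c :: l, a, b, h => by
    simp only [List.Chain, List.cons_append, List.isChain_cons_cons] at h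
    have ih := sum_diffs l c b h.2
    show a + ((c - a) :: diffs c (l ++ [b])).sum = b
    simp only [List.sum_cons]
    omega

theorem mem_psums_diffs : ∀ (l : List ℕ) (a j : ℕ), List.Chain (· ≤ ·) a l →
    (j ∈ psums (diffs a l) ↔ j = 0 ∨ a + j ∈ l)
  | [], a, j, _ => by simp [diffs, psums]
  | c :: l, a, j, h => by
    simp only [List.Chain, List.isChain_cons_cons] at h
    have hac : a ≤ c := h.1
    have ih := mem_psums_diffs l c
    constructor
    · intro hj
      simp only [diffs, psums, List.mem_cons, List.mem_map] at hj
      rcases hj with rfl | ⟨j', hj', rfl⟩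
      · exact Or.inl rfl
      · rcases (ih j' h.2).mp hj' with rfl | hm
        · right; simp; left; omega
        · right; simp only [List.mem_cons]; right
          have : a + (c - a + j') = c + j' := by omega
          rw [this]; exact hm
    · intro hj
      rcases hj with rfl | hm
      · exact zero_mem_psums _
      · rcases List.mem_cons.mp hm with hc | hm'
        · simp only [diffs, psums, List.mem_cons, List.mem_map]
          right; exact ⟨0, zero_mem_psums _, by omega⟩
        · have hcle : c ≤ a + j := by
            have : List.Pairwise (· ≤ ·) (c :: l) := List.isChain_iff_pairwise.mp h.2
            rcases List.pairwise_cons.mp this with ⟨h3, _⟩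
            exact h3 _ hm'
          have : c + (a + j - c) ∈ l := by
            have : c + (a + j - c) = a + j := by omega
            rw [this]; exact hm'
          have hj' : (a + j - c) ∈ psums (diffs c l) := (ih _ h.2).mpr (Or.inr this)
          simp only [diffs, psums, List.mem_cons, List.mem_map]
          right; exact ⟨_, hj', by omega⟩

/-- cut positions coming from a descent set `K`, for words of length `n`. -/
noncomputable def cutsOf (K : Finset ℕ) (n : ℕ) : List ℕ :=
  ((K.filter (fun j => j + 1 < n)).sort (· ≤ ·)).map (· + 1)

noncomputable def sizesOfK (K : Finset ℕ) (n : ℕ) : List ℕ :=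
  diffs 0 (cutsOf K n ++ [n])

theorem chain_cutsOf (K : Finset ℕ) (n : ℕ) :
    List.Chain (· ≤ ·) 0 (cutsOf K n ++ [n]) := by
  show List.IsChain _ (0 :: (cutsOf K n ++ [n]))
  rw [List.isChain_iff_pairwise]
  have hs : List.Pairwise (· ≤ ·) ((K.filter (fun j => j + 1 < n)).sort (· ≤ ·)) :=
    Finset.pairwise_sort _ _
  refine List.pairwise_cons.mpr ⟨fun x _ => Nat.zero_le x, ?_⟩
  rw [List.pairwise_append]
  refine ⟨?_, by simp, ?_⟩
  · exact (List.pairwise_map.mpr (hs.imp (fun h => by omega)))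
  · intro x hx y hy
    simp only [List.mem_singleton] at hy
    subst hy
    simp only [cutsOf, List.mem_map, Finset.mem_sort, Finset.mem_filter] at hx
    obtain ⟨j, ⟨_, hj⟩, rfl⟩ := hx
    omega

theorem sum_sizesOfK (K : Finset ℕ) (n : ℕ) : (sizesOfK K n).sum = n := by
  have := sum_diffs (cutsOf K n) 0 n (chain_cutsOf K n)
  simpa [sizesOfK] using this

theorem mem_psums_sizesOfK {K : Finset ℕ} {n i : ℕ} (hi : i + 1 < n) :
    (i + 1) ∈ psums (sizesOfK K n) ↔ i ∈ K := by
  rw [sizesOfK, mem_psums_diffs _ _ _ (chain_cutsOf K n)]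
  constructor
  · rintro (h | h)
    · omega
    · rw [Nat.zero_add] at h
      rcases List.mem_append.mp h with h | h
      · simp only [cutsOf, List.mem_map, Finset.mem_sort, Finset.mem_filter] at h
        obtain ⟨j, ⟨hj, _⟩, hji⟩ := h
        have : j = i := by omega
        subst this; exact hj
      · simp only [List.mem_singleton] at h; omega
  · intro h
    right
    rw [Nat.zero_add]
    refine List.mem_append.mpr (Or.inl ?_)
    simp only [cutsOf, List.mem_map, Finset.mem_sort, Finset.mem_filter]
    exact ⟨i, ⟨h, hi⟩, rfl⟩

/-! ### descents -/

theorem mem_DesW {w : List ℤ} {i : ℕ} :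
    i ∈ DesW w ↔ ∃ h : i + 1 < w.length,
      w.get ⟨i + 1, h⟩ < w.get ⟨i, Nat.lt_of_succ_lt h⟩ := by
  simp only [DesW, Finset.mem_filter, Finset.mem_range]
  constructor
  · rintro ⟨h1, h2⟩
    split at h2
    · exact ⟨‹_›, h2⟩
    · exact absurd h2 (by simp)
  · rintro ⟨h, h2⟩
    refine ⟨by omega, ?_⟩
    rw [dif_pos h]
    exact h2

theorem chain'_le_iff_desW {w : List ℤ} :
    Chain' (· ≤ ·) w ↔ ∀ i, i ∉ DesW w := by
  rw [show Chain' (· ≤ ·) w ↔ List.IsChain (· ≤ ·) w from Iff.rfl, List.isChain_iff_getElem]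
  constructor
  · intro h i hi
    rw [mem_DesW] at hi
    obtain ⟨hlt, hd⟩ := hi
    exact absurd (h i (by omega)) (by simp only [not_le]; exact hd)
  · intro h i hlt
    by_contra hc
    exact h i (mem_DesW.mpr ⟨by omega, by simpa using not_le.mp hc⟩)

theorem mem_DesW' {w : List ℤ} {i : ℕ} :
    i ∈ DesW w ↔ ∃ h : i + 1 < w.length, w[i + 1] < w[i]'(Nat.lt_of_succ_lt h) := by
  rw [mem_DesW]; exact Iff.rfl


theorem desW_drop {x : List ℤ} {k i : ℕ} : i ∈ DesW (x.drop k) ↔ (k + i) ∈ DesW x := by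
  simp only [mem_DesW', List.length_drop]
  constructor
  · rintro ⟨h, hd⟩
    rw [List.getElem_drop, List.getElem_drop] at hd
    exact ⟨by omega, hd⟩
  · rintro ⟨h, hd⟩
    refine ⟨by omega, ?_⟩
    rw [List.getElem_drop, List.getElem_drop]
    exact hd

theorem desW_take {x : List ℤ} {k i : ℕ} (hik : i + 1 < k) :
    i ∈ DesW (x.take k) ↔ i ∈ DesW x := by
  simp only [mem_DesW', List.length_take]
  constructor
  · rintro ⟨h, hd⟩
    rw [List.getElem_take, List.getElem_take] at hd
    exact ⟨by omega, hd⟩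
  · rintro ⟨h, hd⟩
    refine ⟨by omega, ?_⟩
    rw [List.getElem_take, List.getElem_take]
    exact hd

theorem splitDes : ∀ (la : List ℕ) (x : List ℤ), la.sum = x.length →
    ((∀ c ∈ splitSizes x la, Chain' (· ≤ ·) c) ↔ ∀ i ∈ DesW x, i + 1 ∈ psums la)
  | [], x, hs => by
    have hx : x = [] := List.length_eq_zero_iff.mp (by simpa using hs.symm)
    subst hx
    constructor
    · intro _ i hi
      rw [mem_DesW'] at hi
      obtain ⟨h, _⟩ := hi
      simp at h
    · intro _ c hc
      simp [splitSizes] at hc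
  | k :: ks, x, hs => by
    have hk : k ≤ x.length := by simp at hs; omega
    have hdlen : ks.sum = (x.drop k).length := by simp at hs ⊢; omega
    have IH := splitDes ks (x.drop k) hdlen
    have hsplit : splitSizes x (k :: ks) = x.take k :: splitSizes (x.drop k) ks := rfl
    constructor
    · intro hC i hi
      have hC1 : Chain' (· ≤ ·) (x.take k) :=
        hC _ (by rw [hsplit]; exact List.mem_cons_self)
      have hC2 := IH.mp (fun c hc => hC c (by rw [hsplit]; exact List.mem_cons_of_mem _ hc))
      rcases lt_trichotomy (i + 1) k with hlt | heq | hgt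
      · exact absurd ((desW_take hlt).mpr hi) (chain'_le_iff_desW.mp hC1 i)
      · simp only [psums, List.mem_cons, List.mem_map]
        right; exact ⟨0, zero_mem_psums ks, by omega⟩
      · have h2 : (i - k) ∈ DesW (x.drop k) := by
          rw [desW_drop]
          have hki : k + (i - k) = i := by omega
          rw [hki]; exact hi
        have h3 := hC2 _ h2
        simp only [psums, List.mem_cons, List.mem_map]
        right; exact ⟨i - k + 1, h3, by omega⟩
    · intro hR c hc
      rw [hsplit] at hc
      rcases List.mem_cons.mp hc with rfl | hc
      · rw [chain'_le_iff_desW]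
        intro i hi
        have hi' := hi
        rw [mem_DesW'] at hi'
        obtain ⟨h, _⟩ := hi'
        rw [List.length_take] at h
        have hik : i + 1 < k := by omega
        have hx : i ∈ DesW x := (desW_take hik).mp hi
        have := hR i hx
        simp only [psums, List.mem_cons, List.mem_map] at this
        rcases this with h0 | ⟨j, _, hj⟩ <;> omega
      · refine (IH.mpr ?_) c hc
        intro i hi
        have hx : (k + i) ∈ DesW x := desW_drop.mp hi
        have := hR _ hx
        simp only [psums, List.mem_cons, List.mem_map] at this
        rcases this with h0 | ⟨j, hj1, hj2⟩
        · omega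
        · have hji : j = i + 1 := by omega
          subst hji; exact hj1

/-! ### the invariant data and the key bijection -/

noncomputable def shufSet (p t : List ℤ) : Finset (List ℤ) :=
  ((p ++ t).permutations.toFinset).filter (fun w => IsShuffle p t w)

theorem mem_shufSet {p t w : List ℤ} : w ∈ shufSet p t ↔ IsShuffle p t w := by
  simp only [shufSet, Finset.mem_filter, List.mem_toFinset, List.mem_permutations]
  exact ⟨fun h => h.2, fun h => ⟨h.perm, h⟩⟩

def sChunks (sizes : List ℕ) (w : List ℤ) : Prop :=
  ∀ c ∈ splitSizes w sizes, Chain' (· ≤ ·) c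

def laOf (sizes : List ℕ) (p w : List ℤ) : List ℕ :=
  (splitSizes w sizes).map (fun c => c.countP (fun x => decide (x ∈ p)))

def Q (sizes : List ℕ) (plen : ℕ) (Dp Dt : Finset ℕ) (la : List ℕ) : Prop :=
  List.Forall₂ (· ≤ ·) la sizes ∧ la.sum = plen ∧
    (∀ i ∈ Dp, i + 1 ∈ psums la) ∧
    (∀ i ∈ Dt, i + 1 ∈ psums (List.zipWith (· - ·) sizes la))

theorem sub_sum_of_forall₂ {la sizes : List ℕ} (h : List.Forall₂ (· ≤ ·) la sizes) :
    (List.zipWith (· - ·) sizes la).sum + la.sum = sizes.sum := by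
  induction h with
  | nil => rfl
  | cons h1 h2 ih => simp only [List.zipWith_cons_cons, List.sum_cons]; omega

theorem zipWith_add_sub {la sizes : List ℕ} (h : List.Forall₂ (· ≤ ·) la sizes) :
    List.zipWith (· + ·) la (List.zipWith (· - ·) sizes la) = sizes := by
  induction h with
  | nil => rfl
  | cons h1 h2 ih =>
    simp only [List.zipWith_cons_cons]
    rw [ih]; congr 1; omega

theorem key_decomp {p t w : List ℤ} {sizes : List ℕ}
    (h1 : (p ++ t).Nodup) (hs : sizes.sum = p.length + t.length)
    (hw : IsShuffle p t w) (hsc : sChunks sizes w) :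
    Shuffles3 (splitSizes p (laOf sizes p w))
        (splitSizes t (List.zipWith (· - ·) sizes (laOf sizes p w)))
        (splitSizes w sizes)
      ∧ Q sizes p.length (DesW p) (DesW t) (laOf sizes p w) := by
  have hwlen : w.length = p.length + t.length := by simpa using hw.perm.length_eq
  obtain ⟨ps, ts, hps, hts, hS⟩ := shuffle_decomp sizes (by omega) hw
  have hdisj : t.Disjoint p := by
    intro a ht hp; exact (List.nodup_append.mp h1).2.2 a hp a ht rfl
  have hla : laOf sizes p w = ps.map List.length := by
    refine hS.countP _ ?_ ?_
    · intro x hx; rw [hps] at hx; simpa using hx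
    · intro x hx
      rw [hts] at hx
      simp only [decide_eq_true_eq]
      exact fun hmem => hdisj hx hmem
  have hlen : (splitSizes w sizes).map List.length = sizes :=
    map_length_splitSizes _ _ (by omega)
  have hps' : splitSizes p (laOf sizes p w) = ps := by
    rw [hla, ← hps, splitSizes_flatten]
  have hlb : List.zipWith (· - ·) sizes (laOf sizes p w) = ts.map List.length := by
    rw [hla, ← hlen]; exact hS.sub
  have hts' : splitSizes t (List.zipWith (· - ·) sizes (laOf sizes p w)) = ts := by
    rw [hlb, ← hts, splitSizes_flatten]
  have hsumla : (laOf sizes p w).sum = p.length := by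
    rw [hla, ← List.length_flatten, hps]
  have hsumlb : (List.zipWith (· - ·) sizes (laOf sizes p w)).sum = t.length := by
    rw [hlb, ← List.length_flatten, hts]
  refine ⟨by rw [hps', hts']; exact hS, ?_, hsumla, ?_, ?_⟩
  · rw [hla, ← hlen]; exact hS.forall₂_le
  · rw [← splitDes _ _ hsumla, hps']
    exact hS.sorted_left hsc
  · rw [← splitDes _ _ hsumlb, hts']
    exact hS.sorted_right hsc

theorem exists_of_Q {p t : List ℤ} {sizes la : List ℕ}
    (h1 : (p ++ t).Nodup) (hs : sizes.sum = p.length + t.length)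
    (hQ : Q sizes p.length (DesW p) (DesW t) la) :
    ∃ w, IsShuffle p t w ∧ sChunks sizes w ∧ laOf sizes p w = la := by
  obtain ⟨hF, hsum, hDp, hDt⟩ := hQ
  have hsub := sub_sum_of_forall₂ hF
  have hlb_sum : (List.zipWith (· - ·) sizes la).sum = t.length := by omega
  have hps : (splitSizes p la).flatten = p := flatten_splitSizes _ _ (by omega)
  have hts : (splitSizes t (List.zipWith (· - ·) sizes la)).flatten = t :=
    flatten_splitSizes _ _ (by omega)
  have hps_sorted := (splitDes la p hsum).mpr hDp
  have hts_sorted := (splitDes _ t hlb_sum).mpr hDt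
  have hlen : (splitSizes p la).length = (splitSizes t (List.zipWith (· - ·) sizes la)).length := by
    simp only [length_splitSizes, List.length_zipWith]
    have := hF.length_eq; omega
  obtain ⟨cs, hS, hcs_sorted⟩ := exists_shuffles3_sorted _ _ hlen hps_sorted hts_sorted
  have hmla : (splitSizes p la).map List.length = la := map_length_splitSizes _ _ (by omega)
  have hmlb : (splitSizes t (List.zipWith (· - ·) sizes la)).map List.length
      = List.zipWith (· - ·) sizes la := map_length_splitSizes _ _ (by omega)
  have hcl : cs.map List.length = sizes := by
    rw [hS.len, hmla, hmlb]; exact zipWith_add_sub hF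
  have hsplit : splitSizes cs.flatten sizes = cs := by
    rw [← hcl, splitSizes_flatten]
  have hdisj : t.Disjoint p := by
    intro a ht hp; exact (List.nodup_append.mp h1).2.2 a hp a ht rfl
  refine ⟨cs.flatten, ?_, ?_, ?_⟩
  · have := hS.flattenS; rw [hps, hts] at this; exact this
  · intro c hc; rw [hsplit] at hc; exact hcs_sorted c hc
  · rw [laOf, hsplit]
    rw [hS.countP _ ?_ ?_, hmla]
    · intro x hx; rw [hps] at hx; simpa using hx
    · intro x hx
      rw [hts] at hx
      simp only [decide_eq_true_eq]
      exact fun hmem => hdisj hx hmem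

theorem laOf_inj {p t w₁ w₂ : List ℤ} {sizes : List ℕ}
    (h1 : (p ++ t).Nodup) (hs : sizes.sum = p.length + t.length)
    (hw₁ : IsShuffle p t w₁) (hw₂ : IsShuffle p t w₂)
    (hc₁ : sChunks sizes w₁) (hc₂ : sChunks sizes w₂)
    (hla : laOf sizes p w₁ = laOf sizes p w₂) : w₁ = w₂ := by
  obtain ⟨hS₁, -⟩ := key_decomp h1 hs hw₁ hc₁
  obtain ⟨hS₂, -⟩ := key_decomp h1 hs hw₂ hc₂
  rw [hla] at hS₁
  have hcs := hS₁.sorted_unique hS₂ hc₁ hc₂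
  have hl₁ : w₁.length = p.length + t.length := by simpa using hw₁.perm.length_eq
  have hl₂ : w₂.length = p.length + t.length := by simpa using hw₂.perm.length_eq
  have e₁ : (splitSizes w₁ sizes).flatten = w₁ := flatten_splitSizes _ _ (by omega)
  have e₂ : (splitSizes w₂ sizes).flatten = w₂ := flatten_splitSizes _ _ (by omega)
  rw [← e₁, ← e₂, hcs]

/-! ### cardinality results -/

theorem card_sChunks_eq {p t p' t' : List ℤ} {sizes : List ℕ}
    (h1 : (p ++ t).Nodup) (h2 : (p' ++ t').Nodup)
    (hlp : p.length = p'.length) (hlt : t.length = t'.length)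
    (hdp : DesW p = DesW p') (hdt : DesW t = DesW t')
    (hs : sizes.sum = p.length + t.length) :
    ((shufSet p t).filter (sChunks sizes)).card
      = ((shufSet p' t').filter (sChunks sizes)).card := by
  have hs' : sizes.sum = p'.length + t'.length := by omega
  have ex : ∀ w ∈ (shufSet p t).filter (sChunks sizes),
      ∃ w', w' ∈ (shufSet p' t').filter (sChunks sizes)
        ∧ laOf sizes p' w' = laOf sizes p w := by
    intro w hw
    rw [Finset.mem_filter, mem_shufSet] at hw
    obtain ⟨-, hQ⟩ := key_decomp h1 hs hw.1 hw.2
    have hQ' : Q sizes p'.length (DesW p') (DesW t') (laOf sizes p w) := by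
      rw [← hlp, ← hdp, ← hdt]; exact hQ
    obtain ⟨w', hw1, hw2, hw3⟩ := exists_of_Q h2 hs' hQ'
    exact ⟨w', by rw [Finset.mem_filter, mem_shufSet]; exact ⟨hw1, hw2⟩, hw3⟩
  have ex' : ∀ w' ∈ (shufSet p' t').filter (sChunks sizes),
      ∃ w, w ∈ (shufSet p t).filter (sChunks sizes)
        ∧ laOf sizes p w = laOf sizes p' w' := by
    intro w' hw'
    rw [Finset.mem_filter, mem_shufSet] at hw'
    obtain ⟨-, hQ⟩ := key_decomp h2 hs' hw'.1 hw'.2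
    have hQ' : Q sizes p.length (DesW p) (DesW t) (laOf sizes p' w') := by
      rw [hlp, hdp, hdt]; exact hQ
    obtain ⟨w, hw1, hw2, hw3⟩ := exists_of_Q h1 hs hQ'
    exact ⟨w, by rw [Finset.mem_filter, mem_shufSet]; exact ⟨hw1, hw2⟩, hw3⟩
  refine Finset.card_bij (fun w hw => (ex w hw).choose) ?_ ?_ ?_
  · intro w hw; exact ((ex w hw).choose_spec).1
  · intro w₁ hw₁ w₂ hw₂ heq
    have s₁ := (ex w₁ hw₁).choose_spec
    have s₂ := (ex w₂ hw₂).choose_spec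
    have heq' : (ex w₁ hw₁).choose = (ex w₂ hw₂).choose := heq
    have hll : laOf sizes p w₁ = laOf sizes p w₂ := by
      rw [← s₁.2, ← s₂.2, heq']
    rw [Finset.mem_filter, mem_shufSet] at hw₁ hw₂
    exact laOf_inj h1 hs hw₁.1 hw₂.1 hw₁.2 hw₂.2 hll
  · intro w' hw'
    obtain ⟨w, hw, hlaw⟩ := ex' w' hw'
    refine ⟨w, hw, ?_⟩
    have s := (ex w hw).choose_spec
    have m1 := s.1
    rw [Finset.mem_filter, mem_shufSet] at m1
    have m2 := hw'
    rw [Finset.mem_filter, mem_shufSet] at m2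
    exact laOf_inj h2 hs' m1.1 m2.1 m1.2 m2.2 (by rw [s.2, hlaw])

theorem card_desSub_eq {p t p' t' : List ℤ}
    (h1 : (p ++ t).Nodup) (h2 : (p' ++ t').Nodup)
    (hlp : p.length = p'.length) (hlt : t.length = t'.length)
    (hdp : DesW p = DesW p') (hdt : DesW t = DesW t') (K : Finset ℕ) :
    ((shufSet p t).filter (fun w => DesW w ⊆ K)).card
      = ((shufSet p' t').filter (fun w => DesW w ⊆ K)).card := by
  set n := p.length + t.length with hn
  have hsum := sum_sizesOfK K n
  have claim : ∀ (u v : List ℤ), u.length + v.length = n →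
      (shufSet u v).filter (fun w => DesW w ⊆ K)
        = (shufSet u v).filter (sChunks (sizesOfK K n)) := by
    intro u v huv
    refine Finset.filter_congr ?_
    intro w hw
    rw [mem_shufSet] at hw
    have hwlen : w.length = n := by rw [← huv]; simpa using hw.perm.length_eq
    have hd := splitDes (sizesOfK K n) w (by rw [hsum, hwlen])
    constructor
    · intro hsub
      refine hd.mpr ?_
      intro i hi
      have hb : i + 1 < n := by
        rw [mem_DesW'] at hi; obtain ⟨h, -⟩ := hi; omega
      exact (mem_psums_sizesOfK hb).mpr (hsub hi)
    · intro hch i hi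
      have hb : i + 1 < n := by
        rw [mem_DesW'] at hi; obtain ⟨h, -⟩ := hi; omega
      exact (mem_psums_sizesOfK hb).mp (hd.mp hch i hi)
  rw [claim p t rfl, claim p' t' (by omega)]
  exact card_sChunks_eq h1 h2 hlp hlt hdp hdt hsum

theorem card_desEq_eq {p t p' t' : List ℤ}
    (h1 : (p ++ t).Nodup) (h2 : (p' ++ t').Nodup)
    (hlp : p.length = p'.length) (hlt : t.length = t'.length)
    (hdp : DesW p = DesW p') (hdt : DesW t = DesW t') (K : Finset ℕ) :
    ((shufSet p t).filter (fun w => DesW w = K)).card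
      = ((shufSet p' t').filter (fun w => DesW w = K)).card := by
  induction K using Finset.strongInduction with
  | _ K ih =>
    have hsplit : ∀ (u v : List ℤ), (shufSet u v).filter (fun w => DesW w ⊆ K)
        = K.powerset.biUnion (fun J => (shufSet u v).filter (fun w => DesW w = J)) := by
      intro u v
      ext w
      simp only [Finset.mem_filter, Finset.mem_biUnion, Finset.mem_powerset]
      constructor
      · rintro ⟨hw, hsub⟩; exact ⟨DesW w, hsub, hw, rfl⟩
      · rintro ⟨J, hJ, hw, rfl⟩; exact ⟨hw, hJ⟩
    have hdisj : ∀ (u v : List ℤ), ∀ x ∈ K.powerset, ∀ y ∈ K.powerset, x ≠ y →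
        Disjoint ((shufSet u v).filter (fun w => DesW w = x))
          ((shufSet u v).filter (fun w => DesW w = y)) := by
      intro u v x _ y _ hxy
      rw [Finset.disjoint_left]
      intro w hwx hwy
      rw [Finset.mem_filter] at hwx hwy
      exact hxy (hwx.2 ▸ hwy.2 ▸ rfl)
    have hsub := card_desSub_eq h1 h2 hlp hlt hdp hdt K
    rw [hsplit p t, hsplit p' t', Finset.card_biUnion (hdisj p t),
      Finset.card_biUnion (hdisj p' t')] at hsub
    have hKmem : K ∈ K.powerset := Finset.mem_powerset_self K
    rw [← Finset.sum_erase_add _ _ hKmem, ← Finset.sum_erase_add _ _ hKmem] at hsub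
    have herase : ∀ J ∈ K.powerset.erase K,
        ((shufSet p t).filter (fun w => DesW w = J)).card
          = ((shufSet p' t').filter (fun w => DesW w = J)).card := by
      intro J hJ
      rw [Finset.mem_erase, Finset.mem_powerset] at hJ
      exact ih J (lt_of_le_of_ne hJ.2 hJ.1)
    rw [Finset.sum_congr rfl herase] at hsub
    omega

theorem bijOn_of_fibers (A : Finset (List ℤ)) : ∀ (B : Finset (List ℤ)),
    (∀ K, (A.filter (fun w => DesW w = K)).card = (B.filter (fun w => DesW w = K)).card) →
    ∃ g : List ℤ → List ℤ, Set.BijOn g ↑A ↑B ∧ ∀ w ∈ A, DesW (g w) = DesW w := by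
  induction A using Finset.strongInduction with
  | _ A ih =>
    intro B hfib
    by_cases hA : A = ∅
    · subst hA
      have hB : B = ∅ := by
        by_contra hB
        obtain ⟨b, hb⟩ := Finset.nonempty_iff_ne_empty.mpr hB
        have h0 := hfib (DesW b)
        rw [Finset.filter_empty, Finset.card_empty] at h0
        have : b ∈ B.filter (fun w => DesW w = DesW b) := Finset.mem_filter.mpr ⟨hb, rfl⟩
        have := Finset.card_pos.mpr ⟨b, this⟩
        omega
      subst hB
      exact ⟨id, by simp [Set.BijOn], by simp⟩
    · obtain ⟨a, ha⟩ := Finset.nonempty_iff_ne_empty.mpr hA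
      have hbfib : 0 < (B.filter (fun w => DesW w = DesW a)).card := by
        rw [← hfib]
        exact Finset.card_pos.mpr ⟨a, Finset.mem_filter.mpr ⟨ha, rfl⟩⟩
      obtain ⟨b, hb⟩ := Finset.card_pos.mp hbfib
      rw [Finset.mem_filter] at hb
      have hfib' : ∀ K, ((A.erase a).filter (fun w => DesW w = K)).card
          = ((B.erase b).filter (fun w => DesW w = K)).card := by
        intro K
        rw [Finset.filter_erase, Finset.filter_erase]
        by_cases hK : DesW a = K
        · have haK : a ∈ A.filter (fun w => DesW w = K) := Finset.mem_filter.mpr ⟨ha, hK⟩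
          have hbK : b ∈ B.filter (fun w => DesW w = K) :=
            Finset.mem_filter.mpr ⟨hb.1, hb.2.trans hK⟩
          rw [Finset.card_erase_of_mem haK, Finset.card_erase_of_mem hbK, hfib K]
        · rw [Finset.erase_eq_of_notMem (by
              simp only [Finset.mem_filter]; exact fun h => hK h.2),
            Finset.erase_eq_of_notMem (by
              simp only [Finset.mem_filter]
              exact fun h => hK (hb.2 ▸ h.2)), hfib K]
      obtain ⟨g', hg'bij, hg'des⟩ := ih (A.erase a) (Finset.erase_ssubset ha) (B.erase b) hfib'
      set g : List ℤ → List ℤ := fun w => if w = a then b else g' w with hg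
      have heqon : Set.EqOn g' g ↑(A.erase a) := by
        intro w hw
        simp only [Finset.coe_erase, Set.mem_diff, Set.mem_singleton_iff] at hw
        simp [hg, hw.2]
      have h1 : Set.BijOn g ↑(A.erase a) ↑(B.erase b) := hg'bij.congr heqon
      have hga : g a = b := by simp [hg]
      have h2 := h1.insert (a := a) (by rw [hga]; simp)
      rw [hga] at h2
      have hs1 : insert a (↑(A.erase a) : Set (List ℤ)) = ↑A := by
        rw [← Finset.coe_insert, Finset.insert_erase ha]
      have hs2 : insert b (↑(B.erase b) : Set (List ℤ)) = ↑B := by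
        rw [← Finset.coe_insert, Finset.insert_erase hb.1]
      rw [hs1, hs2] at h2
      refine ⟨g, h2, ?_⟩
      intro w hw
      by_cases hwa : w = a
      · subst hwa; rw [hga]; exact hb.2
      · have hgw : g w = g' w := by simp [hg, hwa]
        rw [hgw]
        exact hg'des w (Finset.mem_erase.mpr ⟨hwa, hw⟩)

end StanleyAux

/-- Stanley's shuffle invariance. If `p, t` are words on disjoint
alphabets of distinct letters, and likewise `p', t'`, with `|p| = |p'|`, `|t| = |t'|`,
`Des p = Des p'` and `Des t = Des t'`, then there is a descent-set-preserving bijection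
between the shuffle sets `p ⧢ t` and `p' ⧢ t'`. -/
theorem shuffle_invariance (p t p' t' : List ℤ)
    (h1 : (p ++ t).Nodup) (h2 : (p' ++ t').Nodup)
    (hlp : p.length = p'.length) (hlt : t.length = t'.length)
    (hdp : DesW p = DesW p') (hdt : DesW t = DesW t') :
    ∃ g : List ℤ → List ℤ,
      Set.BijOn g {w | IsShuffle p t w} {w | IsShuffle p' t' w} ∧
      ∀ w, IsShuffle p t w → DesW (g w) = DesW w := by
  have hfib := fun K => StanleyAux.card_desEq_eq h1 h2 hlp hlt hdp hdt K
  obtain ⟨g, hbij, hdes⟩ :=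
    StanleyAux.bijOn_of_fibers (StanleyAux.shufSet p t) (StanleyAux.shufSet p' t') hfib
  have hset : {w | IsShuffle p t w} = ↑(StanleyAux.shufSet p t) := by
    ext w; rw [Set.mem_setOf_eq, Finset.mem_coe, StanleyAux.mem_shufSet]
  have hset' : {w | IsShuffle p' t' w} = ↑(StanleyAux.shufSet p' t') := by
    ext w; rw [Set.mem_setOf_eq, Finset.mem_coe, StanleyAux.mem_shufSet]
  refine ⟨g, ?_, ?_⟩
  · rw [hset, hset']; exact hbij
  · intro w hw
    exact hdes w (StanleyAux.mem_shufSet.mpr hw)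
end

section
/- Let U = (U_1, U_2, ...) be an ordered set partition of [n] of type co(J), δ_U the associated permutation, and U* = {i ∈ [n-1] : i and i+1 lie in the same block of U}. Then for every π ∈ S_n, Des(δ_{W}·π) = Des(δ_U) ∪ (Des(π) ∩ U*), where W is the ordered set partition whose i-th block is π(U_i). -/
open scoped Classical

/-- `U` is an ordered set partition of `Fin n` of type `c` (blocks listed in order,
with `|U_i| = c_i`, pairwise disjoint, covering). -/
def IsOSP (n : ℕ) (c : List ℕ) (U : List (Finset (Fin n))) : Prop :=
  U.map Finset.card = c ∧ U.Pairwise Disjoint ∧ ∀ x : Fin n, ∃ s ∈ U, x ∈ s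

/-- `U` is an ordered set partition of `Fin n` (nonempty pairwise disjoint blocks covering). -/
def OSPn (n : ℕ) (U : List (Finset (Fin n))) : Prop :=
  U.Pairwise Disjoint ∧ (∀ s ∈ U, s.Nonempty) ∧ ∀ x : Fin n, ∃ s ∈ U, x ∈ s

/-- `δ` is the permutation `δ_U` associated to an ordered set partition `U` of type `c`:
it is increasing on each block `U_i`, and sends `U_i` onto the `i`-th consecutive
interval of values (of length `c_i`). -/
def IsDelta {n : ℕ} (c : List ℕ) (U : List (Finset (Fin n))) (δ : Equiv.Perm (Fin n)) : Prop :=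
  ∀ i (h : i < U.length),
    (∀ x ∈ U.get ⟨i, h⟩, ∀ y ∈ U.get ⟨i, h⟩, x < y → δ x < δ y) ∧
    (∀ x ∈ U.get ⟨i, h⟩, (c.take i).sum ≤ (δ x : ℕ) ∧ (δ x : ℕ) < (c.take (i + 1)).sum)

/-- `U* = {i : i and i+1 lie in the same block of U}` (0-indexed positions). -/
def Ustar (n : ℕ) (U : List (Finset (Fin n))) : Finset (Fin n) :=
  Finset.univ.filter fun i => (i : ℕ) + 1 < n ∧ ∃ s ∈ U, i ∈ s ∧ finSucc i ∈ s
lemma sum_take_le_sum_take {l : List ℕ} {m k : ℕ} (h : m ≤ k) :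
    (l.take m).sum ≤ (l.take k).sum := by
  have : l.take m = (l.take k).take m := by rw [List.take_take, Nat.min_eq_left h]
  rw [this]
  conv_rhs => rw [← List.take_append_drop m (l.take k)]
  rw [List.sum_append]
  exact Nat.le_add_right _ _

/-- For an ordered set partition `U` of type `co(J)` and any `π ∈ S_n`,
`Des(δ_W · π) = Des(δ_U) ∪ (Des(π) ∩ U*)`, where `W` is the ordered set partition whose
`i`-th block is `π(U_i)`. -/
theorem des_rho (n : ℕ) (J : Finset (Fin n)) (hJ : ∀ i ∈ J, (i : ℕ) + 1 < n)
    (U : List (Finset (Fin n))) (hU : IsOSP n (compList n J) U)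
    (π δU δW : Equiv.Perm (Fin n))
    (hδU : IsDelta (compList n J) U δU)
    (hδW : IsDelta (compList n J) (U.map fun s => s.image π) δW) :
    pDes (δW * π) = pDes δU ∪ (pDes π ∩ Ustar n U) := by
  obtain ⟨hmap, hdisj, hcov⟩ := hU
  set c := compList n J with hc
  -- uniqueness of block index
  have huniq : ∀ (a b : Fin U.length) (x : Fin n),
      x ∈ U.get a → x ∈ U.get b → a = b := by
    intro a b x hxa hxb
    by_contra hne
    rcases lt_or_gt_of_ne hne with h | h
    · exact Finset.disjoint_left.mp (List.pairwise_iff_get.mp hdisj a b h) hxa hxb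
    · exact Finset.disjoint_left.mp (List.pairwise_iff_get.mp hdisj b a h) hxb hxa
  have hidx : ∀ x : Fin n, ∃ k : Fin U.length, x ∈ U.get k := by
    intro x
    obtain ⟨s, hs, hxs⟩ := hcov x
    obtain ⟨k, hk⟩ := List.mem_iff_get.mp hs
    exact ⟨k, hk ▸ hxs⟩
  have hsep : ∀ a b : ℕ, a < b → ∀ x y : ℕ,
      x < (c.take (a+1)).sum → (c.take b).sum ≤ y → x < y := fun a b hab x y hx hy =>
    lt_of_lt_of_le hx (le_trans (sum_take_le_sum_take hab) hy)
  have hlen : (U.map fun s => s.image π).length = U.length := List.length_map _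
  -- hδW rewritten in terms of U
  have hδW' : ∀ (k : Fin U.length),
      (∀ x ∈ U.get k, ∀ y ∈ U.get k, π x < π y → δW (π x) < δW (π y)) ∧
      (∀ x ∈ U.get k, (c.take (k:ℕ)).sum ≤ (δW (π x) : ℕ) ∧
        (δW (π x) : ℕ) < (c.take ((k:ℕ) + 1)).sum) := by
    intro k
    have hk' : (k : ℕ) < (U.map fun s => s.image π).length := by rw [hlen]; exact k.2
    have hg : (U.map fun s => s.image π).get ⟨k, hk'⟩ = (U.get k).image π := by
      simp
    obtain ⟨h1, h2⟩ := hδW k hk'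
    rw [hg] at h1 h2
    constructor
    · intro x hx y hy hxy
      exact h1 (π x) (Finset.mem_image_of_mem π hx) (π y) (Finset.mem_image_of_mem π hy) hxy
    · intro x hx
      exact h2 (π x) (Finset.mem_image_of_mem π hx)
  ext i
  simp only [pDes, Ustar, Finset.mem_filter, Finset.mem_union, Finset.mem_inter,
    Finset.mem_univ, true_and]
  simp only [Equiv.Perm.mul_apply]
  by_cases hi : (i : ℕ) + 1 < n
  · have hfs : ((finSucc i : Fin n) : ℕ) = (i : ℕ) + 1 := by
      simp [finSucc, Nat.mod_eq_of_lt hi]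
    obtain ⟨a, hxa⟩ := hidx i
    obtain ⟨b, hyb⟩ := hidx (finSucc i)
    by_cases hab : a = b
    · -- same block
      subst hab
      have hlt : i < finSucc i := by
        rw [Fin.lt_def, hfs]; exact Nat.lt_succ_self _
      have hne : i ≠ finSucc i := ne_of_lt hlt
      have h1 : ¬ (δU (finSucc i) < δU i) :=
        not_lt.2 (le_of_lt ((hδU a a.2).1 i hxa (finSucc i) hyb hlt))
      have key : δW (π (finSucc i)) < δW (π i) ↔ π (finSucc i) < π i := by
        constructor
        · intro h
          rcases lt_trichotomy (π (finSucc i)) (π i) with h' | h' | h'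
          · exact h'
          · exact absurd (π.injective h') (Ne.symm hne)
          · exact absurd ((hδW' a).1 i hxa (finSucc i) hyb h') (not_lt.2 (le_of_lt h))
        · intro h
          exact (hδW' a).1 (finSucc i) hyb i hxa h
      have hstar : ∃ s ∈ U, i ∈ s ∧ finSucc i ∈ s :=
        ⟨U.get a, List.get_mem _ _, hxa, hyb⟩
      simp [hi, h1, key, hstar]
    · -- different blocks
      have habv : (a : ℕ) ≠ (b : ℕ) := fun h => hab (Fin.ext h)
      obtain ⟨rUa1, rUa2⟩ := (hδU a a.2).2 i hxa
      obtain ⟨rUb1, rUb2⟩ := (hδU b b.2).2 (finSucc i) hyb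
      obtain ⟨rWa1, rWa2⟩ := (hδW' a).2 i hxa
      obtain ⟨rWb1, rWb2⟩ := (hδW' b).2 (finSucc i) hyb
      have hstar : ¬ ∃ s ∈ U, i ∈ s ∧ finSucc i ∈ s := by
        rintro ⟨s, hs, h1, h2⟩
        obtain ⟨k, hk⟩ := List.mem_iff_get.mp hs
        exact hab ((huniq a k i hxa (hk ▸ h1)).trans (huniq k b (finSucc i) (hk ▸ h2) hyb))
      rcases lt_or_gt_of_ne habv with h | h
      · have hU' : ¬ (δU (finSucc i) < δU i) := by
          rw [Fin.lt_def]; exact not_lt.2 (le_of_lt (hsep _ _ h _ _ rUa2 rUb1))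
        have hW' : ¬ (δW (π (finSucc i)) < δW (π i)) := by
          rw [Fin.lt_def]; exact not_lt.2 (le_of_lt (hsep _ _ h _ _ rWa2 rWb1))
        simp [hi, hU', hW', hstar]
      · have hU' : δU (finSucc i) < δU i := by
          rw [Fin.lt_def]; exact hsep _ _ h _ _ rUb2 rUa1
        have hW' : δW (π (finSucc i)) < δW (π i) := by
          rw [Fin.lt_def]; exact hsep _ _ h _ _ rWb2 rWa1
        simp [hi, hU', hW']
  · simp [hi]
end

section
/- Let U be an ordered set partition of [n] of type co(J). Define σ_U(τ) to be the element of the shuffle std(τ_1...τ_{j_1}) ⧢ std(τ_{j_1+1}...τ_{j_2})^{+j_1} ⧢ ... in which block U_i holds the positions of the i-th standardized segment. Then Des(σ_U(τ)) = Des(δ_U) ∪ {u ∈ U* : δ_U(u) ∈ Des(τ)}. -/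
open scoped Classical

/-- `σ = σ_U(τ)`: the element of the shuffle
`std(τ_1…τ_{j_1}) ⧢ std(τ_{j_1+1}…τ_{j_2})^{+j_1} ⧢ ⋯` in which the block `U_i` holds
the positions of the `i`-th standardized segment.  Characterized by: `σ` maps `U_i`
onto the `i`-th consecutive interval of values, and on the sorted elements of `U_i`
the relative order of the values of `σ` agrees with the relative order of the
corresponding segment of `τ`. -/
def IsSigma {n : ℕ} (c : List ℕ) (U : List (Finset (Fin n))) (τ σ : Equiv.Perm (Fin n)) :
    Prop :=
  ∀ i (h : i < U.length),
    (∀ x ∈ U.get ⟨i, h⟩,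
      (c.take i).sum ≤ (σ x : ℕ) ∧ (σ x : ℕ) < (c.take (i + 1)).sum) ∧
    (∀ k l (hk : k < ((U.get ⟨i, h⟩).sort (· ≤ ·)).length)
        (hl : l < ((U.get ⟨i, h⟩).sort (· ≤ ·)).length)
        (h1 : (c.take i).sum + k < n) (h2 : (c.take i).sum + l < n),
      (σ (((U.get ⟨i, h⟩).sort (· ≤ ·)).get ⟨k, hk⟩) <
          σ (((U.get ⟨i, h⟩).sort (· ≤ ·)).get ⟨l, hl⟩) ↔
        τ ⟨(c.take i).sum + k, h1⟩ < τ ⟨(c.take i).sum + l, h2⟩))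


namespace DesSigmaAux

lemma sum_take_mono (c : List ℕ) {i j : ℕ} (h : i ≤ j) :
    (c.take i).sum ≤ (c.take j).sum := by
  have h1 : c.take i = (c.take j).take i := by rw [List.take_take, min_eq_left h]
  calc (c.take i).sum = ((c.take j).take i).sum := by rw [← h1]
    _ ≤ ((c.take j).take i).sum + ((c.take j).drop i).sum := Nat.le_add_right _ _
    _ = (c.take j).sum := by rw [← List.sum_append, List.take_append_drop]

lemma sum_take_succ' (c : List ℕ) (i : ℕ) (h : i < c.length) :
    (c.take (i+1)).sum = (c.take i).sum + c.get ⟨i, h⟩ := by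
  rw [List.take_succ, List.sum_append]
  simp [List.getElem?_eq_getElem h]

lemma shift_le {m : ℕ} (f : Fin m → ℕ)
    (hmono : ∀ k l : Fin m, k < l → f k < f l) :
    ∀ d k (h : k + d < m), f ⟨k, by omega⟩ + d ≤ f ⟨k + d, h⟩ := by
  intro d
  induction d with
  | zero => intro k h; simp
  | succ d ih =>
    intro k h
    have h1 : k + d < m := by omega
    have h2 := ih k h1
    have h3 : f ⟨k + d, h1⟩ < f ⟨k + d + 1, h⟩ :=
      hmono _ _ (by simp [Fin.lt_def])
    show f ⟨k, by omega⟩ + (d + 1) ≤ f ⟨k + d + 1, h⟩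
    omega

lemma eq_of_mono {m S : ℕ} (f : Fin m → ℕ)
    (hmono : ∀ k l : Fin m, k < l → f k < f l)
    (hlb : ∀ k, S ≤ f k) (hub : ∀ k, f k < S + m) :
    ∀ k : Fin m, f k = S + (k : ℕ) := by
  rintro ⟨kv, hk⟩
  have hm : 0 < m := by omega
  have low := shift_le f hmono kv 0 (by omega)
  simp only [Nat.zero_add] at low
  have high := shift_le f hmono (m - 1 - kv) kv (by omega)
  have he : (⟨kv + (m - 1 - kv), by omega⟩ : Fin m) = ⟨m - 1, by omega⟩ :=
    Fin.ext (by simp; omega)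
  rw [he] at high
  have := hlb ⟨0, hm⟩
  have := hub ⟨m - 1, by omega⟩
  simp only [Fin.val_mk] at *
  omega

variable {n : ℕ}

lemma block_unique {U : List (Finset (Fin n))} (hdisj : U.Pairwise Disjoint)
    {i j : Fin U.length} {x : Fin n} (hi : x ∈ U.get i) (hj : x ∈ U.get j) : i = j := by
  by_contra hne
  have key : ∀ a b : Fin U.length, a < b → x ∈ U.get a → x ∈ U.get b → False := by
    intro a b hab ha hb
    exact Finset.disjoint_left.mp (List.pairwise_iff_get.mp hdisj a b hab) ha hb
  rcases lt_or_gt_of_ne hne with h | h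
  · exact key i j h hi hj
  · exact key j i h hj hi

lemma cross_lt {c : List ℕ} {U : List (Finset (Fin n))} (π : Equiv.Perm (Fin n))
    (hb : ∀ i (h : i < U.length), ∀ x ∈ U.get ⟨i, h⟩,
      (c.take i).sum ≤ (π x : ℕ) ∧ (π x : ℕ) < (c.take (i+1)).sum)
    {i j : Fin U.length} (hij : i < j) {x y : Fin n}
    (hx : x ∈ U.get i) (hy : y ∈ U.get j) : π x < π y := by
  have h1 := (hb i i.isLt x hx).2
  have h2 := (hb j j.isLt y hy).1
  have h3 : (c.take ((i : ℕ)+1)).sum ≤ (c.take (j : ℕ)).sum := sum_take_mono c hij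
  exact Fin.lt_def.mpr (by omega)

lemma delta_get {c : List ℕ} {U : List (Finset (Fin n))} (δ : Equiv.Perm (Fin n))
    (i : Fin U.length)
    (hmono : ∀ x ∈ U.get i, ∀ y ∈ U.get i, x < y → δ x < δ y)
    (hb : ∀ x ∈ U.get i, (c.take (i : ℕ)).sum ≤ (δ x : ℕ) ∧
      (δ x : ℕ) < (c.take ((i : ℕ)+1)).sum)
    (hlen : (c.take ((i : ℕ)+1)).sum
      = (c.take (i : ℕ)).sum + ((U.get i).sort (· ≤ ·)).length)
    (k : Fin ((U.get i).sort (· ≤ ·)).length) :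
    (δ (((U.get i).sort (· ≤ ·)).get k) : ℕ) = (c.take (i : ℕ)).sum + (k : ℕ) := by
  have hsorted : ((U.get i).sort (· ≤ ·)).Pairwise (· < ·) := (Finset.sortedLT_sort _).pairwise
  have hmem : ∀ k : Fin ((U.get i).sort (· ≤ ·)).length,
      ((U.get i).sort (· ≤ ·)).get k ∈ U.get i := fun k =>
    (Finset.mem_sort _).1 (by exact List.get_mem _ _)
  exact eq_of_mono (fun k => (δ (((U.get i).sort (· ≤ ·)).get k) : ℕ))
    (fun k l hkl => hmono _ (hmem k) _ (hmem l) (hsorted.rel_get_of_lt hkl))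
    (fun k => (hb _ (hmem k)).1)
    (fun k => by rw [← hlen]; exact (hb _ (hmem k)).2) k

end DesSigmaAux

set_option maxHeartbeats 2000000 in
/-- `Des(σ_U(τ)) = Des(δ_U) ∪ {u ∈ U* : δ_U(u) ∈ Des(τ)}`. -/
theorem des_sigma (n : ℕ) (J : Finset (Fin n)) (hJ : ∀ i ∈ J, (i : ℕ) + 1 < n)
    (U : List (Finset (Fin n))) (hU : IsOSP n (compList n J) U)
    (τ σ δU : Equiv.Perm (Fin n))
    (hδU : IsDelta (compList n J) U δU)
    (hσ : IsSigma (compList n J) U τ σ) :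
    pDes σ = pDes δU ∪ ((Ustar n U).filter fun u => δU u ∈ pDes τ) := by
  classical
  obtain ⟨hc, hdisj, hcov⟩ := hU
  set c := compList n J with hcdef
  have hclen : c.length = U.length := by rw [← hc]; simp
  have hgetc : ∀ i : Fin U.length, ∀ (hlt : (i : ℕ) < c.length),
      c.get ⟨(i : ℕ), hlt⟩ = (U.get i).card := by
    intro i hlt
    have h4 : (c : List ℕ)[(i : ℕ)]? = (List.map Finset.card U)[(i : ℕ)]? := by rw [hc]
    rw [List.getElem?_eq_getElem hlt, List.getElem?_map, List.getElem?_eq_getElem i.isLt] at h4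
    simpa using h4
  have hSsucc : ∀ i : Fin U.length,
      (c.take ((i : ℕ)+1)).sum = (c.take (i : ℕ)).sum + (U.get i).card := by
    intro i
    have hlt : (i : ℕ) < c.length := by rw [hclen]; exact i.isLt
    rw [DesSigmaAux.sum_take_succ' c i hlt, hgetc i hlt]
  have hblk : ∀ x : Fin n, ∃ i : Fin U.length, x ∈ U.get i := by
    intro x
    obtain ⟨s, hs, hxs⟩ := hcov x
    obtain ⟨i, rfl⟩ := List.mem_iff_get.mp hs
    exact ⟨i, hxs⟩
  have hσb : ∀ i (h : i < U.length), ∀ x ∈ U.get ⟨i, h⟩,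
      (c.take i).sum ≤ (σ x : ℕ) ∧ (σ x : ℕ) < (c.take (i+1)).sum :=
    fun i h => (hσ i h).1
  have hδb : ∀ i (h : i < U.length), ∀ x ∈ U.get ⟨i, h⟩,
      (c.take i).sum ≤ (δU x : ℕ) ∧ (δU x : ℕ) < (c.take (i+1)).sum :=
    fun i h x hx => (hδU i h).2 x hx
  ext u
  simp only [pDes, Ustar, Finset.mem_union, Finset.mem_filter, Finset.mem_univ, true_and]
  by_cases hn : (u : ℕ) + 1 < n
  swap
  · simp [hn]
  have hsucc : (finSucc u : ℕ) = (u : ℕ) + 1 := by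
    simp [finSucc, Nat.mod_eq_of_lt hn]
  obtain ⟨i, hiu⟩ := hblk u
  obtain ⟨j, hju⟩ := hblk (finSucc u)
  by_cases hij : i = j
  · subst hij
    obtain ⟨k, hk⟩ := List.mem_iff_get.mp ((Finset.mem_sort (α := Fin n) (· ≤ ·)).2 hiu)
    obtain ⟨l, hl⟩ := List.mem_iff_get.mp ((Finset.mem_sort (α := Fin n) (· ≤ ·)).2 hju)
    have hsorted : ((U.get i).sort (· ≤ ·)).Pairwise (· < ·) := (Finset.sortedLT_sort _).pairwise
    have hkl : (l : ℕ) = (k : ℕ) + 1 := by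
      have hlt : ((U.get i).sort (· ≤ ·)).get k < ((U.get i).sort (· ≤ ·)).get l := by
        rw [hk, hl]
        exact Fin.lt_def.mpr (by omega)
      have h1 : k < l := by
        by_contra hcon
        push_neg at hcon
        rcases eq_or_lt_of_le hcon with he | hlt2
        · rw [he] at hlt; exact lt_irrefl _ hlt
        · exact absurd (hsorted.rel_get_of_lt hlt2) (lt_asymm hlt)
      by_contra hne
      have h2 : (k : ℕ) + 1 < (l : ℕ) := by
        rw [Fin.lt_def] at h1; omega
      have hmid : ((U.get i).sort (· ≤ ·)).get k
          < ((U.get i).sort (· ≤ ·)).get ⟨(k : ℕ)+1, by omega⟩ :=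
        hsorted.rel_get_of_lt (by simp [Fin.lt_def])
      have hmid2 : ((U.get i).sort (· ≤ ·)).get ⟨(k : ℕ)+1, by omega⟩
          < ((U.get i).sort (· ≤ ·)).get l :=
        hsorted.rel_get_of_lt (by simp [Fin.lt_def]; omega)
      rw [hk] at hmid
      rw [hl] at hmid2
      rw [Fin.lt_def] at hmid hmid2
      rw [hsucc] at hmid2
      omega
    have hdg : ∀ m : Fin ((U.get i).sort (· ≤ ·)).length,
        (δU (((U.get i).sort (· ≤ ·)).get m) : ℕ) = (c.take (i : ℕ)).sum + (m : ℕ) :=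
      DesSigmaAux.delta_get δU i (hδU i i.isLt).1 (fun x hx => (hδU i i.isLt).2 x hx)
        (by rw [hSsucc i, Finset.length_sort])
    have hdu : (δU u : ℕ) = (c.take (i : ℕ)).sum + (k : ℕ) := by
      rw [← hk]; exact hdg k
    have hdsu : (δU (finSucc u) : ℕ) = (c.take (i : ℕ)).sum + (k : ℕ) + 1 := by
      rw [← hl, hdg l]; omega
    have hd1 : (δU (finSucc u) : ℕ) < n := (δU (finSucc u)).isLt
    have hn2 : (c.take (i : ℕ)).sum + ((k : ℕ) + 1) < n := by omega
    have hn1 : (c.take (i : ℕ)).sum + (k : ℕ) < n := by omega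
    have hσc := (hσ i i.isLt).2 (l : ℕ) (k : ℕ) l.isLt k.isLt (by omega) (by omega)
    simp only [Fin.eta] at hσc
    rw [hl, hk] at hσc
    have hnotδ : ¬ δU (finSucc u) < δU u := by
      rw [Fin.lt_def]; omega
    have hust : ∃ s ∈ U, u ∈ s ∧ finSucc u ∈ s :=
      ⟨U.get i, by exact List.get_mem _ _, hiu, hju⟩
    have e1 : δU u = (⟨(c.take (i : ℕ)).sum + (k : ℕ), hn1⟩ : Fin n) := Fin.ext hdu
    have hn3 : (c.take (i : ℕ)).sum + (k : ℕ) + 1 < n := by omega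
    have e2 : finSucc (δU u)
        = (⟨(c.take (i : ℕ)).sum + (k : ℕ) + 1, hn3⟩ : Fin n) := by
      apply Fin.ext
      show ((δU u : ℕ) + 1) % n = (c.take (i : ℕ)).sum + (k : ℕ) + 1
      rw [hdu, Nat.mod_eq_of_lt (by omega)]
    have e3 : (⟨(c.take (i : ℕ)).sum + (l : ℕ), by omega⟩ : Fin n)
        = (⟨(c.take (i : ℕ)).sum + (k : ℕ) + 1, hn3⟩ : Fin n) :=
      Fin.ext (by simp [hkl]; omega)
    rw [e3] at hσc
    constructor
    · rintro ⟨-, hσlt⟩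
      refine Or.inr ⟨⟨hn, hust⟩, ⟨by omega, ?_⟩⟩
      rw [e2, e1]
      exact hσc.mp hσlt
    · rintro (⟨-, hδlt⟩ | ⟨-, -, hτ⟩)
      · exact absurd hδlt hnotδ
      · refine ⟨hn, hσc.mpr ?_⟩
        rw [e2, e1] at hτ
        exact hτ
  · have hust : ¬ ∃ s ∈ U, u ∈ s ∧ finSucc u ∈ s := by
      rintro ⟨s, hs, h1, h2⟩
      obtain ⟨a, rfl⟩ := List.mem_iff_get.mp hs
      exact hij ((DesSigmaAux.block_unique hdisj hiu h1).trans
        (DesSigmaAux.block_unique hdisj h2 hju))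
    rcases lt_or_gt_of_ne hij with h | h
    · have hσlt := DesSigmaAux.cross_lt σ hσb h hiu hju
      have hδlt := DesSigmaAux.cross_lt δU hδb h hiu hju
      constructor
      · rintro ⟨-, hlt⟩
        exact absurd hσlt (asymm hlt)
      · rintro (⟨-, hlt⟩ | ⟨⟨-, hs⟩, -⟩)
        · exact absurd hδlt (asymm hlt)
        · exact absurd hs hust
    · have hσlt := DesSigmaAux.cross_lt σ hσb h hju hiu
      have hδlt := DesSigmaAux.cross_lt δU hδb h hju hiu
      exact ⟨fun _ => Or.inl ⟨hn, hδlt⟩, fun _ => ⟨hn, hσlt⟩⟩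
end

section
/- Descent-preserving equivalence is compatible with multiplication by inverse J-classes: if A, B are finite multisets of permutations in S_n with equal multisets of descent sets, then for every J ⊆ [n-1], the multisets A·R_J^{-1} and B·R_J^{-1} have equal multisets of descent sets, and likewise R_J^{-1}·A and R_J^{-1}·B have equal multisets of descent sets. -/
open scoped Classical

section Dev
variable {n : ℕ}

lemma finSucc_coe {i : Fin n} (h : (i : ℕ) + 1 < n) : ((finSucc i : Fin n) : ℕ) = (i : ℕ) + 1 := by
  simp [finSucc, Nat.mod_eq_of_lt h]

lemma mem_pDes {π : Equiv.Perm (Fin n)} {i : Fin n} :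
    i ∈ pDes π ↔ (i : ℕ) + 1 < n ∧ π (finSucc i) < π i := by
  simp [pDes]

/-- `i` and `j` lie in the same `K`-block. -/
def scl (K : Finset (Fin n)) (i j : Fin n) : Prop :=
  ∀ k : Fin n, ((i : ℕ) ≤ (k : ℕ) ∧ (k : ℕ) < (j : ℕ)) ∨
      ((j : ℕ) ≤ (k : ℕ) ∧ (k : ℕ) < (i : ℕ)) → k ∉ K

lemma scl_refl (K : Finset (Fin n)) (i : Fin n) : scl K i i := by
  intro k hk; omega

lemma scl_symm {K : Finset (Fin n)} {i j : Fin n} (h : scl K i j) : scl K j i := by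
  intro k hk; exact h k (by omega)

lemma scl_trans {K : Finset (Fin n)} {i j l : Fin n} (h1 : scl K i j) (h2 : scl K j l) :
    scl K i l := by
  intro k hk
  by_cases hc : ((i : ℕ) ≤ (k : ℕ) ∧ (k : ℕ) < (j : ℕ)) ∨ ((j : ℕ) ≤ (k : ℕ) ∧ (k : ℕ) < (i : ℕ))
  · exact h1 k hc
  · exact h2 k (by omega)

noncomputable def blk (K : Finset (Fin n)) (j : Fin n) : Finset (Fin n) :=
  Finset.univ.filter (scl K j)

lemma mem_blk {K : Finset (Fin n)} {i j : Fin n} : i ∈ blk K j ↔ scl K j i := by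
  simp [blk]

lemma self_mem_blk {K : Finset (Fin n)} {j : Fin n} : j ∈ blk K j :=
  mem_blk.mpr (scl_refl K j)

lemma blk_congr {K : Finset (Fin n)} {i j : Fin n} (h : scl K i j) : blk K i = blk K j := by
  ext x
  simp only [mem_blk]
  exact ⟨fun hx => scl_trans (scl_symm h) hx, fun hx => scl_trans h hx⟩

lemma scl_of_mem_blk {K : Finset (Fin n)} {x y j : Fin n} (hx : x ∈ blk K j) (hy : y ∈ blk K j) :
    scl K x y := scl_trans (scl_symm (mem_blk.mp hx)) (mem_blk.mp hy)

/-- step: a permutation with `pDes f ⊆ K` increases across a non-`K` position. -/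
lemma step_lt {K : Finset (Fin n)} {f : Equiv.Perm (Fin n)} (hf : pDes f ⊆ K)
    {i : Fin n} (hi : i ∉ K) (h : (i : ℕ) + 1 < n) : f i < f (finSucc i) := by
  have hnd : i ∉ pDes f := fun hd => hi (hf hd)
  rw [mem_pDes] at hnd
  push_neg at hnd
  have hle : ¬ f (finSucc i) < f i := by
    intro hlt; exact absurd (hnd h) (by simp [hlt])
  have hne : f (finSucc i) ≠ f i := by
    intro he
    have h2 : finSucc i = i := f.injective he
    have h3 := finSucc_coe h
    rw [h2] at h3
    omega
  exact lt_of_le_of_ne (hnd h) (Ne.symm hne)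

lemma inc_on_blk {K : Finset (Fin n)} {f : Equiv.Perm (Fin n)} (hf : pDes f ⊆ K)
    {i j : Fin n} (hs : scl K i j) (hij : i < j) : f i < f j := by
  obtain ⟨m, hm⟩ : ∃ m, (j : ℕ) = (i : ℕ) + m + 1 := ⟨(j : ℕ) - (i : ℕ) - 1, by
    have := (Fin.lt_def.mp hij); omega⟩
  induction m generalizing i with
  | zero =>
      have hg : (i : ℕ) + 1 < n := by have := j.isLt; omega
      have hji : j = finSucc i := by
        apply Fin.ext; rw [finSucc_coe hg]; omega
      rw [hji]
      exact step_lt hf (hs i (by omega)) hg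
  | succ m ih =>
      have hg : (i : ℕ) + 1 < n := by have := j.isLt; omega
      set i' : Fin n := finSucc i with hi'
      have hci' : (i' : ℕ) = (i : ℕ) + 1 := finSucc_coe hg
      have h1 : f i < f i' := step_lt hf (hs i (by omega)) hg
      have hs' : scl K i' j := by
        intro k hk; exact hs k (by omega)
      have h2 : f i' < f j := ih hs' (Fin.lt_def.mpr (by omega)) (by omega)
      exact lt_trans h1 h2

end Dev

section SortSec
variable {n : ℕ}

noncomputable def rk (K : Finset (Fin n)) (j : Fin n) : ℕ :=
  ((blk K j).filter (· ≤ j)).card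

lemma rk_pos {K : Finset (Fin n)} {j : Fin n} : 0 < rk K j := by
  apply Finset.card_pos.mpr
  exact ⟨j, Finset.mem_filter.mpr ⟨self_mem_blk, le_refl j⟩⟩

lemma rk_le {K : Finset (Fin n)} {j : Fin n} : rk K j ≤ (blk K j).card :=
  Finset.card_le_card (Finset.filter_subset _ _)

lemma rk_lt_rk {K : Finset (Fin n)} {i j : Fin n} (hs : scl K i j) (hij : i < j) :
    rk K i < rk K j := by
  have hb : blk K i = blk K j := blk_congr hs
  unfold rk
  rw [hb]
  apply Finset.card_lt_card
  constructor
  · intro x hx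
    rcases Finset.mem_filter.mp hx with ⟨h1, h2⟩
    exact Finset.mem_filter.mpr ⟨h1, le_trans h2 (le_of_lt hij)⟩
  · intro hsub
    have hj : j ∈ (blk K j).filter (· ≤ j) :=
      Finset.mem_filter.mpr ⟨self_mem_blk, le_refl j⟩
    have := Finset.mem_filter.mp (hsub hj)
    exact absurd this.2 (not_le.mpr hij)

noncomputable def pickIn (S : Finset (Fin n)) (r : ℕ) (hr : r < S.card) : Fin n :=
  S.orderEmbOfFin rfl ⟨r, hr⟩

lemma pickIn_mem {S : Finset (Fin n)} {r : ℕ} (hr : r < S.card) : pickIn S r hr ∈ S :=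
  Finset.orderEmbOfFin_mem S rfl ⟨r, hr⟩

lemma pickIn_lt_pickIn {S : Finset (Fin n)} {r r' : ℕ} (hr : r < S.card) (hr' : r' < S.card)
    (h : r < r') : pickIn S r hr < pickIn S r' hr' :=
  (S.orderEmbOfFin rfl).strictMono (by simpa [Fin.lt_def] using h)

lemma pickIn_congr {S T : Finset (Fin n)} (hST : S = T) {r : ℕ} (hr : r < S.card)
    (hr' : r < T.card) : pickIn S r hr = pickIn T r hr' := by
  subst hST; rfl

lemma card_image_blk {K : Finset (Fin n)} (f : Equiv.Perm (Fin n)) (j : Fin n) :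
    ((blk K j).image f).card = (blk K j).card :=
  Finset.card_image_of_injective _ f.injective

lemma rk_sub_lt {K : Finset (Fin n)} (f : Equiv.Perm (Fin n)) (j : Fin n) :
    rk K j - 1 < ((blk K j).image f).card := by
  rw [card_image_blk]
  have := @rk_pos n K j
  have := @rk_le n K j
  omega

noncomputable def sortFun (K : Finset (Fin n)) (f : Equiv.Perm (Fin n)) (j : Fin n) : Fin n :=
  pickIn ((blk K j).image f) (rk K j - 1) (rk_sub_lt f j)

lemma sortFun_mem {K : Finset (Fin n)} (f : Equiv.Perm (Fin n)) (j : Fin n) :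
    sortFun K f j ∈ (blk K j).image f := pickIn_mem _

lemma sortFun_lt {K : Finset (Fin n)} (f : Equiv.Perm (Fin n)) {i j : Fin n}
    (hs : scl K i j) (hij : i < j) : sortFun K f i < sortFun K f j := by
  have hb : blk K i = blk K j := blk_congr hs
  have h1 : sortFun K f i = pickIn ((blk K j).image f) (rk K i - 1)
      (by rw [← hb]; exact rk_sub_lt f i) := by
    unfold sortFun; exact pickIn_congr (by rw [hb]) _ _
  rw [h1]
  apply pickIn_lt_pickIn
  have := rk_lt_rk hs hij
  have := @rk_pos n K i
  omega

lemma sortFun_inj {K : Finset (Fin n)} (f : Equiv.Perm (Fin n)) :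
    Function.Injective (sortFun K f) := by
  intro i j he
  by_contra hne
  have hscl : scl K i j := by
    by_contra hnscl
    have h1 := sortFun_mem f i (K := K)
    have h2 := sortFun_mem f j (K := K)
    rw [he] at h1
    rcases Finset.mem_image.mp h1 with ⟨a, ha, hfa⟩
    rcases Finset.mem_image.mp h2 with ⟨b, hb, hfb⟩
    have : a = b := f.injective (by rw [hfa, hfb])
    subst this
    exact hnscl (scl_trans (mem_blk.mp ha) (scl_symm (mem_blk.mp hb)))
  rcases lt_trichotomy i j with h | h | h
  · exact absurd he (ne_of_lt (sortFun_lt f hscl h))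
  · exact hne h
  · exact absurd he.symm (ne_of_lt (sortFun_lt f (scl_symm hscl) h))

noncomputable def sortK (K : Finset (Fin n)) (f : Equiv.Perm (Fin n)) : Equiv.Perm (Fin n) :=
  Equiv.ofBijective (sortFun K f)
    ((Finite.injective_iff_bijective).mp (sortFun_inj f))

lemma sortK_apply {K : Finset (Fin n)} (f : Equiv.Perm (Fin n)) (j : Fin n) :
    sortK K f j = sortFun K f j := rfl

lemma sortK_image {K : Finset (Fin n)} (f : Equiv.Perm (Fin n)) (j : Fin n) :
    (blk K j).image (sortK K f) = (blk K j).image f := by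
  apply Finset.eq_of_subset_of_card_le
  · intro y hy
    rcases Finset.mem_image.mp hy with ⟨x, hx, hfx⟩
    have hb : blk K x = blk K j := blk_congr (scl_symm (mem_blk.mp hx))
    have := sortFun_mem f x (K := K)
    rw [hb] at this
    rw [← hfx]
    exact this
  · rw [card_image_blk, Finset.card_image_of_injective _ (sortK K f).injective]

lemma sortK_pDes {K : Finset (Fin n)} (f : Equiv.Perm (Fin n)) : pDes (sortK K f) ⊆ K := by
  intro i hi
  rw [mem_pDes] at hi
  by_contra hiK
  have hscl : scl K i (finSucc i) := by
    intro k hk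
    have := finSucc_coe hi.1
    have : k = i := by apply Fin.ext; omega
    rwa [this]
  have hlt : i < finSucc i := by
    rw [Fin.lt_def, finSucc_coe hi.1]; omega
  exact absurd hi.2 (asymm (sortFun_lt f hscl hlt))

/-- Two functions strictly increasing on a finset with equal images agree on it. -/
lemma eq_on_of_strictMonoOn (B : Finset (Fin n)) (u v : Fin n → Fin n)
    (hu : ∀ x ∈ B, ∀ y ∈ B, x < y → u x < u y)
    (hv : ∀ x ∈ B, ∀ y ∈ B, x < y → v x < v y)
    (him : B.image u = B.image v) : ∀ x ∈ B, u x = v x := by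
  induction B using Finset.strongInductionOn with
  | _ B ih =>
    intro x hx
    have hne : B.Nonempty := ⟨x, hx⟩
    set M := B.max' hne with hM
    have hMB : M ∈ B := B.max'_mem hne
    have humax : ∀ (w : Fin n → Fin n), (∀ a ∈ B, ∀ b ∈ B, a < b → w a < w b) →
        (B.image w).max' (hne.image w) = w M := by
      intro w hw
      apply le_antisymm
      · apply Finset.max'_le
        intro y hy
        rcases Finset.mem_image.mp hy with ⟨a, ha, rfl⟩
        rcases eq_or_lt_of_le (B.le_max' a ha) with h | h
        · rw [h]
        · exact le_of_lt (hw a ha M hMB h)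
      · exact Finset.le_max' _ _ (Finset.mem_image_of_mem w hMB)
    have hMeq : u M = v M := by
      have h1 := humax u hu
      have h2 := humax v hv
      rw [← h1, ← h2]
      congr 1
    rcases eq_or_ne x M with rfl | hxM
    · exact hMeq
    have hxB' : x ∈ B.erase M := Finset.mem_erase.mpr ⟨hxM, hx⟩
    have hinj : ∀ (w : Fin n → Fin n), (∀ a ∈ B, ∀ b ∈ B, a < b → w a < w b) →
        ∀ a ∈ B, ∀ b ∈ B, w a = w b → a = b := by
      intro w hw a ha b hb he
      rcases lt_trichotomy a b with h | h | h
      · exact absurd he (ne_of_lt (hw a ha b hb h))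
      · exact h
      · exact absurd he.symm (ne_of_lt (hw b hb a ha h))
    have herase : ∀ (w : Fin n → Fin n), (∀ a ∈ B, ∀ b ∈ B, a < b → w a < w b) →
        (B.erase M).image w = (B.image w).erase (w M) := by
      intro w hw
      ext y
      simp only [Finset.mem_image, Finset.mem_erase]
      constructor
      · rintro ⟨a, ⟨haM, haB⟩, rfl⟩
        exact ⟨fun he => haM (hinj w hw a haB M hMB he), a, haB, rfl⟩
      · rintro ⟨hyM, a, haB, rfl⟩
        exact ⟨a, ⟨fun he => hyM (by rw [he]), haB⟩, rfl⟩
    apply ih (B.erase M) (Finset.erase_ssubset hMB)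
      (fun a ha b hb hab => hu a (Finset.mem_of_mem_erase ha) b (Finset.mem_of_mem_erase hb) hab)
      (fun a ha b hb hab => hv a (Finset.mem_of_mem_erase ha) b (Finset.mem_of_mem_erase hb) hab)
      _ x hxB'
    · rw [herase u hu, herase v hv, hMeq, him]

lemma inc_on_blk' {K : Finset (Fin n)} {f : Equiv.Perm (Fin n)} (hf : pDes f ⊆ K)
    {j : Fin n} : ∀ x ∈ blk K j, ∀ y ∈ blk K j, x < y → f x < f y :=
  fun x hx y hy hxy => inc_on_blk hf (scl_of_mem_blk hx hy) hxy

lemma sortFun_inc_on_blk {K : Finset (Fin n)} (f : Equiv.Perm (Fin n)) {j : Fin n} :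
    ∀ x ∈ blk K j, ∀ y ∈ blk K j, x < y → sortFun K f x < sortFun K f y :=
  fun x hx y hy hxy => sortFun_lt f (scl_of_mem_blk hx hy) hxy

lemma sortK_eq_self {K : Finset (Fin n)} {f : Equiv.Perm (Fin n)} (hf : pDes f ⊆ K) :
    sortK K f = f := by
  apply Equiv.ext
  intro j
  exact eq_on_of_strictMonoOn (blk K j) (sortFun K f) f
    (sortFun_inc_on_blk f) (inc_on_blk' hf) (sortK_image f j) j self_mem_blk

lemma sortK_congr {K : Finset (Fin n)} {f h : Equiv.Perm (Fin n)}
    (him : ∀ j : Fin n, (blk K j).image f = (blk K j).image h) : sortK K f = sortK K h := by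
  apply Equiv.ext
  intro j
  exact eq_on_of_strictMonoOn (blk K j) (sortFun K f) (sortFun K h)
    (sortFun_inc_on_blk f) (sortFun_inc_on_blk h)
    (by
      calc Finset.image (sortFun K f) (blk K j) = Finset.image (⇑(sortK K f)) (blk K j) := rfl
        _ = Finset.image (⇑f) (blk K j) := sortK_image f j
        _ = Finset.image (⇑h) (blk K j) := him j
        _ = Finset.image (⇑(sortK K h)) (blk K j) := (sortK_image h j).symm
        _ = Finset.image (sortFun K h) (blk K j) := rfl) j self_mem_blk

end SortSec

section KeyLemma
variable {n : ℕ}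
open Equiv

lemma scl_cross {K : Finset (Fin n)} {a b a' b' : Fin n} (hab : a < b) (hnab : ¬ scl K a b)
    (ha : scl K a a') (hb : scl K b b') : a' < b' := by
  unfold scl at hnab
  push_neg at hnab
  rcases hnab with ⟨k, hk, hkK⟩
  have hab' := Fin.lt_def.mp hab
  have hk' : (a : ℕ) ≤ (k : ℕ) ∧ (k : ℕ) < (b : ℕ) := by omega
  have h1 : (a' : ℕ) ≤ (k : ℕ) := by
    by_contra hc
    exact (ha k (by omega)) hkK
  have h2 : (k : ℕ) < (b' : ℕ) := by
    by_contra hc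
    exact (hb k (by omega)) hkK
  exact Fin.lt_def.mpr (by omega)

lemma mem_image_blk {K : Finset (Fin n)} {f : Equiv.Perm (Fin n)} {j x : Fin n} :
    f x ∈ (blk K j).image f ↔ x ∈ blk K j := by
  constructor
  · intro hx
    rcases Finset.mem_image.mp hx with ⟨a, ha, hfa⟩
    rwa [f.injective hfa] at ha
  · exact Finset.mem_image_of_mem f

/-- The main compatibility: sorting `τπ⁻¹ρ` on `K`-blocks preserves the `L`-condition. -/
lemma key_cond {K L : Finset (Fin n)} {π τ ρ : Equiv.Perm (Fin n)}
    (hπτ : pDes π = pDes τ) (hρ : pDes ρ ⊆ K) (hμ : pDes (ρ⁻¹ * π) ⊆ L) :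
    pDes ((sortK K (τ * π⁻¹ * ρ))⁻¹ * τ) ⊆ L := by
  set g : Equiv.Perm (Fin n) := τ * π⁻¹ with hg
  set ρ' : Equiv.Perm (Fin n) := sortK K (g * ρ) with hρ'
  set μ' : Equiv.Perm (Fin n) := ρ'⁻¹ * τ with hμ'
  set μ : Equiv.Perm (Fin n) := ρ⁻¹ * π with hμdef
  show pDes μ' ⊆ L
  -- (a) μ' x and μ x are in the same block
  have ha : ∀ x : Fin n, scl K (μ' x) (μ x) := by
    intro x
    have h1 : ρ' (μ' x) = τ x := by
      simp [hμ', Equiv.Perm.mul_apply]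
    have h2 : (g * ρ) (μ x) = τ x := by
      simp [hg, hμdef, Equiv.Perm.mul_apply]
    -- τ x ∈ image ρ' (blk (μ x))
    have h3 : τ x ∈ (blk K (μ x)).image (ρ') := by
      rw [sortK_image]
      rw [← h2]
      exact Finset.mem_image_of_mem _ self_mem_blk
    rw [← h1] at h3
    have h4 : μ' x ∈ blk K (μ x) := mem_image_blk.mp h3
    exact scl_symm (mem_blk.mp h4)
  -- increasing of ρ' on blocks
  have hρ'inc : ∀ {x y : Fin n}, scl K x y → x < y → ρ' x < ρ' y := by
    intro x y hs hxy
    exact sortFun_lt (g * ρ) hs hxy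
  have hρinc : ∀ {x y : Fin n}, scl K x y → x < y → ρ x < ρ y := by
    intro x y hs hxy
    exact inc_on_blk hρ hs hxy
  intro i hi
  by_contra hiL
  rw [mem_pDes] at hi
  obtain ⟨hguard, hdes⟩ := hi
  -- μ has no descent at i
  have hμnd : μ i < μ (finSucc i) := by
    have : i ∉ pDes μ := fun hd => hiL (hμ hd)
    rw [mem_pDes] at this
    push_neg at this
    have hle := this hguard
    have hne : μ (finSucc i) ≠ μ i := by
      intro he
      have h2 : finSucc i = i := μ.injective he
      have h3 := finSucc_coe hguard
      rw [h2] at h3; omega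
    exact lt_of_le_of_ne hle (Ne.symm hne)
  have hμ'ne : μ' i ≠ μ' (finSucc i) := by
    intro he
    have h2 : i = finSucc i := μ'.injective he
    have h3 := finSucc_coe hguard
    rw [← h2] at h3; omega
  by_cases hcase : scl K (μ i) (μ (finSucc i))
  · -- same block: compare through π/τ
    have hπlt : π i < π (finSucc i) := by
      have : ρ (μ i) < ρ (μ (finSucc i)) := hρinc hcase hμnd
      simpa [hμdef, Equiv.Perm.mul_apply] using this
    have hτlt : τ i < τ (finSucc i) := by
      have hnd : i ∉ pDes π := by
        rw [mem_pDes]; push_neg; intro _; exact le_of_lt hπlt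
      rw [hπτ] at hnd
      rw [mem_pDes] at hnd; push_neg at hnd
      have hle := hnd hguard
      have hne : τ (finSucc i) ≠ τ i := by
        intro he
        have h2 : finSucc i = i := τ.injective he
        have h3 := finSucc_coe hguard
        rw [h2] at h3; omega
      exact lt_of_le_of_ne hle (Ne.symm hne)
    have hsame : scl K (μ' i) (μ' (finSucc i)) :=
      scl_trans (scl_trans (ha i) hcase) (scl_symm (ha (finSucc i)))
    have : μ' i < μ' (finSucc i) := by
      rcases lt_trichotomy (μ' i) (μ' (finSucc i)) with h | h | h
      · exact h
      · exact absurd h hμ'ne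
      · have := hρ'inc (scl_symm hsame) h
        have h1 : ρ' (μ' i) = τ i := by simp [hμ', Equiv.Perm.mul_apply]
        have h2 : ρ' (μ' (finSucc i)) = τ (finSucc i) := by simp [hμ', Equiv.Perm.mul_apply]
        rw [h1, h2] at this
        exact absurd hτlt (asymm this)
    exact absurd hdes (asymm this)
  · -- different blocks
    have := scl_cross hμnd hcase (scl_symm (ha i)) (scl_symm (ha (finSucc i)))
    exact absurd hdes (asymm this)

/-- inverse compatibility for the bijection -/
lemma sortK_roundtrip {K : Finset (Fin n)} {g ρ : Equiv.Perm (Fin n)} (hρ : pDes ρ ⊆ K) :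
    sortK K (g⁻¹ * sortK K (g * ρ)) = ρ := by
  have him : ∀ j : Fin n, (blk K j).image (⇑(g⁻¹ * sortK K (g * ρ))) = (blk K j).image (⇑ρ) := by
    intro j
    have h1 : (blk K j).image (⇑(g⁻¹ * sortK K (g * ρ)))
        = ((blk K j).image (⇑(sortK K (g * ρ)))).image (⇑g⁻¹) := by
      rw [Finset.image_image]; rfl
    rw [h1, sortK_image]
    have h2 : (blk K j).image (⇑(g * ρ)) = ((blk K j).image (⇑ρ)).image (⇑g) := by
      rw [Finset.image_image]; rfl
    rw [h2, Finset.image_image]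
    have : (⇑g⁻¹ ∘ ⇑g) = id := by
      funext x; simp
    rw [this, Finset.image_id]
  rw [sortK_congr him, sortK_eq_self hρ]

/-- The count of factorizations depends only on the descent set. -/
lemma N_eq {π τ : Equiv.Perm (Fin n)} (hπτ : pDes π = pDes τ) (K L : Finset (Fin n)) :
    (Finset.univ.filter fun ρ : Equiv.Perm (Fin n) =>
        pDes ρ ⊆ K ∧ pDes (ρ⁻¹ * π) ⊆ L).card =
    (Finset.univ.filter fun ρ : Equiv.Perm (Fin n) =>
        pDes ρ ⊆ K ∧ pDes (ρ⁻¹ * τ) ⊆ L).card := by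
  apply Finset.card_bij' (fun ρ _ => sortK K (τ * π⁻¹ * ρ)) (fun σ _ => sortK K (π * τ⁻¹ * σ))
  · intro ρ hρ
    rcases Finset.mem_filter.mp hρ with ⟨-, h1, h2⟩
    refine Finset.mem_filter.mpr ⟨Finset.mem_univ _, sortK_pDes _, ?_⟩
    exact key_cond hπτ h1 h2
  · intro σ hσ
    rcases Finset.mem_filter.mp hσ with ⟨-, h1, h2⟩
    refine Finset.mem_filter.mpr ⟨Finset.mem_univ _, sortK_pDes _, ?_⟩
    exact key_cond hπτ.symm h1 h2
  · intro ρ hρ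
    rcases Finset.mem_filter.mp hρ with ⟨-, h1, -⟩
    have : π * τ⁻¹ * sortK K (τ * π⁻¹ * ρ) = (τ * π⁻¹)⁻¹ * sortK K ((τ * π⁻¹) * ρ) := by
      group
    rw [this]
    exact sortK_roundtrip h1
  · intro σ hσ
    rcases Finset.mem_filter.mp hσ with ⟨-, h1, -⟩
    have : τ * π⁻¹ * sortK K (π * τ⁻¹ * σ) = (π * τ⁻¹)⁻¹ * sortK K ((π * τ⁻¹) * σ) := by
      group
    rw [this]
    exact sortK_roundtrip h1

end KeyLemma

section Plumbing
variable {n : ℕ}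

lemma card_filter_subset_eq_sum {S : Finset (Equiv.Perm (Fin n))} (E : Finset (Fin n)) :
    (S.filter fun ρ => pDes ρ ⊆ E).card
      = ∑ F ∈ E.powerset, (S.filter fun ρ => pDes ρ = F).card := by
  rw [Finset.card_eq_sum_card_fiberwise (f := pDes) (t := E.powerset)
    (fun x hx => Finset.mem_powerset.mpr (Finset.mem_filter.mp hx).2)]
  apply Finset.sum_congr rfl
  intro F hF
  congr 1
  rw [Finset.filter_filter]
  apply Finset.filter_congr
  intro ρ _
  constructor
  · rintro ⟨-, h⟩; simp [h]
  · intro h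
    exact ⟨h ▸ Finset.mem_powerset.mp hF, h⟩

lemma count_eq_of_counts {S T : Finset (Equiv.Perm (Fin n))}
    (h : ∀ D : Finset (Fin n),
        (S.filter fun ρ => pDes ρ ⊆ D).card = (T.filter fun ρ => pDes ρ ⊆ D).card) :
    ∀ E : Finset (Fin n),
        (S.filter fun ρ => pDes ρ = E).card = (T.filter fun ρ => pDes ρ = E).card := by
  intro E
  induction E using Finset.strongInductionOn with
  | _ E ih =>
    have hE : E ∈ E.powerset := Finset.mem_powerset.mpr (Finset.Subset.refl E)
    have h1 := card_filter_subset_eq_sum (S := S) E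
    have h2 := card_filter_subset_eq_sum (S := T) E
    rw [← Finset.add_sum_erase _ _ hE] at h1 h2
    have h3 : ∑ F ∈ E.powerset.erase E, (S.filter fun ρ => pDes ρ = F).card
        = ∑ F ∈ E.powerset.erase E, (T.filter fun ρ => pDes ρ = F).card := by
      apply Finset.sum_congr rfl
      intro F hF
      rcases Finset.mem_erase.mp hF with ⟨hne, hsub⟩
      exact ih F (Finset.ssubset_iff_subset_ne.mpr ⟨Finset.mem_powerset.mp hsub, hne⟩)
    have h4 := h E
    omega

lemma mapPDes_eq_of_counts {S T : Finset (Equiv.Perm (Fin n))}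
    (h : ∀ D : Finset (Fin n),
        (S.filter fun ρ => pDes ρ ⊆ D).card = (T.filter fun ρ => pDes ρ ⊆ D).card) :
    S.val.map pDes = T.val.map pDes := by
  apply Multiset.ext.mpr
  intro E
  rw [Multiset.count_map, Multiset.count_map]
  have h1 : ∀ (U : Finset (Equiv.Perm (Fin n))),
      Multiset.card (Multiset.filter (fun ρ => E = pDes ρ) U.val)
        = (U.filter fun ρ => pDes ρ = E).card := by
    intro U
    have h2 : Multiset.filter (fun ρ => E = pDes ρ) U.val
        = Multiset.filter (fun ρ => pDes ρ = E) U.val := by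
      apply Multiset.filter_congr
      intro x _
      constructor
      · exact Eq.symm
      · exact Eq.symm
    rw [h2, ← Finset.filter_val]
    rfl
  rw [h1 S, h1 T]
  exact count_eq_of_counts h E

end Plumbing

section Assemble
variable {n : ℕ}

lemma rinv_map_right (J : Finset (Fin n)) (π : Equiv.Perm (Fin n)) :
    (RinvM n J).map (fun σ => pDes (π * σ))
      = (Finset.univ.filter fun ρ : Equiv.Perm (Fin n) => pDes (ρ⁻¹ * π) ⊆ J).val.map pDes := by
  have hset : (Finset.univ.filter fun ρ : Equiv.Perm (Fin n) => pDes (ρ⁻¹ * π) ⊆ J)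
      = Finset.map ⟨fun σ => π * σ, fun a b hab => by simpa using hab⟩
          (Finset.univ.filter fun σ : Equiv.Perm (Fin n) => pDes σ⁻¹ ⊆ J) := by
    ext ρ
    simp only [Finset.mem_map, Finset.mem_filter, Finset.mem_univ, true_and,
      Function.Embedding.coeFn_mk]
    constructor
    · intro hρ
      refine ⟨π⁻¹ * ρ, ?_, by show π * (π⁻¹ * ρ) = ρ; group⟩
      have : (π⁻¹ * ρ)⁻¹ = ρ⁻¹ * π := by group
      rwa [this]
    · rintro ⟨σ, hσ, rfl⟩
      have : (π * σ)⁻¹ * π = σ⁻¹ := by group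
      show pDes ((π * σ)⁻¹ * π) ⊆ J
      rwa [this]
  rw [hset, Finset.map_val, Multiset.map_map]
  rfl

lemma rinv_map_left (J : Finset (Fin n)) (π : Equiv.Perm (Fin n)) :
    (RinvM n J).map (fun σ => pDes (σ * π))
      = (Finset.univ.filter fun ρ : Equiv.Perm (Fin n) => pDes (π * ρ⁻¹) ⊆ J).val.map pDes := by
  have hset : (Finset.univ.filter fun ρ : Equiv.Perm (Fin n) => pDes (π * ρ⁻¹) ⊆ J)
      = Finset.map ⟨fun σ => σ * π, fun a b hab => by simpa using hab⟩
          (Finset.univ.filter fun σ : Equiv.Perm (Fin n) => pDes σ⁻¹ ⊆ J) := by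
    ext ρ
    simp only [Finset.mem_map, Finset.mem_filter, Finset.mem_univ, true_and,
      Function.Embedding.coeFn_mk]
    constructor
    · intro hρ
      refine ⟨ρ * π⁻¹, ?_, by show ρ * π⁻¹ * π = ρ; group⟩
      have : (ρ * π⁻¹)⁻¹ = π * ρ⁻¹ := by group
      rwa [this]
    · rintro ⟨σ, hσ, rfl⟩
      have : π * (σ * π)⁻¹ = σ⁻¹ := by group
      show pDes (π * (σ * π)⁻¹) ⊆ J
      rwa [this]
  rw [hset, Finset.map_val, Multiset.map_map]
  rfl

lemma key_right {J : Finset (Fin n)} {π τ : Equiv.Perm (Fin n)} (hπτ : pDes π = pDes τ) :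
    (RinvM n J).map (fun σ => pDes (π * σ)) = (RinvM n J).map (fun σ => pDes (τ * σ)) := by
  rw [rinv_map_right, rinv_map_right]
  apply mapPDes_eq_of_counts
  intro D
  have hh : ∀ (κ : Equiv.Perm (Fin n)),
      ((Finset.univ.filter fun ρ : Equiv.Perm (Fin n) => pDes (ρ⁻¹ * κ) ⊆ J).filter
        fun ρ => pDes ρ ⊆ D)
      = Finset.univ.filter fun ρ : Equiv.Perm (Fin n) => pDes ρ ⊆ D ∧ pDes (ρ⁻¹ * κ) ⊆ J := by
    intro κ
    rw [Finset.filter_filter]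
    apply Finset.filter_congr
    intro ρ _
    exact and_comm
  rw [hh π, hh τ]
  exact N_eq hπτ D J

lemma key_left {J : Finset (Fin n)} {π τ : Equiv.Perm (Fin n)} (hπτ : pDes π = pDes τ) :
    (RinvM n J).map (fun σ => pDes (σ * π)) = (RinvM n J).map (fun σ => pDes (σ * τ)) := by
  rw [rinv_map_left, rinv_map_left]
  apply mapPDes_eq_of_counts
  intro D
  have hh : ∀ (κ : Equiv.Perm (Fin n)),
      ((Finset.univ.filter fun ρ : Equiv.Perm (Fin n) => pDes (κ * ρ⁻¹) ⊆ J).filter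
        fun ρ => pDes ρ ⊆ D).card
      = (Finset.univ.filter fun σ : Equiv.Perm (Fin n) =>
          pDes σ ⊆ J ∧ pDes (σ⁻¹ * κ) ⊆ D).card := by
    intro κ
    rw [Finset.filter_filter]
    apply Finset.card_bij' (fun ρ _ => κ * ρ⁻¹) (fun σ _ => σ⁻¹ * κ)
    · intro ρ hρ
      rcases Finset.mem_filter.mp hρ with ⟨-, h1, h2⟩
      refine Finset.mem_filter.mpr ⟨Finset.mem_univ _, h1, ?_⟩
      have : (κ * ρ⁻¹)⁻¹ * κ = ρ := by group
      rwa [this]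
    · intro σ hσ
      rcases Finset.mem_filter.mp hσ with ⟨-, h1, h2⟩
      refine Finset.mem_filter.mpr ⟨Finset.mem_univ _, ?_, h2⟩
      have : κ * (σ⁻¹ * κ)⁻¹ = σ := by group
      rwa [this]
    · intro ρ _; group
    · intro σ _; group
  rw [hh π, hh τ]
  exact N_eq hπτ J D

lemma bind_congr_of_map_eq {α β γ : Type*} (f : α → β) (g : α → Multiset γ)
    (hg : ∀ a b, f a = f b → g a = g b) {A B : Multiset α} (hAB : A.map f = B.map f) :
    A.bind g = B.bind g := by
  classical
  set h : β → Multiset γ := fun b => if hb : ∃ x, f x = b then g hb.choose else 0 with hh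
  have hfact : ∀ a, g a = h (f a) := by
    intro a
    have hb : ∃ x, f x = f a := ⟨a, rfl⟩
    rw [hh]
    simp only [dif_pos hb]
    exact (hg hb.choose a hb.choose_spec).symm
  calc A.bind g = A.bind (fun a => h (f a)) := by
        apply Multiset.bind_congr; intro a _; exact hfact a
    _ = (A.map f).bind h := (Multiset.bind_map A h f).symm
    _ = (B.map f).bind h := by rw [hAB]
    _ = B.bind (fun a => h (f a)) := Multiset.bind_map B h f
    _ = B.bind g := by
        apply Multiset.bind_congr; intro a _; exact (hfact a).symm

end Assemble


/-- If `A ≡ B` (equal multisets of descent sets) then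
`A·R_J⁻¹ ≡ B·R_J⁻¹` and `R_J⁻¹·A ≡ R_J⁻¹·B` for every `J ⊆ [n-1]`. -/
theorem mult_invariance (n : ℕ) (A B : Multiset (Equiv.Perm (Fin n)))
    (h : A.map pDes = B.map pDes) (J : Finset (Fin n))
    (hJ : ∀ i ∈ J, (i : ℕ) + 1 < n) :
    (mprod A (RinvM n J)).map pDes = (mprod B (RinvM n J)).map pDes ∧
    (mprod (RinvM n J) A).map pDes = (mprod (RinvM n J) B).map pDes := by

  constructor
  · have hrew : ∀ (C : Multiset (Equiv.Perm (Fin n))),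
        (mprod C (RinvM n J)).map pDes
          = C.bind (fun a => (RinvM n J).map (fun b => pDes (a * b))) := by
      intro C
      rw [mprod, Multiset.map_bind]
      apply Multiset.bind_congr
      intro a _
      rw [Multiset.map_map]
      rfl
    rw [hrew A, hrew B]
    exact bind_congr_of_map_eq pDes _ (fun a b hab => key_right hab) h
  · have hrew : ∀ (C : Multiset (Equiv.Perm (Fin n))),
        (mprod (RinvM n J) C).map pDes
          = C.bind (fun a => (RinvM n J).map (fun b => pDes (b * a))) := by
      intro C
      rw [mprod, Multiset.map_bind]
      have := Multiset.bind_map_comm (RinvM n J) C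
        (f := fun b a => pDes (b * a))
      rw [← this]
      apply Multiset.bind_congr
      intro a _
      rw [Multiset.map_map]
      rfl
    rw [hrew A, hrew B]
    exact bind_congr_of_map_eq pDes _ (fun a b hab => key_left hab) h
end

section
/- If a multiset B ⊆ S_n is D-symmetric, then B is D-commutative with all inverse J-classes, i.e., for every J ⊆ [n-1] the multisets B·R_J^{-1} and R_J^{-1}·B have equal multisets of descent sets. -/
open scoped Classical

/-- A multiset `B ⊆ S_n` is `D`-symmetric if for every ordered set partition `U` of
`[n]` (with associated permutation `δ_U`) there is a bijection `Ψ : B → B` such that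
for each `u ∈ U*` and `π ∈ B`, `u ∈ Des(π) ⟺ δ_U(u) ∈ Des(Ψ(π))`. -/
def DSymm (n : ℕ) (B : Multiset (Equiv.Perm (Fin n))) : Prop :=
  ∀ U : List (Finset (Fin n)), OSPn n U →
    ∀ δU : Equiv.Perm (Fin n), IsDelta (U.map Finset.card) U δU →
      ∃ Ψ : Equiv.Perm (Fin n) → Equiv.Perm (Fin n), B.map Ψ = B ∧
        ∀ u ∈ Ustar n U, ∀ π ∈ B, (u ∈ pDes π ↔ δU u ∈ pDes (Ψ π))

namespace DSP

variable {n : ℕ}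

lemma finSucc_val {i : Fin n} (h : (i : ℕ) + 1 < n) : ((finSucc i : Fin n) : ℕ) = (i : ℕ) + 1 := by
  simp [finSucc, Nat.mod_eq_of_lt h]

lemma finSucc_eq_mk {i : Fin n} (h : (i : ℕ) + 1 < n) : finSucc i = ⟨(i : ℕ) + 1, h⟩ := by
  apply Fin.ext; simp [finSucc_val h]

lemma mem_pDes {π : Equiv.Perm (Fin n)} {i : Fin n} :
    i ∈ pDes π ↔ (i : ℕ) + 1 < n ∧ π (finSucc i) < π i := by
  simp [pDes]

/-- block index of a value -/
def blk (J : Finset (Fin n)) (v : Fin n) : ℕ := (J.filter fun j => j < v).card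

variable {J : Finset (Fin n)}

lemma blk_mono {v w : Fin n} (h : v ≤ w) : blk J v ≤ blk J w := by
  apply Finset.card_le_card
  intro j hj
  simp only [Finset.mem_filter] at *
  exact ⟨hj.1, lt_of_lt_of_le hj.2 h⟩

lemma blk_le_card (v : Fin n) : blk J v ≤ J.card :=
  Finset.card_le_card (Finset.filter_subset _ _)

lemma lt_of_blk_lt {v w : Fin n} (h : blk J v < blk J w) : v < w := by
  by_contra hc
  exact absurd (blk_mono (not_lt.mp hc)) (not_le.mpr h)

lemma blk_finSucc {i : Fin n} (h : (i : ℕ) + 1 < n) :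
    blk J (finSucc i) = blk J i + (if i ∈ J then 1 else 0) := by
  have hlt : ∀ j : Fin n, (j < finSucc i) ↔ (j < i ∨ j = i) := by
    intro j
    rw [Fin.lt_def, Fin.lt_def, finSucc_val h, Fin.ext_iff]
    omega
  have : J.filter (fun j => j < finSucc i) = (J.filter fun j => j < i) ∪ (J.filter fun j => j = i) := by
    rw [← Finset.filter_or]
    apply Finset.filter_congr
    intro j _; simp [hlt j]
  rw [blk, this, Finset.card_union_of_disjoint]
  · congr 1
    by_cases hi : i ∈ J <;> simp [Finset.filter_eq', hi]
  · rw [Finset.disjoint_filter]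
    intro j _ hj hj2; rw [hj2] at hj; exact lt_irrefl _ hj

lemma blk_finSucc_of_not_mem {i : Fin n} (h : (i : ℕ) + 1 < n) (hi : i ∉ J) :
    blk J (finSucc i) = blk J i := by simp [blk_finSucc h, hi]

lemma blk_finSucc_of_mem {i : Fin n} (h : (i : ℕ) + 1 < n) (hi : i ∈ J) :
    blk J (finSucc i) = blk J i + 1 := by simp [blk_finSucc h, hi]

lemma not_mem_of_blk_eq {u w x : Fin n} (hb : blk J u = blk J w)
    (h1 : u ≤ x) (h2 : x < w) : x ∉ J := by
  intro hx
  have hxn : (x : ℕ) + 1 < n := lt_of_le_of_lt (Nat.succ_le_of_lt h2) w.isLt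
  have hsx : finSucc x ≤ w := by
    rw [Fin.le_def, finSucc_val hxn]; exact Nat.succ_le_of_lt h2
  have := blk_mono (J := J) hsx
  rw [blk_finSucc_of_mem hxn hx] at this
  have h3 := blk_mono (J := J) h1
  omega

/-- walk lemma: adjacent-nondecreasing implies monotone, for f : Fin n → ℕ -/
lemma mono_of_adj {f : Fin n → ℕ}
    (h : ∀ i : Fin n, (i : ℕ) + 1 < n → f i ≤ f (finSucc i)) :
    ∀ v w : Fin n, v ≤ w → f v ≤ f w := by
  have key : ∀ k : ℕ, ∀ v w : Fin n, (w : ℕ) = (v : ℕ) + k → f v ≤ f w := by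
    intro k
    induction k with
    | zero => intro v w hw; have : v = w := Fin.ext (by omega); rw [this]
    | succ m ih =>
      intro v w hw
      have hvn : (v : ℕ) + 1 < n := by have := w.isLt; omega
      calc f v ≤ f (finSucc v) := h v hvn
        _ ≤ f w := ih (finSucc v) w (by rw [finSucc_val hvn]; omega)
  intro v w hvw
  exact key ((w : ℕ) - (v : ℕ)) v w (by rw [Fin.le_def] at hvw; omega)

lemma mem_RinvM {σ : Equiv.Perm (Fin n)} :
    σ ∈ RinvM n J ↔ ∀ u : Fin n, (u : ℕ) + 1 < n → u ∉ J → σ⁻¹ u < σ⁻¹ (finSucc u) := by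
  rw [RinvM, ← Finset.mem_def, Finset.mem_filter]
  simp only [Finset.mem_univ, true_and]
  constructor
  · intro hsub u hu hJ
    have : u ∉ pDes σ⁻¹ := fun hm => hJ (hsub hm)
    rw [mem_pDes] at this
    push_neg at this
    have hne : σ⁻¹ (finSucc u) ≠ σ⁻¹ u := by
      intro he
      have := σ⁻¹.injective he
      have := congrArg Fin.val this
      rw [finSucc_val hu] at this; omega
    exact lt_of_le_of_ne (this hu) (σ⁻¹.injective.ne_iff.mpr (by
      intro he; have := congrArg Fin.val he; rw [finSucc_val hu] at this; omega))
  · intro h u hu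
    rw [mem_pDes] at hu
    by_contra hJ
    exact absurd hu.2 (not_lt.mpr (le_of_lt (h u hu.1 hJ)))

/-- strict monotonicity of σ⁻¹ along a same-block run of values -/
lemma Rinv_mono {σ : Equiv.Perm (Fin n)} (hσ : σ ∈ RinvM n J) {v w : Fin n}
    (hvw : v < w) (hb : blk J v = blk J w) : σ⁻¹ v < σ⁻¹ w := by
  have key : ∀ k : ℕ, ∀ v w : Fin n, (w : ℕ) = (v : ℕ) + (k+1) → blk J v = blk J w →
      σ⁻¹ v < σ⁻¹ w := by
    intro k
    induction k with
    | zero =>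
      intro v w hw hb
      have hvn : (v : ℕ) + 1 < n := by have := w.isLt; omega
      have hJv : v ∉ J := not_mem_of_blk_eq hb (le_refl v) (by rw [Fin.lt_def]; omega)
      have := (mem_RinvM.mp hσ) v hvn hJv
      have hwv : finSucc v = w := Fin.ext (by rw [finSucc_val hvn]; omega)
      rwa [hwv] at this
    | succ m ih =>
      intro v w hw hb
      have hvn : (v : ℕ) + 1 < n := by have := w.isLt; omega
      have hJv : v ∉ J := not_mem_of_blk_eq hb (le_refl v) (by rw [Fin.lt_def]; omega)
      have h1 : σ⁻¹ v < σ⁻¹ (finSucc v) := (mem_RinvM.mp hσ) v hvn hJv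
      have hbv : blk J (finSucc v) = blk J w := by
        have h2 := blk_finSucc_of_not_mem (J := J) hvn hJv
        rw [h2, hb]
      exact lt_trans h1 (ih (finSucc v) w (by rw [finSucc_val hvn]; omega) hbv)
  exact key ((w : ℕ) - (v : ℕ) - 1) v w (by rw [Fin.lt_def] at hvw; omega) hb

/-- σ ∈ R is increasing on each blk-fiber of σ -/
lemma R_incr {σ : Equiv.Perm (Fin n)} (hσ : σ ∈ RinvM n J) {x y : Fin n}
    (hb : blk J (σ x) = blk J (σ y)) (hxy : x < y) : σ x < σ y := by
  rcases lt_trichotomy (σ x) (σ y) with h | h | h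
  · exact h
  · exact absurd (σ.injective h) (ne_of_lt hxy)
  · have := Rinv_mono hσ h hb.symm
    simp only [Equiv.Perm.inv_def, Equiv.symm_apply_apply] at this
    exact absurd hxy (not_lt.mpr (le_of_lt this))

/-- consecutive positions in the same σ-block have consecutive values -/
lemma R_consec {σ : Equiv.Perm (Fin n)} (hσ : σ ∈ RinvM n J) {i : Fin n}
    (hi : (i : ℕ) + 1 < n) (hb : blk J (σ i) = blk J (σ (finSucc i))) :
    (σ (finSucc i) : ℕ) = (σ i : ℕ) + 1 := by
  have hlt : σ i < σ (finSucc i) := R_incr hσ hb (by rw [Fin.lt_def, finSucc_val hi]; omega)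
  by_contra hne
  have hgap : (σ i : ℕ) + 1 < (σ (finSucc i) : ℕ) := by rw [Fin.lt_def] at hlt; omega
  have hvn : (σ i : ℕ) + 1 < n := lt_trans hgap (σ (finSucc i)).isLt
  set v : Fin n := ⟨(σ i : ℕ) + 1, hvn⟩ with hv
  have h1 : σ i < v := by rw [Fin.lt_def]; simp [hv]
  have h2 : v < σ (finSucc i) := by rw [Fin.lt_def]; simpa [hv] using hgap
  have hb1 : blk J (σ i) = blk J v := by
    have a1 := blk_mono (J := J) (le_of_lt h1)
    have a2 := blk_mono (J := J) (le_of_lt h2)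
    omega
  have hb2 : blk J v = blk J (σ (finSucc i)) := by
    have a1 := blk_mono (J := J) (le_of_lt h1)
    have a2 := blk_mono (J := J) (le_of_lt h2)
    omega
  have c1 := Rinv_mono hσ h1 hb1
  have c2 := Rinv_mono hσ h2 hb2
  simp only [Equiv.Perm.inv_def, Equiv.symm_apply_apply] at c1 c2
  rw [Fin.lt_def] at c1 c2
  rw [finSucc_val hi] at c2
  omega

/-- order comparison is preserved by an adjacent-values swap except on the pair itself -/
lemma swap_lt_iff {z z' : Fin n} (hzz : (z : ℕ) + 1 = (z' : ℕ)) {p q : Fin n}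
    (h1 : ¬(p = z ∧ q = z')) (h2 : ¬(p = z' ∧ q = z)) :
    (Equiv.swap z z' p < Equiv.swap z z' q ↔ p < q) := by
  rw [Equiv.swap_apply_def, Equiv.swap_apply_def]
  split_ifs <;>
    (simp only [Fin.lt_def, Fin.ext_iff, not_and] at *) <;> omega

/-- R is closed under right multiplication by a swap of adjacent positions lying
in different σ-blocks -/
lemma R_mul_swap_mem {σ : Equiv.Perm (Fin n)} (hσ : σ ∈ RinvM n J) {z z' : Fin n}
    (hzz : (z : ℕ) + 1 = (z' : ℕ)) (hblk : blk J (σ z) ≠ blk J (σ z')) :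
    σ * Equiv.swap z z' ∈ RinvM n J := by
  rw [mem_RinvM]
  intro u hu hJ
  have hmono := (mem_RinvM.mp hσ) u hu hJ
  have hinv : (σ * Equiv.swap z z')⁻¹ = (Equiv.swap z z') * σ⁻¹ := by
    rw [mul_inv_rev, Equiv.swap_inv]
  rw [hinv]
  simp only [Equiv.Perm.mul_apply]
  apply (swap_lt_iff hzz ?_ ?_).mpr hmono
  · rintro ⟨e1, e2⟩
    have : u = σ z := by rw [← e1]; simp
    have : finSucc u = σ z' := by rw [← e2]; simp
    apply hblk
    have h1 : σ z = u := by rw [← e1]; simp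
    have h2 : σ z' = finSucc u := by rw [← e2]; simp
    rw [h1, h2, blk_finSucc_of_not_mem hu hJ]
  · rintro ⟨e1, e2⟩
    have h1 : σ z' = u := by rw [← e1]; simp
    have h2 : σ z = finSucc u := by rw [← e2]; simp
    -- then σ⁻¹ u = z' > z = σ⁻¹ (finSucc u), contradicting hmono
    have : σ⁻¹ u = z' := by rw [← h1]; simp
    have h3 : σ⁻¹ (finSucc u) = z := by rw [← h2]; simp
    rw [this, h3] at hmono
    rw [Fin.lt_def] at hmono; omega

/-- abstract "colored descent set" -/
def Dg (f : Fin n → ℕ) (S : Finset (Fin n)) : Finset (Fin n) :=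
  Finset.univ.filter fun i => (i : ℕ) + 1 < n ∧
    (f (finSucc i) < f i ∨ (f (finSucc i) = f i ∧ i ∈ S))

/-- descent set with "local reading" of S through σ -/
def Dloc (J : Finset (Fin n)) (σ : Equiv.Perm (Fin n)) (S : Finset (Fin n)) : Finset (Fin n) :=
  Finset.univ.filter fun i => (i : ℕ) + 1 < n ∧
    (blk J (σ (finSucc i)) < blk J (σ i) ∨ (blk J (σ (finSucc i)) = blk J (σ i) ∧ σ i ∈ S))

lemma mem_Dg {f : Fin n → ℕ} {S : Finset (Fin n)} {i : Fin n} :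
    i ∈ Dg f S ↔ (i : ℕ) + 1 < n ∧ (f (finSucc i) < f i ∨ (f (finSucc i) = f i ∧ i ∈ S)) := by
  simp [Dg]

lemma mem_Dloc {σ : Equiv.Perm (Fin n)} {S : Finset (Fin n)} {i : Fin n} :
    i ∈ Dloc J σ S ↔ (i : ℕ) + 1 < n ∧
      (blk J (σ (finSucc i)) < blk J (σ i) ∨ (blk J (σ (finSucc i)) = blk J (σ i) ∧ σ i ∈ S)) := by
  simp [Dloc]

/-- Step C pointwise: descents of σ·ρ for σ ∈ R -/
lemma pDes_R_mul {σ : Equiv.Perm (Fin n)} (hσ : σ ∈ RinvM n J) (ρ : Equiv.Perm (Fin n)) :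
    pDes (σ * ρ) = Dg (fun x => blk J (σ (ρ x))) (pDes ρ) := by
  ext i
  rw [mem_pDes, mem_Dg]
  simp only [Equiv.Perm.mul_apply]
  constructor
  · rintro ⟨hi, hlt⟩
    refine ⟨hi, ?_⟩
    rcases lt_trichotomy (blk J (σ (ρ (finSucc i)))) (blk J (σ (ρ i))) with h | h | h
    · exact Or.inl h
    · refine Or.inr ⟨h, ?_⟩
      rw [mem_pDes]
      refine ⟨hi, ?_⟩
      by_contra hc
      rcases lt_or_eq_of_le (not_lt.mp hc) with h2 | h2
      · exact absurd (R_incr hσ h.symm h2) (not_lt.mpr (le_of_lt hlt))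
      · rw [h2] at hlt
        exact lt_irrefl _ hlt
    · exact absurd (blk_mono (le_of_lt hlt)) (not_le.mpr h)
  · rintro ⟨hi, hor⟩
    refine ⟨hi, ?_⟩
    rcases hor with h | ⟨h, hd⟩
    · exact lt_of_blk_lt h
    · rw [mem_pDes] at hd
      exact R_incr hσ h hd.2

/-- Step A terminal pointwise: if π preserves blocks, descents of π·σ are the local colored
descents, for σ ∈ R -/
lemma pDes_mul_R_of_blk_preserving {π : Equiv.Perm (Fin n)}
    (hπ : ∀ x, blk J (π x) = blk J x) {σ : Equiv.Perm (Fin n)} (hσ : σ ∈ RinvM n J) :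
    pDes (π * σ) = Dloc J σ (pDes π) := by
  ext i
  rw [mem_pDes, mem_Dloc]
  simp only [Equiv.Perm.mul_apply]
  constructor
  · rintro ⟨hi, hlt⟩
    refine ⟨hi, ?_⟩
    rcases lt_trichotomy (blk J (σ (finSucc i))) (blk J (σ i)) with h | h | h
    · exact Or.inl h
    · refine Or.inr ⟨h, ?_⟩
      have hc := R_consec hσ hi h.symm
      have hn : (σ i : ℕ) + 1 < n := by have := (σ (finSucc i)).isLt; omega
      have he : σ (finSucc i) = finSucc (σ i) := Fin.ext (by rw [finSucc_val hn]; exact hc)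
      rw [mem_pDes]
      exact ⟨hn, by rwa [he] at hlt⟩
    · exfalso
      have h1 : blk J (π (σ (finSucc i))) ≤ blk J (π (σ i)) := blk_mono (le_of_lt hlt)
      rw [hπ, hπ] at h1
      omega
  · rintro ⟨hi, hor⟩
    refine ⟨hi, ?_⟩
    rcases hor with h | ⟨h, hd⟩
    · apply lt_of_blk_lt
      rw [hπ, hπ]; exact h
    · rw [mem_pDes] at hd
      have hc := R_consec hσ hi h.symm
      have hn : (σ i : ℕ) + 1 < n := by have := (σ (finSucc i)).isLt; omega
      have he : σ (finSucc i) = finSucc (σ i) := Fin.ext (by rw [finSucc_val hn]; exact hc)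
      rw [he]
      exact hd.2

/-- multiset reindex utility: map over a Finset's val along an injective self-map -/
lemma map_val_reindex {α β : Type*} [DecidableEq α] (s : Finset α) (Φ : α → α)
    (hm : ∀ x ∈ s, Φ x ∈ s) (hinj : Set.InjOn Φ s)
    (F G : α → β) (hFG : ∀ x ∈ s, F x = G (Φ x)) : s.val.map F = s.val.map G := by
  have himg : s.image Φ = s := by
    apply Finset.eq_of_subset_of_card_le
    · intro y hy
      rcases Finset.mem_image.mp hy with ⟨x, hx, rfl⟩
      exact hm x hx
    · rw [Finset.card_image_of_injOn hinj]
  have hval : s.val.map Φ = s.val := by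
    have h2 : (s.image Φ).val = s.val.map Φ := by
      rw [Finset.image_val, Multiset.dedup_eq_self.mpr]
      exact Multiset.Nodup.map_on (fun x hx y hy h => hinj hx hy h) s.nodup
    rw [← h2, himg]
  calc s.val.map F = s.val.map (G ∘ Φ) := Multiset.map_congr rfl hFG
    _ = (s.val.map Φ).map G := by rw [Multiset.map_map]
    _ = s.val.map G := by rw [hval]

lemma downclosed_mem_iff {S : Finset (Fin n)} (hdc : ∀ v ∈ S, ∀ w, w ≤ v → w ∈ S) {v : Fin n} :
    v ∈ S ↔ (v : ℕ) < S.card := by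
  constructor
  · intro hv
    have hsub : Finset.Iic v ⊆ S := fun w hw => hdc v hv w (Finset.mem_Iic.mp hw)
    have := Finset.card_le_card hsub
    rw [Fin.card_Iic] at this
    omega
  · intro hv
    by_contra hc
    have hsub : S ⊆ Finset.Iio v := by
      intro w hw
      rw [Finset.mem_Iio]
      by_contra hwv
      exact hc (hdc w hw v (not_lt.mp hwv))
    have := Finset.card_le_card hsub
    rw [Fin.card_Iio] at this
    omega

lemma blk_perm_eq_of_sorted {π : Equiv.Perm (Fin n)}
    (hsort : ∀ v w : Fin n, v ≤ w → blk J (π⁻¹ v) ≤ blk J (π⁻¹ w)) :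
    ∀ x, blk J (π x) = blk J x := by
  have key : ∀ (t : ℕ) (v : Fin n), (blk J (π⁻¹ v) ≤ t ↔ blk J v ≤ t) := by
    intro t v
    set S1 := Finset.univ.filter (fun v : Fin n => blk J (π⁻¹ v) ≤ t) with hS1
    set S2 := Finset.univ.filter (fun v : Fin n => blk J v ≤ t) with hS2
    have hm1 : ∀ w : Fin n, w ∈ S1 ↔ blk J (π⁻¹ w) ≤ t := by intro w; simp [hS1]
    have hm2 : ∀ w : Fin n, w ∈ S2 ↔ blk J w ≤ t := by intro w; simp [hS2]
    have hdc1 : ∀ v ∈ S1, ∀ w, w ≤ v → w ∈ S1 := by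
      intro v hv w hwv
      rw [hm1] at *
      exact le_trans (hsort w v hwv) hv
    have hdc2 : ∀ v ∈ S2, ∀ w, w ≤ v → w ∈ S2 := by
      intro v hv w hwv
      rw [hm2] at *
      exact le_trans (blk_mono hwv) hv
    have hcard : S1.card = S2.card := by
      have : S1 = S2.image π := by
        ext w
        rw [hm1, Finset.mem_image]
        constructor
        · intro h; exact ⟨π⁻¹ w, (hm2 _).mpr h, by simp⟩
        · rintro ⟨x, hx, rfl⟩; rw [hm2] at hx; simpa using hx
      rw [this, Finset.card_image_of_injective _ π.injective]
    rw [← hm1, ← hm2, downclosed_mem_iff hdc1, downclosed_mem_iff hdc2, hcard]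
  intro x
  have h1 := (key (blk J x) (π x))
  have h2 := (key (blk J (π x)) (π x))
  simp only [Equiv.Perm.inv_def, Equiv.symm_apply_apply] at h1 h2
  have a1 := h2.mpr (le_refl _)
  have a2 := h1.mp (le_refl _)
  omega

/-- number of blk-inversions of π (with respect to values read through π⁻¹) -/
noncomputable def invC (J : Finset (Fin n)) (π : Equiv.Perm (Fin n)) : ℕ :=
  ((Finset.univ : Finset (Fin n × Fin n)).filter fun p =>
    p.1 < p.2 ∧ blk J (π⁻¹ p.2) < blk J (π⁻¹ p.1)).card

lemma invC_lt {π : Equiv.Perm (Fin n)} {a : Fin n} (ha : (a : ℕ) + 1 < n)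
    (hgt : blk J (π⁻¹ (finSucc a)) < blk J (π⁻¹ a)) :
    invC J (Equiv.swap a (finSucc a) * π) < invC J π := by
  set a' := finSucc a with ha'
  have hva : (a : ℕ) + 1 = (a' : ℕ) := (finSucc_val ha).symm
  have haa : a < a' := by rw [Fin.lt_def]; omega
  set s := Equiv.swap a a' with hs
  set T := ((Finset.univ : Finset (Fin n × Fin n)).filter fun p =>
    p.1 < p.2 ∧ blk J (π⁻¹ p.2) < blk J (π⁻¹ p.1)) with hT
  set T' := ((Finset.univ : Finset (Fin n × Fin n)).filter fun p =>
    p.1 < p.2 ∧ blk J ((s * π)⁻¹ p.2) < blk J ((s * π)⁻¹ p.1)) with hT'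
  have hinv : ∀ v, (s * π)⁻¹ v = π⁻¹ (s v) := by
    intro v
    rw [mul_inv_rev]
    simp [hs, Equiv.swap_inv]
  have hmemT : (a, a') ∈ T := by
    rw [hT, Finset.mem_filter]
    exact ⟨Finset.mem_univ _, haa, hgt⟩
  have himg : T'.image (fun p => (s p.1, s p.2)) ⊆ T.erase (a, a') := by
    intro q hq
    rcases Finset.mem_image.mp hq with ⟨p, hp, rfl⟩
    rw [hT', Finset.mem_filter] at hp
    obtain ⟨-, hor, hb⟩ := hp
    have hne1 : ¬(p.1 = a ∧ p.2 = a') := by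
      rintro ⟨e1, e2⟩
      rw [e1, e2] at hb
      rw [hinv, hinv] at hb
      simp [hs] at hb
      rw [Equiv.Perm.inv_def] at hgt
      omega
    have hne2 : ¬(p.1 = a' ∧ p.2 = a) := by
      rintro ⟨e1, e2⟩
      rw [e1, e2] at hor
      exact absurd haa (not_lt.mpr (le_of_lt hor))
    rw [Finset.mem_erase]
    constructor
    · intro he
      have e1 : s p.1 = a := congrArg Prod.fst he
      have e2 : s p.2 = a' := congrArg Prod.snd he
      have : p.1 = a' := by
        have := congrArg s e1
        simpa [hs] using this
      have : p.2 = a := by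
        have := congrArg s e2
        simpa [hs] using this
      apply hne2
      constructor <;> assumption
    · rw [hT, Finset.mem_filter]
      refine ⟨Finset.mem_univ _, ?_, ?_⟩
      · exact (swap_lt_iff hva hne1 hne2).mpr hor
      · rw [hinv, hinv] at hb
        exact hb
  have hinje : Set.InjOn (fun p : Fin n × Fin n => (s p.1, s p.2)) T' := by
    intro p hp q hq he
    have e1 : s p.1 = s q.1 := congrArg Prod.fst he
    have e2 : s p.2 = s q.2 := congrArg Prod.snd he
    exact Prod.ext (s.injective e1) (s.injective e2)
  calc invC J (Equiv.swap a (finSucc a) * π) = T'.card := rfl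
    _ = (T'.image (fun p => (s p.1, s p.2))).card := (Finset.card_image_of_injOn hinje).symm
    _ ≤ (T.erase (a, a')).card := Finset.card_le_card himg
    _ < T.card := Finset.card_erase_lt_of_mem hmemT

lemma swap_conj_identity (q : Equiv.Perm (Fin n)) (a b : Fin n) :
    (Equiv.swap a b) * q * (Equiv.swap (q⁻¹ a) (q⁻¹ b)) = q := by
  ext z
  simp only [Equiv.Perm.mul_apply]
  rcases eq_or_ne z (q⁻¹ a) with hz | hz
  · subst hz
    rw [Equiv.swap_apply_left]
    simp
  rcases eq_or_ne z (q⁻¹ b) with hz' | hz'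
  · subst hz'
    rw [Equiv.swap_apply_right]
    simp
  · have h1 : q z ≠ a := fun he => hz (by rw [← he]; simp)
    have h2 : q z ≠ b := fun he => hz' (by rw [← he]; simp)
    rw [Equiv.swap_apply_of_ne_of_ne hz hz', Equiv.swap_apply_of_ne_of_ne h1 h2]

/-- swapping values a, a+1 that are not adjacent in the word of q preserves descents -/
lemma pDes_swap_nonadj (q : Equiv.Perm (Fin n)) {a : Fin n} (ha : (a : ℕ) + 1 < n)
    (hnadj : ¬(((q⁻¹ a : Fin n) : ℕ) + 1 = ((q⁻¹ (finSucc a) : Fin n) : ℕ) ∨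
              ((q⁻¹ (finSucc a) : Fin n) : ℕ) + 1 = ((q⁻¹ a : Fin n) : ℕ))) :
    pDes (Equiv.swap a (finSucc a) * q) = pDes q := by
  push_neg at hnadj
  ext i
  rw [mem_pDes, mem_pDes]
  simp only [Equiv.Perm.mul_apply]
  refine and_congr_right fun hi => ?_
  apply swap_lt_iff (finSucc_val ha).symm
  · rintro ⟨e1, e2⟩
    have x1 : q⁻¹ a = finSucc i := by rw [← e1]; simp
    have x2 : q⁻¹ (finSucc a) = i := by rw [← e2]; simp
    apply hnadj.2
    rw [x1, x2, finSucc_val hi]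
  · rintro ⟨e1, e2⟩
    have x1 : q⁻¹ (finSucc a) = finSucc i := by rw [← e1]; simp
    have x2 : q⁻¹ a = i := by rw [← e2]; simp
    apply hnadj.1
    rw [x1, x2, finSucc_val hi]

/-- swapping values a, a+1 lying in different π-pieces preserves descents at
block-interior positions -/
lemma pDes_swap_interior {π : Equiv.Perm (Fin n)} {a : Fin n} (ha : (a : ℕ) + 1 < n)
    (hdiff : blk J (π⁻¹ a) ≠ blk J (π⁻¹ (finSucc a))) {p : Fin n} (hp : (p : ℕ) + 1 < n)
    (hbp : blk J (finSucc p) = blk J p) :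
    (p ∈ pDes (Equiv.swap a (finSucc a) * π) ↔ p ∈ pDes π) := by
  rw [mem_pDes, mem_pDes]
  simp only [Equiv.Perm.mul_apply]
  refine and_congr_right fun _ => ?_
  apply swap_lt_iff (finSucc_val ha).symm
  · rintro ⟨e1, e2⟩
    apply hdiff
    have x1 : π⁻¹ a = finSucc p := by rw [← e1]; simp
    have x2 : π⁻¹ (finSucc a) = p := by rw [← e2]; simp
    rw [x1, x2, hbp]
  · rintro ⟨e1, e2⟩
    apply hdiff
    have x1 : π⁻¹ (finSucc a) = finSucc p := by rw [← e1]; simp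
    have x2 : π⁻¹ a = p := by rw [← e2]; simp
    rw [x1, x2, hbp]

lemma Dloc_swap_eq {σ : Equiv.Perm (Fin n)} (hσ : σ ∈ RinvM n J) {π : Equiv.Perm (Fin n)}
    {a : Fin n} (ha : (a : ℕ) + 1 < n)
    (hdiff : blk J (π⁻¹ a) ≠ blk J (π⁻¹ (finSucc a))) :
    Dloc J σ (pDes (Equiv.swap a (finSucc a) * π)) = Dloc J σ (pDes π) := by
  ext i
  rw [mem_Dloc, mem_Dloc]
  refine and_congr_right fun hi => or_congr Iff.rfl (and_congr_right fun hb => ?_)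
  have hc := R_consec hσ hi hb.symm
  have hn : ((σ i : Fin n) : ℕ) + 1 < n := by have := (σ (finSucc i)).isLt; omega
  have he : σ (finSucc i) = finSucc (σ i) := Fin.ext (by rw [finSucc_val hn]; exact hc)
  have hbp : blk J (finSucc (σ i)) = blk J (σ i) := by rw [← he]; exact hb
  exact pDes_swap_interior ha hdiff hn hbp

/-- the rebalancing bijection for the swap step -/
noncomputable def PhiA (τ : Equiv.Perm (Fin n)) (a a' : Fin n) (σ : Equiv.Perm (Fin n)) :
    Equiv.Perm (Fin n) :=
  if ((((τ * σ)⁻¹ a : Fin n) : ℕ) + 1 = (((τ * σ)⁻¹ a' : Fin n) : ℕ) ∨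
      (((τ * σ)⁻¹ a' : Fin n) : ℕ) + 1 = (((τ * σ)⁻¹ a : Fin n) : ℕ))
  then σ * Equiv.swap ((τ * σ)⁻¹ a) ((τ * σ)⁻¹ a') else σ

lemma phiA_mem {τ σ : Equiv.Perm (Fin n)} (hσ : σ ∈ RinvM n J) {a a' : Fin n}
    (hd : blk J (τ⁻¹ a) ≠ blk J (τ⁻¹ a')) : PhiA τ a a' σ ∈ RinvM n J := by
  rw [PhiA]
  split_ifs with hadj
  · have hxa : σ ((τ * σ)⁻¹ a) = τ⁻¹ a := by
      rw [mul_inv_rev]; simp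
    have hxa' : σ ((τ * σ)⁻¹ a') = τ⁻¹ a' := by
      rw [mul_inv_rev]; simp
    rcases hadj with h | h
    · exact R_mul_swap_mem hσ h (by rw [hxa, hxa']; exact hd)
    · rw [Equiv.swap_comm]
      exact R_mul_swap_mem hσ h (by rw [hxa, hxa']; exact hd.symm)
  · exact hσ

lemma phiA_pdes (τ σ : Equiv.Perm (Fin n)) {a : Fin n} (ha : (a : ℕ) + 1 < n) :
    pDes (τ * σ) = pDes ((Equiv.swap a (finSucc a) * τ) * PhiA τ a (finSucc a) σ) := by
  rw [PhiA]
  split_ifs with hadj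
  · have hkey : (Equiv.swap a (finSucc a) * τ) * (σ * Equiv.swap ((τ * σ)⁻¹ a) ((τ * σ)⁻¹ (finSucc a))) = τ * σ := by
      have := swap_conj_identity (τ * σ) a (finSucc a)
      calc (Equiv.swap a (finSucc a) * τ) * (σ * Equiv.swap ((τ * σ)⁻¹ a) ((τ * σ)⁻¹ (finSucc a)))
          = (Equiv.swap a (finSucc a)) * (τ * σ) * (Equiv.swap ((τ * σ)⁻¹ a) ((τ * σ)⁻¹ (finSucc a))) := by
            group
        _ = τ * σ := this
    rw [hkey]
  · rw [mul_assoc]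
    exact (pDes_swap_nonadj (τ * σ) ha hadj).symm

lemma phiA_inv (τ σ : Equiv.Perm (Fin n)) (a a' : Fin n) :
    PhiA (Equiv.swap a a' * τ) a a' (PhiA τ a a' σ) = σ := by
  by_cases hadj : ((((τ * σ)⁻¹ a : Fin n) : ℕ) + 1 = (((τ * σ)⁻¹ a' : Fin n) : ℕ) ∨
      (((τ * σ)⁻¹ a' : Fin n) : ℕ) + 1 = (((τ * σ)⁻¹ a : Fin n) : ℕ))
  · have hinner : PhiA τ a a' σ = σ * Equiv.swap ((τ * σ)⁻¹ a) ((τ * σ)⁻¹ a') := by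
      rw [PhiA, if_pos hadj]
    have hkey : (Equiv.swap a a' * τ) * (σ * Equiv.swap ((τ * σ)⁻¹ a) ((τ * σ)⁻¹ a')) = τ * σ := by
      have h := swap_conj_identity (τ * σ) a a'
      calc (Equiv.swap a a' * τ) * (σ * Equiv.swap ((τ * σ)⁻¹ a) ((τ * σ)⁻¹ a'))
          = (Equiv.swap a a') * (τ * σ) * (Equiv.swap ((τ * σ)⁻¹ a) ((τ * σ)⁻¹ a')) := by group
        _ = τ * σ := h
    rw [hinner, PhiA, hkey, if_pos hadj, mul_assoc, Equiv.swap_mul_self, mul_one]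
  · have hinner : PhiA τ a a' σ = σ := by rw [PhiA, if_neg hadj]
    rw [hinner, PhiA]
    have e0 : Equiv.swap a a' * τ * σ = Equiv.swap a a' * (τ * σ) := by rw [mul_assoc]
    have e1 : (Equiv.swap a a' * τ * σ)⁻¹ a = (τ * σ)⁻¹ a' := by
      rw [e0, mul_inv_rev, Equiv.swap_inv]
      simp [Equiv.Perm.mul_apply]
    have e2 : (Equiv.swap a a' * τ * σ)⁻¹ a' = (τ * σ)⁻¹ a := by
      rw [e0, mul_inv_rev, Equiv.swap_inv]
      simp [Equiv.Perm.mul_apply]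
    rw [if_neg]
    rw [e1, e2]
    tauto

lemma stepA_swap (π : Equiv.Perm (Fin n)) {a : Fin n} (ha : (a : ℕ) + 1 < n)
    (hdiff : blk J (π⁻¹ a) ≠ blk J (π⁻¹ (finSucc a))) :
    (RinvM n J).map (fun σ => pDes (π * σ)) =
    (RinvM n J).map (fun σ => pDes ((Equiv.swap a (finSucc a) * π) * σ)) := by
  apply map_val_reindex (Finset.univ.filter fun σ : Equiv.Perm (Fin n) => pDes σ⁻¹ ⊆ J)
    (PhiA π a (finSucc a))
  · intro σ hσ
    have : σ ∈ RinvM n J := hσ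
    have := phiA_mem (J := J) this hdiff
    exact this
  · intro σ1 h1 σ2 h2 he
    have e1 := phiA_inv π σ1 a (finSucc a)
    have e2 := phiA_inv π σ2 a (finSucc a)
    rw [← e1, ← e2, he]
  · intro σ hσ
    exact phiA_pdes π σ ha

lemma lemmaA_aux : ∀ (k : ℕ) (π : Equiv.Perm (Fin n)), invC J π ≤ k →
    (RinvM n J).map (fun σ => pDes (π * σ)) =
      (RinvM n J).map (fun σ => Dloc J σ (pDes π)) := by
  have hbadpair : ∀ (π : Equiv.Perm (Fin n)) (a : Fin n), (a : ℕ) + 1 < n →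
      blk J (π⁻¹ (finSucc a)) < blk J (π⁻¹ a) → 0 < invC J π := by
    intro π a ha hgt
    apply Finset.card_pos.mpr
    refine ⟨(a, finSucc a), ?_⟩
    rw [Finset.mem_filter]
    refine ⟨Finset.mem_univ _, ?_, ?_⟩
    · show a < finSucc a
      rw [Fin.lt_def, finSucc_val ha]
      omega
    · exact hgt
  have terminal : ∀ (π : Equiv.Perm (Fin n)),
      (¬ ∃ a : Fin n, ((a : ℕ) + 1 < n) ∧ blk J (π⁻¹ (finSucc a)) < blk J (π⁻¹ a)) →
      (RinvM n J).map (fun σ => pDes (π * σ)) =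
        (RinvM n J).map (fun σ => Dloc J σ (pDes π)) := by
    intro π hex
    push_neg at hex
    have hadj : ∀ i : Fin n, (i : ℕ) + 1 < n → blk J (π⁻¹ i) ≤ blk J (π⁻¹ (finSucc i)) := by
      intro i hi
      have := hex i hi
      omega
    have hblk := blk_perm_eq_of_sorted (mono_of_adj hadj)
    apply Multiset.map_congr rfl
    intro σ hσ
    exact pDes_mul_R_of_blk_preserving hblk hσ
  intro k
  induction k with
  | zero =>
    intro π hle
    apply terminal
    rintro ⟨a, ha, hgt⟩
    have := hbadpair π a ha hgt
    omega
  | succ m ih =>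
    intro π hle
    by_cases hex : ∃ a : Fin n, ((a : ℕ) + 1 < n) ∧ blk J (π⁻¹ (finSucc a)) < blk J (π⁻¹ a)
    · obtain ⟨a, ha, hgt⟩ := hex
      have hdiff : blk J (π⁻¹ a) ≠ blk J (π⁻¹ (finSucc a)) := by omega
      have hlt : invC J (Equiv.swap a (finSucc a) * π) < invC J π := invC_lt ha hgt
      have h2 := ih (Equiv.swap a (finSucc a) * π) (by omega)
      rw [stepA_swap π ha hdiff, h2]
      apply Multiset.map_congr rfl
      intro σ hσ
      exact Dloc_swap_eq hσ ha hdiff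
    · exact terminal π hex

lemma lemmaA (π : Equiv.Perm (Fin n)) :
    (RinvM n J).map (fun σ => pDes (π * σ)) =
      (RinvM n J).map (fun σ => Dloc J σ (pDes π)) :=
  lemmaA_aux (invC J π) π (le_refl _)

section OSP

lemma blk_surj (hn : 0 < n) (hJ : ∀ i ∈ J, (i : ℕ) + 1 < n) :
    ∀ t : ℕ, t ≤ J.card → ∃ v : Fin n, blk J v = t := by
  intro t
  induction t with
  | zero =>
    intro _
    refine ⟨⟨0, hn⟩, ?_⟩
    rw [blk, Finset.card_eq_zero, Finset.filter_eq_empty_iff]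
    intro j _
    simp [Fin.lt_def]
  | succ m ih =>
    intro hm
    obtain ⟨v, hv⟩ := ih (by omega)
    set F := J.filter (fun j => ¬ j < v) with hF
    have hFcard : (J.filter (fun j => j < v)).card + F.card = J.card :=
      Finset.card_filter_add_card_filter_not _
    have hne : F.Nonempty := by
      rw [← Finset.card_pos]
      have : (J.filter (fun j => j < v)).card = m := hv
      omega
    set j0 := F.min' hne with hj0
    have hj0F : j0 ∈ F := F.min'_mem hne
    have hj0J : j0 ∈ J := (Finset.mem_filter.mp hj0F).1
    have hj0v : v ≤ j0 := not_lt.mp (Finset.mem_filter.mp hj0F).2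
    have hj0n : (j0 : ℕ) + 1 < n := hJ j0 hj0J
    refine ⟨finSucc j0, ?_⟩
    rw [blk_finSucc_of_mem hj0n hj0J]
    have hfeq : J.filter (fun j => j < j0) = J.filter (fun j => j < v) := by
      ext j
      rw [Finset.mem_filter, Finset.mem_filter]
      refine and_congr_right fun hj => ?_
      constructor
      · intro hjlt
        by_contra hjv
        have hjF : j ∈ F := Finset.mem_filter.mpr ⟨hj, hjv⟩
        exact absurd (F.min'_le j hjF) (not_le.mpr hjlt)
      · intro hjv
        exact lt_of_lt_of_le hjv hj0v
    have : blk J j0 = m := by rw [blk, hfeq]; exact hv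
    omega

/-- the ordered set partition attached to σ ∈ R : fibers of blk ∘ σ -/
noncomputable def Ulist (J : Finset (Fin n)) (σ : Equiv.Perm (Fin n)) : List (Finset (Fin n)) :=
  (List.range (J.card + 1)).map fun t => Finset.univ.filter fun x => blk J (σ x) = t

lemma Ulist_def (σ : Equiv.Perm (Fin n)) :
    Ulist J σ = (List.range (J.card + 1)).map
      (fun t => Finset.univ.filter fun x => blk J (σ x) = t) := rfl

lemma Ulist_length (σ : Equiv.Perm (Fin n)) : (Ulist J σ).length = J.card + 1 := by
  simp [Ulist]

lemma Ulist_get (σ : Equiv.Perm (Fin n)) (i : ℕ) (h : i < (Ulist J σ).length) :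
    (Ulist J σ).get ⟨i, h⟩ = Finset.univ.filter fun x => blk J (σ x) = i := by
  simp [Ulist]

lemma Ulist_mem_iff (σ : Equiv.Perm (Fin n)) (s : Finset (Fin n)) :
    s ∈ Ulist J σ ↔ ∃ t, t ≤ J.card ∧ s = Finset.univ.filter fun x => blk J (σ x) = t := by
  simp only [Ulist, List.mem_map, List.mem_range]
  constructor
  · rintro ⟨t, ht, rfl⟩
    exact ⟨t, by omega, rfl⟩
  · rintro ⟨t, ht, rfl⟩
    exact ⟨t, by omega, rfl⟩

lemma Ulist_OSPn (hn : 0 < n) (hJ : ∀ i ∈ J, (i : ℕ) + 1 < n) (σ : Equiv.Perm (Fin n)) :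
    OSPn n (Ulist J σ) := by
  refine ⟨?_, ?_, ?_⟩
  · rw [Ulist, List.pairwise_map]
    have hnd : (List.range (J.card + 1)).Pairwise (· ≠ ·) := List.nodup_range
    apply hnd.imp
    intro t t' hne
    rw [Finset.disjoint_left]
    intro x hx hx'
    rw [Finset.mem_filter] at hx hx'
    exact hne (hx.2 ▸ hx'.2 ▸ rfl)
  · intro s hs
    obtain ⟨t, ht, rfl⟩ := (Ulist_mem_iff σ s).mp hs
    obtain ⟨v, hv⟩ := blk_surj hn hJ t ht
    exact ⟨σ⁻¹ v, by simp [hv]⟩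
  · intro x
    refine ⟨Finset.univ.filter fun y => blk J (σ y) = blk J (σ x), ?_, by simp⟩
    rw [Ulist_mem_iff]
    exact ⟨blk J (σ x), blk_le_card _, rfl⟩

end OSP

lemma Ulist_take_sum (σ : Equiv.Perm (Fin n)) :
    ∀ i : ℕ, i ≤ J.card + 1 →
    ((((Ulist J σ).map Finset.card).take i).sum) =
      (Finset.univ.filter fun x => blk J (σ x) < i).card := by
  intro i
  induction i with
  | zero => intro _; simp
  | succ m ih =>
    intro hm
    have hlen : m < ((Ulist J σ).map Finset.card).length := by
      rw [List.length_map, Ulist_length]; omega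
    rw [List.sum_take_succ _ m hlen, ih (by omega)]
    have hget : ((Ulist J σ).map Finset.card)[m]'(hlen) =
        (Finset.univ.filter fun x => blk J (σ x) = m).card := by
      simp only [List.getElem_map]
      congr 1
      simp only [Ulist_def, List.getElem_map, List.getElem_range]
    rw [hget]
    have hsplit : (Finset.univ.filter fun x => blk J (σ x) < m + 1) =
        (Finset.univ.filter fun x => blk J (σ x) < m) ∪
        (Finset.univ.filter fun x => blk J (σ x) = m) := by
      rw [← Finset.filter_or]
      apply Finset.filter_congr
      intro x _
      omega
    rw [hsplit, Finset.card_union_of_disjoint]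
    rw [Finset.disjoint_filter]
    intro x _ h1 h2
    omega

lemma card_filter_blk_lt (σ : Equiv.Perm (Fin n)) (i : ℕ) :
    (Finset.univ.filter fun x => blk J (σ x) < i).card =
      (Finset.univ.filter fun v : Fin n => blk J v < i).card := by
  have : (Finset.univ.filter fun v : Fin n => blk J v < i) =
      (Finset.univ.filter fun x => blk J (σ x) < i).image σ := by
    ext v
    simp only [Finset.mem_filter, Finset.mem_image, Finset.mem_univ, true_and]
    constructor
    · intro h
      exact ⟨σ⁻¹ v, by simpa using h, by simp⟩
    · rintro ⟨x, hx, rfl⟩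
      exact hx
  rw [this, Finset.card_image_of_injective _ σ.injective]

lemma mem_blk_lt_iff (i : ℕ) {v : Fin n} :
    v ∈ (Finset.univ.filter fun v : Fin n => blk J v < i) ↔
      (v : ℕ) < (Finset.univ.filter fun v : Fin n => blk J v < i).card := by
  apply downclosed_mem_iff
  intro v hv w hwv
  rw [Finset.mem_filter] at *
  exact ⟨Finset.mem_univ _, lt_of_le_of_lt (blk_mono hwv) hv.2⟩

lemma IsDelta_Ulist {σ : Equiv.Perm (Fin n)} (hσ : σ ∈ RinvM n J) :
    IsDelta ((Ulist J σ).map Finset.card) (Ulist J σ) σ := by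
  intro i h
  have hi : i < J.card + 1 := by rwa [Ulist_length] at h
  rw [Ulist_get σ i h]
  constructor
  · intro x hx y hy hxy
    rw [Finset.mem_filter] at hx hy
    exact R_incr hσ (by rw [hx.2, hy.2]) hxy
  · intro x hx
    rw [Finset.mem_filter] at hx
    constructor
    · rw [Ulist_take_sum σ i (by omega), card_filter_blk_lt σ i]
      by_contra hc
      push_neg at hc
      have h2 : σ x ∈ (Finset.univ.filter fun v : Fin n => blk J v < i) :=
        (mem_blk_lt_iff i).mpr hc
      rw [Finset.mem_filter] at h2
      omega
    · rw [Ulist_take_sum σ (i+1) (by omega), card_filter_blk_lt σ (i+1)]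
      rw [← mem_blk_lt_iff (i+1), Finset.mem_filter]
      exact ⟨Finset.mem_univ _, by omega⟩

lemma Ustar_Ulist (σ : Equiv.Perm (Fin n)) (u : Fin n) :
    u ∈ Ustar n (Ulist J σ) ↔
      ((u : ℕ) + 1 < n ∧ blk J (σ u) = blk J (σ (finSucc u))) := by
  rw [Ustar, Finset.mem_filter]
  simp only [Finset.mem_univ, true_and]
  constructor
  · rintro ⟨hu, s, hs, hus, hsus⟩
    obtain ⟨t, ht, rfl⟩ := (Ulist_mem_iff σ s).mp hs
    rw [Finset.mem_filter] at hus hsus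
    exact ⟨hu, by rw [hus.2, hsus.2]⟩
  · rintro ⟨hu, hb⟩
    refine ⟨hu, Finset.univ.filter fun x => blk J (σ x) = blk J (σ u), ?_, by simp, ?_⟩
    · rw [Ulist_mem_iff]
      exact ⟨blk J (σ u), blk_le_card _, rfl⟩
    · rw [Finset.mem_filter]
      exact ⟨Finset.mem_univ _, hb.symm⟩

lemma stepB {B : Multiset (Equiv.Perm (Fin n))} (hB : DSymm n B) (hn : 0 < n)
    (hJ : ∀ i ∈ J, (i : ℕ) + 1 < n) {σ : Equiv.Perm (Fin n)} (hσ : σ ∈ RinvM n J) :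
    B.map (fun π => Dloc J σ (pDes π)) =
      B.map (fun ρ => Dg (fun x => blk J (σ x)) (pDes ρ)) := by
  obtain ⟨Ψ, hΨB, hΨ⟩ := hB (Ulist J σ) (Ulist_OSPn hn hJ σ) σ (IsDelta_Ulist hσ)
  conv_lhs => rw [← hΨB]
  rw [Multiset.map_map]
  apply Multiset.map_congr rfl
  intro ρ hρ
  show Dloc J σ (pDes (Ψ ρ)) = Dg (fun x => blk J (σ x)) (pDes ρ)
  ext i
  rw [mem_Dloc, mem_Dg]
  refine and_congr_right fun hi => or_congr Iff.rfl (and_congr_right fun hb => ?_)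
  have hu : i ∈ Ustar n (Ulist J σ) := (Ustar_Ulist σ i).mpr ⟨hi, hb.symm⟩
  exact (hΨ i hu ρ hρ).symm

/-- adjacent transpositions -/
def AdjSet (n : ℕ) : Set (Equiv.Perm (Fin n)) :=
  {s | ∃ a : Fin n, (a : ℕ) + 1 < n ∧ s = Equiv.swap a (finSucc a)}

lemma swap_mem_closure_adj : ∀ (k : ℕ) (x y : Fin n), (y : ℕ) = (x : ℕ) + (k + 1) →
    Equiv.swap x y ∈ Subgroup.closure (AdjSet n) := by
  intro k
  induction k with
  | zero =>
    intro x y hy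
    have hx : (x : ℕ) + 1 < n := by have := y.isLt; omega
    have he : y = finSucc x := Fin.ext (by rw [finSucc_val hx]; omega)
    rw [he]
    exact Subgroup.subset_closure ⟨x, hx, rfl⟩
  | succ m ih =>
    intro x y hy
    have hyn := y.isLt
    set y' : Fin n := ⟨(x : ℕ) + (m + 1), by omega⟩ with hy'
    have hy'v : (y' : ℕ) = (x : ℕ) + (m + 1) := rfl
    have h1 : Equiv.swap x y' ∈ Subgroup.closure (AdjSet n) := ih x y' hy'v.symm
    have hy'n : ((y' : Fin n) : ℕ) + 1 < n := by omega
    have hee : y = finSucc y' := Fin.ext (by rw [finSucc_val hy'n, hy'v]; omega)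
    have h2 : Equiv.swap y' y ∈ Subgroup.closure (AdjSet n) := by
      rw [hee]
      exact Subgroup.subset_closure ⟨y', hy'n, rfl⟩
    have hxy' : x ≠ y' := by
      intro he
      have := congrArg Fin.val he
      rw [hy'v] at this
      omega
    have hxy : x ≠ y := by
      intro he
      have := congrArg Fin.val he
      omega
    have key := Equiv.swap_mul_swap_mul_swap hxy' hxy
    have : Equiv.swap x y = Equiv.swap y' y * Equiv.swap x y' * Equiv.swap y' y := by
      rw [key, Equiv.swap_comm]
    rw [this]
    exact Subgroup.mul_mem _ (Subgroup.mul_mem _ h2 h1) h2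

lemma closure_adj_top : Subgroup.closure (AdjSet n) = ⊤ := by
  rw [eq_top_iff, ← Equiv.Perm.closure_isSwap]
  apply (Subgroup.closure_le _).mpr
  rintro s ⟨x, y, hxy, rfl⟩
  rcases lt_or_gt_of_ne hxy with h | h
  · rw [Fin.lt_def] at h
    exact swap_mem_closure_adj ((y : ℕ) - (x : ℕ) - 1) x y (by omega)
  · simp only [gt_iff_lt, Fin.lt_def] at h
    rw [Equiv.swap_comm]
    exact swap_mem_closure_adj ((x : ℕ) - (y : ℕ) - 1) y x (by omega)

/-- the reindexing property for Step C -/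
def Pprop (J : Finset (Fin n)) (ρ : Equiv.Perm (Fin n)) : Prop :=
  ∃ Φ : Equiv.Perm (Fin n) → Equiv.Perm (Fin n),
    (∀ σ, σ ∈ RinvM n J → Φ σ ∈ RinvM n J) ∧
    (Set.InjOn Φ {σ | σ ∈ RinvM n J}) ∧
    (∀ σ, σ ∈ RinvM n J → ∀ x, blk J (Φ σ x) = blk J (σ (ρ x)))

lemma Pprop_one : Pprop J 1 := by
  refine ⟨id, fun σ h => h, fun a _ b _ h => h, fun σ _ x => ?_⟩
  simp

lemma Pprop_mul {ρ₁ ρ₂ : Equiv.Perm (Fin n)} (h1 : Pprop J ρ₁) (h2 : Pprop J ρ₂) :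
    Pprop J (ρ₁ * ρ₂) := by
  obtain ⟨Φ₁, m1, i1, b1⟩ := h1
  obtain ⟨Φ₂, m2, i2, b2⟩ := h2
  refine ⟨Φ₂ ∘ Φ₁, fun σ h => m2 _ (m1 _ h), ?_, ?_⟩
  · intro a ha b hb h
    exact i1 ha hb (i2 (m1 _ ha) (m1 _ hb) h)
  · intro σ hσ x
    calc blk J (Φ₂ (Φ₁ σ) x) = blk J (Φ₁ σ (ρ₂ x)) := b2 _ (m1 _ hσ) x
      _ = blk J (σ (ρ₁ (ρ₂ x))) := b1 _ hσ (ρ₂ x)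
      _ = blk J (σ ((ρ₁ * ρ₂) x)) := rfl

lemma Pprop_inv {ρ : Equiv.Perm (Fin n)} (h : Pprop J ρ) : Pprop J ρ⁻¹ := by
  classical
  obtain ⟨Φ, m, inj, b⟩ := h
  set Rfin : Finset (Equiv.Perm (Fin n)) :=
    Finset.univ.filter fun σ : Equiv.Perm (Fin n) => pDes σ⁻¹ ⊆ J with hRfin
  have hmem : ∀ σ, σ ∈ RinvM n J ↔ σ ∈ Rfin := fun σ => Iff.rfl
  have himg : Rfin.image Φ = Rfin := by
    apply Finset.eq_of_subset_of_card_le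
    · intro y hy
      rcases Finset.mem_image.mp hy with ⟨x, hx, rfl⟩
      exact (hmem _).mp (m x ((hmem _).mpr hx))
    · rw [Finset.card_image_of_injOn (fun a ha b hb he => inj ((hmem _).mpr ha) ((hmem _).mpr hb) he)]
  have hsurj : ∀ σ, σ ∈ RinvM n J → ∃ τ, τ ∈ RinvM n J ∧ Φ τ = σ := by
    intro σ hσ
    have : σ ∈ Rfin.image Φ := by rw [himg]; exact (hmem _).mp hσ
    rcases Finset.mem_image.mp this with ⟨τ, hτ, he⟩
    exact ⟨τ, (hmem _).mpr hτ, he⟩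
  refine ⟨fun σ => if h : σ ∈ RinvM n J then (hsurj σ h).choose else σ, ?_, ?_, ?_⟩
  · intro σ hσ
    dsimp only
    rw [dif_pos hσ]
    exact (hsurj σ hσ).choose_spec.1
  · intro a ha b hb he
    simp only [Set.mem_setOf_eq] at ha hb
    dsimp only at he
    rw [dif_pos ha, dif_pos hb] at he
    have e1 := (hsurj a ha).choose_spec.2
    have e2 := (hsurj b hb).choose_spec.2
    rw [← e1, ← e2, he]
  · intro σ hσ x
    dsimp only
    rw [dif_pos hσ]
    obtain ⟨hτm, hτe⟩ := (hsurj σ hσ).choose_spec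
    set τ := (hsurj σ hσ).choose
    have := b τ hτm (ρ⁻¹ x)
    rw [hτe] at this
    have h2 : ρ (ρ⁻¹ x) = x := by simp
    rw [h2] at this
    exact this.symm

lemma Pprop_gen {a : Fin n} (ha : (a : ℕ) + 1 < n) : Pprop J (Equiv.swap a (finSucc a)) := by
  set a' := finSucc a with ha'
  have hva : (a : ℕ) + 1 = (a' : ℕ) := (finSucc_val ha).symm
  set Φ : Equiv.Perm (Fin n) → Equiv.Perm (Fin n) := fun σ =>
    if blk J (σ a) = blk J (σ a') then σ else σ * Equiv.swap a a' with hΦ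
  have hΦeq : ∀ σ, Φ σ = if blk J (σ a) = blk J (σ a') then σ else σ * Equiv.swap a a' :=
    fun _ => rfl
  have hm : ∀ σ, σ ∈ RinvM n J → Φ σ ∈ RinvM n J := by
    intro σ hσ
    rw [hΦeq]
    split_ifs with hb
    · exact hσ
    · exact R_mul_swap_mem hσ hva hb
  have hinvol : ∀ σ, Φ (Φ σ) = σ := by
    intro σ
    by_cases hb : blk J (σ a) = blk J (σ a')
    · have e1 : Φ σ = σ := by rw [hΦeq, if_pos hb]
      rw [e1, hΦeq, if_pos hb]
    · have e1 : Φ σ = σ * Equiv.swap a a' := by rw [hΦeq, if_neg hb]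
      have hb2 : ¬ blk J ((σ * Equiv.swap a a') a) = blk J ((σ * Equiv.swap a a') a') := by
        simp only [Equiv.Perm.mul_apply, Equiv.swap_apply_left, Equiv.swap_apply_right]
        exact fun he => hb he.symm
      rw [e1, hΦeq, if_neg hb2, mul_assoc, Equiv.swap_mul_self, mul_one]
  refine ⟨Φ, hm, ?_, ?_⟩
  · intro x _ y _ he
    rw [← hinvol x, he, hinvol]
  · intro σ hσ x
    rw [hΦeq]
    by_cases hb : blk J (σ a) = blk J (σ a')
    · rw [if_pos hb]
      rcases eq_or_ne x a with rfl | hxa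
      · rw [Equiv.swap_apply_left]; exact hb
      rcases eq_or_ne x a' with rfl | hxa'
      · rw [Equiv.swap_apply_right]; exact hb.symm
      · rw [Equiv.swap_apply_of_ne_of_ne hxa hxa']
    · rw [if_neg hb]
      rfl

lemma Pprop_all (ρ : Equiv.Perm (Fin n)) : Pprop J ρ := by
  have hmem : ρ ∈ Subgroup.closure (AdjSet n) := by
    rw [closure_adj_top]; trivial
  induction hmem using Subgroup.closure_induction with
  | mem s hs =>
    obtain ⟨a, ha, rfl⟩ := hs
    exact Pprop_gen ha
  | one => exact Pprop_one
  | mul _ _ _ _ h1 h2 => exact Pprop_mul h1 h2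
  | inv _ _ h => exact Pprop_inv h

lemma stepC2 (ρ : Equiv.Perm (Fin n)) (S : Finset (Fin n)) :
    (RinvM n J).map (fun σ => Dg (fun x => blk J (σ (ρ x))) S) =
      (RinvM n J).map (fun σ => Dg (fun x => blk J (σ x)) S) := by
  obtain ⟨Φ, m, inj, b⟩ := Pprop_all (J := J) ρ
  apply map_val_reindex (Finset.univ.filter fun σ : Equiv.Perm (Fin n) => pDes σ⁻¹ ⊆ J) Φ
  · intro σ hσ
    exact m σ hσ
  · intro x hx y hy he
    exact inj hx hy he
  · intro σ hσ
    congr 1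
    funext x
    exact (b σ hσ x).symm

lemma perm_fin_zero_eq_one (π : Equiv.Perm (Fin 0)) : π = 1 :=
  Equiv.ext (fun x => x.elim0)

lemma mprod_card {m : ℕ} (A C : Multiset (Equiv.Perm (Fin m))) :
    Multiset.card (mprod A C) = Multiset.card A * Multiset.card C := by
  simp only [mprod, Multiset.card_bind, Function.comp, Multiset.card_map]
  rw [Multiset.map_const', Multiset.sum_replicate, smul_eq_mul]

theorem dsymm_commutes_main (n : ℕ) (B : Multiset (Equiv.Perm (Fin n))) (hB : DSymm n B)
    (J : Finset (Fin n)) (hJ : ∀ i ∈ J, (i : ℕ) + 1 < n) :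
    (mprod B (RinvM n J)).map pDes = (mprod (RinvM n J) B).map pDes := by
  rcases Nat.eq_zero_or_pos n with hn0 | hn
  · subst hn0
    have he : mprod B (RinvM 0 J) = mprod (RinvM 0 J) B := by
      have h1 : mprod B (RinvM 0 J) =
          Multiset.replicate (Multiset.card (mprod B (RinvM 0 J))) 1 := by
        rw [Multiset.eq_replicate_card]
        intro b _
        exact perm_fin_zero_eq_one b
      have h2 : mprod (RinvM 0 J) B =
          Multiset.replicate (Multiset.card (mprod (RinvM 0 J) B)) 1 := by
        rw [Multiset.eq_replicate_card]
        intro b _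
        exact perm_fin_zero_eq_one b
      rw [h1, h2, mprod_card, mprod_card, Nat.mul_comm]
    rw [he]
  · calc (mprod B (RinvM n J)).map pDes
        = B.bind (fun π => (RinvM n J).map (fun σ => pDes (π * σ))) := by
          rw [mprod, Multiset.map_bind]
          simp only [Multiset.map_map, Function.comp]
      _ = B.bind (fun π => (RinvM n J).map (fun σ => Dloc J σ (pDes π))) :=
          Multiset.bind_congr (fun π _ => lemmaA π)
      _ = (RinvM n J).bind (fun σ => B.map (fun π => Dloc J σ (pDes π))) :=
          Multiset.bind_map_comm _ _
      _ = (RinvM n J).bind (fun σ => B.map (fun ρ => Dg (fun x => blk J (σ x)) (pDes ρ))) :=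
          Multiset.bind_congr (fun σ hσ => stepB hB hn hJ hσ)
      _ = B.bind (fun ρ => (RinvM n J).map (fun σ => Dg (fun x => blk J (σ x)) (pDes ρ))) :=
          (Multiset.bind_map_comm _ _).symm
      _ = B.bind (fun ρ => (RinvM n J).map (fun σ => Dg (fun x => blk J (σ (ρ x))) (pDes ρ))) :=
          Multiset.bind_congr (fun ρ _ => (stepC2 ρ (pDes ρ)).symm)
      _ = B.bind (fun ρ => (RinvM n J).map (fun σ => pDes (σ * ρ))) := by
          apply Multiset.bind_congr
          intro ρ _
          apply Multiset.map_congr rfl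
          intro σ hσ
          exact (pDes_R_mul hσ ρ).symm
      _ = (RinvM n J).bind (fun σ => B.map (fun ρ => pDes (σ * ρ))) :=
          Multiset.bind_map_comm _ _
      _ = (mprod (RinvM n J) B).map pDes := by
          rw [mprod, Multiset.map_bind]
          simp only [Multiset.map_map, Function.comp]

end DSP


/-- A `D`-symmetric multiset is `D`-commutative with all inverse
`J`-classes: `B·R_J⁻¹ ≡ R_J⁻¹·B` for every `J ⊆ [n-1]`. -/
theorem dsymm_commutes (n : ℕ) (B : Multiset (Equiv.Perm (Fin n))) (hB : DSymm n B)
    (J : Finset (Fin n)) (hJ : ∀ i ∈ J, (i : ℕ) + 1 < n) :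
    (mprod B (RinvM n J)).map pDes = (mprod (RinvM n J) B).map pDes :=
  DSP.dsymm_commutes_main n B hB J hJ
end

section
/- Every conjugacy class C of the symmetric group S_n is a symmetric set, i.e., Q(C) = Σ_{π∈C} F_{Des(π),n} is a symmetric function. -/
open scoped Classical

/-- Gessel's fundamental quasisymmetric function `F_{J,n}` in variables `x_0, x_1, …`,
as a formal power series: the coefficient of a monomial with exponent vector `d` is the
number of weakly increasing maps `f : Fin n → ℕ`, strict at each position of `J`,
whose fibers have the sizes prescribed by `d`. -/
noncomputable def FQ (n : ℕ) (J : Finset (Fin n)) : MvPowerSeries ℕ ℚ :=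
  fun d => (Nat.card {f : Fin n → ℕ //
      (∀ i j : Fin n, i ≤ j → f i ≤ f j) ∧
      (∀ i : Fin n, (i : ℕ) + 1 < n → i ∈ J → f i < f (finSucc i)) ∧
      (∀ k : ℕ, (Finset.univ.filter fun i => f i = k).card = d k)} : ℚ)

/-- `Q(B) = Σ_{π ∈ B} F_{Des(π),n}`. -/
noncomputable def QB (n : ℕ) (B : Multiset (Equiv.Perm (Fin n))) : MvPowerSeries ℕ ℚ :=
  (B.map fun π => FQ n (pDes π)).sum

/-- A power series in the variables `x_0, x_1, …` is symmetric if it is invariant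
under every permutation of the variables. -/
def IsSymmPS (F : MvPowerSeries ℕ ℚ) : Prop :=
  ∀ (e : Equiv.Perm ℕ) (d : ℕ →₀ ℕ),
    MvPowerSeries.coeff (R := ℚ) (Finsupp.equivMapDomain e d) F = MvPowerSeries.coeff (R := ℚ) d F

namespace GR

open Equiv Tuple

variable {n : ℕ}

/-- The sorting key `(w j, j)`. -/
def kw (w : Fin n → ℕ) : Fin n → ℕ ×ₗ Fin n := fun j => toLex (w j, j)

lemma kw_injective (w : Fin n → ℕ) : Function.Injective (kw w) := by
  intro a b h
  have := congrArg (fun p => (ofLex p).2) h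
  simpa [kw] using this

/-- `σ` sorts `w` (with position tie-breaking). -/
def Compat (w : Fin n → ℕ) (σ : Equiv.Perm (Fin n)) : Prop := StrictMono (kw w ∘ σ)

noncomputable def sortK (w : Fin n → ℕ) : Equiv.Perm (Fin n) := Tuple.sort (kw w)

lemma compat_sortK (w : Fin n → ℕ) : Compat w (sortK w) :=
  (Tuple.monotone_sort (kw w)).strictMono_of_injective
    ((kw_injective w).comp (Equiv.injective _))

lemma compat_unique {w : Fin n → ℕ} {σ : Equiv.Perm (Fin n)} (h : Compat w σ) :
    σ = sortK w := by
  rw [sortK, Tuple.eq_sort_iff]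
  refine ⟨h.monotone, fun i j hij hf => ?_⟩
  exact absurd (Equiv.injective σ (kw_injective w hf)) hij.ne

/-- The infinite word read from `a` along `σ`. -/
def Wd (σ : Equiv.Perm (Fin n)) (w : Fin n → ℕ) (a : Fin n) : ℕ → ℕ := fun t => w ((σ ^ t) a)

lemma Wd_zero (σ : Equiv.Perm (Fin n)) (w : Fin n → ℕ) (a : Fin n) : Wd σ w a 0 = w a := by
  simp [Wd]

lemma Wd_succ (σ : Equiv.Perm (Fin n)) (w : Fin n → ℕ) (a : Fin n) (t : ℕ) :
    Wd σ w a (t + 1) = Wd σ w (σ a) t := by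
  simp only [Wd, pow_succ, Equiv.Perm.mul_apply]

lemma Wd_succ' (σ : Equiv.Perm (Fin n)) (w : Fin n → ℕ) (a : Fin n) :
    (fun t => Wd σ w a (t + 1)) = Wd σ w (σ a) := by
  funext t; exact Wd_succ σ w a t

/-- Lex `<` on sequences, unfolded. -/
lemma lex_lt_iff {U V : ℕ → ℕ} :
    toLex U < toLex V ↔ ∃ t, (∀ s, s < t → U s = V s) ∧ U t < V t := Iff.rfl

lemma lex_lt_of_head {U V : ℕ → ℕ} (h : U 0 < V 0) : toLex U < toLex V :=
  ⟨0, fun s hs => absurd hs (Nat.not_lt_zero s), h⟩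

lemma head_le_of_lex_lt {U V : ℕ → ℕ} (h : toLex U < toLex V) : U 0 ≤ V 0 := by
  obtain ⟨t, h1, h2⟩ := h
  rcases Nat.eq_zero_or_pos t with rfl | ht
  · exact le_of_lt h2
  · exact le_of_eq (h1 0 ht)

lemma lex_lt_tail {U V : ℕ → ℕ} (h : toLex U < toLex V) (h0 : U 0 = V 0) :
    toLex (fun t => U (t + 1)) < toLex (fun t => V (t + 1)) := by
  obtain ⟨t, h1, h2⟩ := h
  cases t with
  | zero =>
    have h2' : U 0 < V 0 := h2
    omega
  | succ t' => exact ⟨t', fun s hs => h1 (s + 1) (by omega), h2⟩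

lemma lex_lt_of_tail {U V : ℕ → ℕ} (h0 : U 0 = V 0)
    (h : toLex (fun t => U (t + 1)) < toLex (fun t => V (t + 1))) :
    toLex U < toLex V := by
  obtain ⟨t, h1, h2⟩ := h
  refine ⟨t + 1, fun s hs => ?_, h2⟩
  cases s with
  | zero => exact h0
  | succ s' => exact h1 s' (by omega)

/-- Order propagation along iterates, for compatible pairs. -/
lemma pMono {w : Fin n → ℕ} {σ : Equiv.Perm (Fin n)} (hc : Compat w σ)
    {a b : Fin n} (hab : a < b) :
    ∀ t : ℕ, (∀ s, 1 ≤ s → s ≤ t → w ((σ ^ s) a) = w ((σ ^ s) b)) → (σ ^ t) a < (σ ^ t) b := by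
  intro t
  induction t with
  | zero => intro _; simpa using hab
  | succ t ih =>
    intro h
    have hxy : (σ ^ t) a < (σ ^ t) b := ih (fun s h1 h2 => h s h1 (Nat.le_succ_of_le h2))
    have hlt := hc hxy
    have heq : w (σ ((σ ^ t) a)) = w (σ ((σ ^ t) b)) := by
      have := h (t + 1) (by omega) le_rfl
      simpa only [pow_succ', Equiv.Perm.mul_apply] using this
    have : σ ((σ ^ t) a) < σ ((σ ^ t) b) := by
      rcases Prod.Lex.toLex_lt_toLex.1 hlt with h' | h'
      · exact absurd h' (by simp only [Function.comp_apply] at *; rw [heq]; exact lt_irrefl _)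
      · exact h'.2
    simpa only [pow_succ', Equiv.Perm.mul_apply] using this

/-- Aperiodicity: reading equality along the cycle forces equality. -/
def Aperiodic (σ : Equiv.Perm (Fin n)) (w : Fin n → ℕ) : Prop :=
  ∀ (a : Fin n) (t : ℕ), (∀ s, w ((σ ^ s) ((σ ^ t) a)) = w ((σ ^ s) a)) → (σ ^ t) a = a

lemma aperiodic_of_compat {w : Fin n → ℕ} {σ : Equiv.Perm (Fin n)} (hc : Compat w σ) :
    Aperiodic σ w := by
  intro a t h
  by_contra hne
  have hN : 0 < orderOf σ := orderOf_pos σ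
  have hg : ∀ u : ℕ, (σ ^ ((u + 1) * t)) a = (σ ^ (u * t)) ((σ ^ t) a) := by
    intro u
    rw [add_mul, one_mul, pow_add, Equiv.Perm.mul_apply]
  have hEnd : (σ ^ (orderOf σ * t)) a = a := by
    rw [pow_mul, pow_orderOf_eq_one, one_pow, Equiv.Perm.one_apply]
  rcases lt_trichotomy a ((σ ^ t) a) with hab | hab | hab
  · have key : ∀ u : ℕ, (σ ^ u) a < (σ ^ u) ((σ ^ t) a) :=
      fun u => pMono hc hab u (fun s _ _ => (h s).symm)
    have mono : StrictMono (fun u : ℕ => (σ ^ (u * t)) a) := by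
      apply strictMono_nat_of_lt_succ
      intro u
      rw [hg u]
      exact key (u * t)
    have h0' : (σ ^ (0 * t)) a < (σ ^ (orderOf σ * t)) a := mono hN
    rw [hEnd] at h0'
    simp at h0'
  · exact hne hab.symm
  · have key : ∀ u : ℕ, (σ ^ u) ((σ ^ t) a) < (σ ^ u) a :=
      fun u => pMono hc hab u (fun s _ _ => h s)
    have mono : StrictAnti (fun u : ℕ => (σ ^ (u * t)) a) := by
      apply strictAnti_nat_of_succ_lt
      intro u
      rw [hg u]
      exact key (u * t)
    have h0' : (σ ^ (orderOf σ * t)) a < (σ ^ (0 * t)) a := mono hN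
    rw [hEnd] at h0'
    simp at h0'

/-- The letter at a position is determined by the word of its successor. -/
lemma letter_eq (σ : Equiv.Perm (Fin n)) (w : Fin n → ℕ) {x y : Fin n}
    (h : Wd σ w (σ x) = Wd σ w (σ y)) : w x = w y := by
  have hN : 1 ≤ orderOf σ := orderOf_pos σ
  have h1 : ∀ z : Fin n, w z = Wd σ w (σ z) (orderOf σ - 1) := by
    intro z
    have : (σ ^ (orderOf σ - 1)) (σ z) = (σ ^ orderOf σ) z := by
      rw [← Equiv.Perm.mul_apply, ← pow_succ]
      congr 2
      omega
    rw [Wd, this, pow_orderOf_eq_one, Equiv.Perm.one_apply]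
  rw [h1 x, h1 y, h]

end GR
namespace GR

open Equiv Tuple

variable {n : ℕ}

/-- Minimum of the cycle of `i`. -/
noncomputable def cmin (σ : Equiv.Perm (Fin n)) (i : Fin n) : Fin n :=
  (Finset.univ.filter fun j => σ.SameCycle i j).min'
    ⟨i, by simp [Equiv.Perm.SameCycle.refl]⟩

lemma cmin_sameCycle (σ : Equiv.Perm (Fin n)) (i : Fin n) : σ.SameCycle i (cmin σ i) := by
  have := Finset.min'_mem (Finset.univ.filter fun j => σ.SameCycle i j)
    ⟨i, by simp [Equiv.Perm.SameCycle.refl]⟩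
  simpa [cmin] using this

lemma cmin_le {σ : Equiv.Perm (Fin n)} {i j : Fin n} (h : σ.SameCycle i j) :
    cmin σ i ≤ j :=
  Finset.min'_le _ _ (by simpa using h)

lemma cmin_congr {σ : Equiv.Perm (Fin n)} {i j : Fin n} (h : σ.SameCycle i j) :
    cmin σ i = cmin σ j := by
  unfold cmin
  congr 1
  ext k
  simp only [Finset.mem_filter, Finset.mem_univ, true_and]
  exact ⟨fun h' => h.symm.trans h', fun h' => h.trans h'⟩

lemma sameCycle_of_cmin_eq {σ : Equiv.Perm (Fin n)} {i j : Fin n}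
    (h : cmin σ i = cmin σ j) : σ.SameCycle i j :=
  (cmin_sameCycle σ i).trans (h ▸ (cmin_sameCycle σ j)).symm

lemma cmin_apply (σ : Equiv.Perm (Fin n)) (i : Fin n) : cmin σ (σ i) = cmin σ i :=
  (cmin_congr (⟨-1, by simp⟩ : σ.SameCycle (σ i) i))

lemma Wd_apply_succ (σ : Equiv.Perm (Fin n)) (w : Fin n → ℕ) (a : Fin n) (t : ℕ) :
    Wd σ w (σ a) t = w ((σ ^ (t + 1)) a) := by
  show w ((σ ^ t) (σ a)) = w ((σ ^ (t + 1)) a)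
  rw [pow_succ, Equiv.Perm.mul_apply]

lemma sameCycle_pow (σ : Equiv.Perm (Fin n)) (i : Fin n) (t : ℕ) :
    σ.SameCycle i ((σ ^ t) i) := ⟨(t : ℤ), by simp⟩

/-- The big sorting key for the reconstruction. -/
noncomputable def bk (σ : Equiv.Perm (Fin n)) (u : Fin n → ℕ) :
    Fin n → (Lex (ℕ → ℕ)) ×ₗ (Fin n) :=
  fun i => toLex (toLex (Wd σ u (σ i)), cmin σ i)

lemma bk_injective {σ : Equiv.Perm (Fin n)} {u : Fin n → ℕ} (hap : Aperiodic σ u) :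
    Function.Injective (bk σ u) := by
  intro x y h
  have hW : Wd σ u (σ x) = Wd σ u (σ y) := by
    have := congrArg (fun p => ofLex (ofLex p).1) h
    simpa [bk] using this
  have hm : cmin σ x = cmin σ y := by
    have := congrArg (fun p => (ofLex p).2) h
    simpa [bk] using this
  obtain ⟨t, _, ht⟩ := (sameCycle_of_cmin_eq hm).exists_pow_eq'
  have hcomm : σ y = (σ ^ t) (σ x) := by
    rw [← ht, ← Equiv.Perm.mul_apply, ← Equiv.Perm.mul_apply]
    rw [(Commute.self_pow σ t).eq]
  have : (σ ^ t) (σ x) = σ x := by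
    apply hap (σ x) t
    intro s
    have h1 : u ((σ ^ s) ((σ ^ t) (σ x))) = Wd σ u (σ y) s := by
      rw [hcomm]; rfl
    rw [h1, ← hW]
    rfl
  have : σ y = σ x := by rw [hcomm, this]
  exact (Equiv.injective σ this).symm

/-- The big key is strictly monotone on compatible pairs (so the ranking is the identity). -/
lemma bk_strictMono {w : Fin n → ℕ} {σ : Equiv.Perm (Fin n)} (hc : Compat w σ) :
    StrictMono (bk σ w) := by
  intro x y hxy
  rcases lt_trichotomy (toLex (Wd σ w (σ x))) (toLex (Wd σ w (σ y))) with hP | hP | hP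
  · exact Prod.Lex.toLex_lt_toLex.2 (Or.inl hP)
  · -- equal words: compare cycle minima
    have hWeq : Wd σ w (σ x) = Wd σ w (σ y) := toLex_inj.1 hP
    have hall : ∀ t : ℕ, (σ ^ t) x < (σ ^ t) y := by
      intro t
      apply pMono hc hxy t
      intro s h1 _
      obtain ⟨s', rfl⟩ : ∃ s', s = s' + 1 := ⟨s - 1, by omega⟩
      have := congrFun hWeq s'
      rwa [Wd_apply_succ, Wd_apply_succ] at this
    obtain ⟨t, _, ht⟩ := (cmin_sameCycle σ y).exists_pow_eq'
    have h1 : cmin σ x ≤ (σ ^ t) x := cmin_le (sameCycle_pow σ x t)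
    have h2 : cmin σ x < cmin σ y := lt_of_le_of_lt h1 (by rw [← ht]; exact hall t)
    exact Prod.Lex.toLex_lt_toLex.2 (Or.inr ⟨hP, h2⟩)
  · exfalso
    obtain ⟨t, h1, h2⟩ := hP
    have hx : (σ ^ t) x < (σ ^ t) y := by
      apply pMono hc hxy t
      intro s hs1 hs2
      obtain ⟨s', rfl⟩ : ∃ s', s = s' + 1 := ⟨s - 1, by omega⟩
      have h1' : Wd σ w (σ y) s' = Wd σ w (σ x) s' := h1 s' (by omega)
      have h1'' := h1'.symm
      rwa [Wd_apply_succ, Wd_apply_succ] at h1''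
    have hlt := hc hx
    have h2' : Wd σ w (σ y) t < Wd σ w (σ x) t := h2
    have hUt : Wd σ w (σ x) t = w (σ ((σ ^ t) x)) := by
      rw [Wd_apply_succ, pow_succ', Equiv.Perm.mul_apply]
    have hVt : Wd σ w (σ y) t = w (σ ((σ ^ t) y)) := by
      rw [Wd_apply_succ, pow_succ', Equiv.Perm.mul_apply]
    have hle : w (σ ((σ ^ t) x)) ≤ w (σ ((σ ^ t) y)) := by
      rcases Prod.Lex.toLex_lt_toLex.1 hlt with h' | h'
      · exact le_of_lt h'
      · exact le_of_eq h'.1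
    rw [hUt, hVt] at h2'
    exact absurd (lt_of_le_of_lt hle h2') (lt_irrefl _)

end GR
namespace GR

open Equiv Tuple

variable {n : ℕ}

lemma aperiodic_comp {σ : Equiv.Perm (Fin n)} {w : Fin n → ℕ} {e : ℕ → ℕ}
    (he : Function.Injective e) (hap : Aperiodic σ w) : Aperiodic σ (e ∘ w) := by
  intro a t h
  exact hap a t (fun s => he (h s))

lemma aperiodic_conj {σ : Equiv.Perm (Fin n)} {w : Fin n → ℕ}
    (hap : Aperiodic σ w) (π : Equiv.Perm (Fin n)) :
    Aperiodic (π * σ * π⁻¹) (w ∘ ⇑π⁻¹) := by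
  intro a t h
  have hpow : ∀ s : ℕ, (π * σ * π⁻¹) ^ s = π * σ ^ s * π⁻¹ := fun s => conj_pow
  have key : (σ ^ t) (π⁻¹ a) = π⁻¹ a := by
    apply hap (π⁻¹ a) t
    intro s
    have := h s
    simp only [hpow, Equiv.Perm.mul_apply, Function.comp_apply] at this
    simp only [Equiv.Perm.inv_def, Equiv.symm_apply_apply] at this
    exact this
  rw [hpow, Equiv.Perm.mul_apply, Equiv.Perm.mul_apply, key]
  simp

/-- The word of the Φ-construction applied to a (relabelled) word. -/
noncomputable def phiW (τ : Equiv.Perm (Fin n)) (v : Fin n → ℕ) : Fin n → ℕ :=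
  v ∘ ⇑(Tuple.sort (bk τ v))

lemma phi_compat {τ : Equiv.Perm (Fin n)} {v : Fin n → ℕ} (hap : Aperiodic τ v) :
    Compat (phiW τ v) ((Tuple.sort (bk τ v))⁻¹ * τ * (Tuple.sort (bk τ v))) := by
  set S := Tuple.sort (bk τ v) with hS
  have hsm : StrictMono (bk τ v ∘ ⇑S) :=
    (Tuple.monotone_sort (bk τ v)).strictMono_of_injective
      ((bk_injective hap).comp (Equiv.injective _))
  have hrank : ∀ x y : Fin n, bk τ v x < bk τ v y ↔ S⁻¹ x < S⁻¹ y := by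
    intro x y
    have := hsm.lt_iff_lt (a := S⁻¹ x) (b := S⁻¹ y)
    simp only [Function.comp_apply, Equiv.Perm.inv_def, Equiv.apply_symm_apply] at this
    exact this
  intro r s hrs
  have hk : bk τ v (S r) < bk τ v (S s) := hsm hrs
  have hgoal1 : (kw (phiW τ v) ∘ ⇑(S⁻¹ * τ * S)) r
      = toLex (v (τ (S r)), S⁻¹ (τ (S r))) := by
    simp [kw, phiW, Equiv.Perm.mul_apply, ← hS]
  have hgoal2 : (kw (phiW τ v) ∘ ⇑(S⁻¹ * τ * S)) s
      = toLex (v (τ (S s)), S⁻¹ (τ (S s))) := by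
    simp [kw, phiW, Equiv.Perm.mul_apply, ← hS]
  rw [hgoal1, hgoal2]
  set i := S r
  set j := S s
  rcases Prod.Lex.toLex_lt_toLex.1 hk with hW | hWm
  · -- strict inequality of successor words
    have hle : v (τ i) ≤ v (τ j) := by
      have := head_le_of_lex_lt hW
      simpa [Wd] using this
    rcases lt_or_eq_of_le hle with hlt | heads
    · exact Prod.Lex.toLex_lt_toLex.2 (Or.inl hlt)
    · refine Prod.Lex.toLex_lt_toLex.2 (Or.inr ⟨heads, ?_⟩)
      rw [← hrank]
      apply Prod.Lex.toLex_lt_toLex.2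
      left
      have htail := lex_lt_tail hW (by simpa [Wd] using heads)
      rw [Wd_succ' τ v (τ i), Wd_succ' τ v (τ j)] at htail
      exact htail
  · -- equal successor words, smaller cycle min
    obtain ⟨hWeq, hm⟩ := hWm
    have hWeq' : Wd τ v (τ i) = Wd τ v (τ j) := toLex_inj.1 hWeq
    have heads : v (τ i) = v (τ j) := by
      have := congrFun hWeq' 0
      simpa [Wd] using this
    refine Prod.Lex.toLex_lt_toLex.2 (Or.inr ⟨heads, ?_⟩)
    rw [← hrank]
    apply Prod.Lex.toLex_lt_toLex.2
    right
    constructor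
    · rw [← Wd_succ' τ v (τ i), ← Wd_succ' τ v (τ j), hWeq']
    · rw [cmin_apply, cmin_apply]
      exact hm

/-- The transported word along the construction. -/
lemma Wd_conj (σ S : Equiv.Perm (Fin n)) (w : Fin n → ℕ) (y : Fin n) :
    Wd (S⁻¹ * σ * S) (w ∘ ⇑S) y = Wd σ w (S y) := by
  funext t
  have hpow : (S⁻¹ * σ * S) ^ t = S⁻¹ * σ ^ t * S := by
    have : S⁻¹ * σ * S = S⁻¹ * σ * (S⁻¹)⁻¹ := by rw [inv_inv]
    rw [this, conj_pow, inv_inv]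
  simp only [Wd, hpow, Equiv.Perm.mul_apply, Function.comp_apply]
  simp only [Equiv.Perm.inv_def, Equiv.apply_symm_apply]

end GR
namespace GR

open Equiv Tuple

variable {n : ℕ}

/-- The relabelling map on words: relabel by `E`, then recanonicalize. -/
noncomputable def FF (E : Equiv.Perm ℕ) (w : Fin n → ℕ) : Fin n → ℕ :=
  phiW (sortK w) (⇑E ∘ w)

lemma aperiodic_E (E : Equiv.Perm ℕ) (w : Fin n → ℕ) :
    Aperiodic (sortK w) (⇑E ∘ w) :=
  aperiodic_comp E.injective (aperiodic_of_compat (compat_sortK w))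

lemma sortK_FF (E : Equiv.Perm ℕ) (w : Fin n → ℕ) :
    sortK (FF E w) = (Tuple.sort (bk (sortK w) (⇑E ∘ w)))⁻¹ * sortK w
      * Tuple.sort (bk (sortK w) (⇑E ∘ w)) :=
  (compat_unique (phi_compat (aperiodic_E E w))).symm

lemma FF_roundtrip (E : Equiv.Perm ℕ) (w : Fin n → ℕ) : FF E⁻¹ (FF E w) = w := by
  set σ := sortK w with hσ
  have hc : Compat w σ := compat_sortK w
  set u : Fin n → ℕ := ⇑E ∘ w with hu
  set S₁ := Tuple.sort (bk σ u) with hS₁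
  have hw₂ : FF E w = u ∘ ⇑S₁ := rfl
  have hsort₂ : sortK (FF E w) = S₁⁻¹ * σ * S₁ := sortK_FF E w
  set σ₂ := S₁⁻¹ * σ * S₁ with hσ₂
  have hv' : ⇑E⁻¹ ∘ (FF E w) = w ∘ ⇑S₁ := by
    funext a
    simp [hw₂, hu]
  have hFF2 : FF E⁻¹ (FF E w)
      = (w ∘ ⇑S₁) ∘ ⇑(Tuple.sort (bk σ₂ (w ∘ ⇑S₁))) := by
    rw [FF, hsort₂, phiW, hv']
  set S₂ := Tuple.sort (bk σ₂ (w ∘ ⇑S₁)) with hS₂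
  -- the primary key
  set P : Fin n → Lex (ℕ → ℕ) := fun x => toLex (Wd σ w (σ x)) with hP
  have hap₂ : Aperiodic σ₂ (w ∘ ⇑S₁) := by
    have := aperiodic_conj (aperiodic_of_compat hc) S₁⁻¹
    simpa only [inv_inv] using this
  have hPmono : Monotone P := by
    intro x y hxy
    rcases eq_or_lt_of_le hxy with rfl | h
    · exact le_rfl
    · have := bk_strictMono hc h
      rcases Prod.Lex.toLex_lt_toLex.1 this with h' | h'
      · exact le_of_lt h'
      · exact le_of_eq h'.1
  have hsm₂ : StrictMono (bk σ₂ (w ∘ ⇑S₁) ∘ ⇑S₂) :=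
    (Tuple.monotone_sort _).strictMono_of_injective
      ((bk_injective hap₂).comp (Equiv.injective _))
  have hP2 : Monotone (P ∘ ⇑(S₂.trans S₁)) := by
    intro x y hxy
    rcases eq_or_lt_of_le hxy with rfl | h
    · exact le_rfl
    · have hk := hsm₂ h
      have htrans : ∀ z : Fin n, toLex (Wd σ₂ (w ∘ ⇑S₁) (σ₂ (S₂ z))) = P (S₁ (S₂ z)) := by
        intro z
        rw [hP]
        rw [hσ₂, Wd_conj σ S₁ w]
        congr 1
        simp [hσ₂, Equiv.Perm.mul_apply]
      rcases Prod.Lex.toLex_lt_toLex.1 hk with h' | h'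
      · have := le_of_lt h'
        rw [htrans x, htrans y] at this
        exact this
      · have := le_of_eq h'.1
        rw [htrans x, htrans y] at this
        exact this
  have hPeq : P ∘ ⇑(S₂.trans S₁) = P ∘ ⇑(Equiv.refl (Fin n)) := by
    apply Tuple.unique_monotone hP2
    simpa using hPmono
  funext a
  have ha := congrFun hPeq a
  simp only [Function.comp_apply, Equiv.coe_trans, Equiv.coe_refl, id_eq] at ha
  have hWa : Wd σ w (σ (S₁ (S₂ a))) = Wd σ w (σ a) := toLex_inj.1 ha
  have : w (S₁ (S₂ a)) = w a := letter_eq σ w hWa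
  rw [hFF2]
  exact this

end GR
namespace GR

open Equiv Tuple

variable {n : ℕ}

lemma finSucc_eq (i : Fin n) (h : (i : ℕ) + 1 < n) : finSucc i = ⟨(i : ℕ) + 1, h⟩ := by
  simp only [finSucc]
  congr 1
  exact Nat.mod_eq_of_lt h

/-- Content (evaluation) of a word. -/
def cnt (w : Fin n → ℕ) : ℕ → ℕ := fun k => (Finset.univ.filter fun i => w i = k).card

lemma cnt_comp_perm (w : Fin n → ℕ) (ρ : Equiv.Perm (Fin n)) : cnt (w ∘ ⇑ρ) = cnt w := by
  funext k
  apply Finset.card_bij (fun i _ => ρ i)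
  · intro a ha
    simp only [Finset.mem_filter, Finset.mem_univ, true_and, Function.comp_apply] at ha ⊢
    exact ha
  · intro a _ b _ hab
    exact ρ.injective hab
  · intro b hb
    refine ⟨ρ⁻¹ b, ?_, by simp⟩
    simp only [Finset.mem_filter, Finset.mem_univ, true_and, Function.comp_apply] at hb ⊢
    simpa using hb

lemma cnt_E (E : Equiv.Perm ℕ) (w : Fin n → ℕ) (k : ℕ) :
    cnt (⇑E ∘ w) k = cnt w (E⁻¹ k) := by
  unfold cnt
  congr 1
  ext i
  simp only [Finset.mem_filter, Finset.mem_univ, true_and, Function.comp_apply]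
  constructor
  · rintro rfl; simp
  · rintro h; rw [h]; simp

lemma cnt_FF (E : Equiv.Perm ℕ) (w : Fin n → ℕ) (k : ℕ) :
    cnt (FF E w) k = cnt w (E⁻¹ k) := by
  have h1 : FF E w = (⇑E ∘ w) ∘ ⇑(Tuple.sort (bk (sortK w) (⇑E ∘ w))) := rfl
  rw [h1, cnt_comp_perm, cnt_E]

lemma isConj_sortK_FF (E : Equiv.Perm ℕ) (w : Fin n → ℕ) :
    IsConj (sortK w) (sortK (FF E w)) := by
  rw [sortK_FF]
  exact isConj_iff.2 ⟨(Tuple.sort (bk (sortK w) (⇑E ∘ w)))⁻¹, by rw [inv_inv]⟩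

/-- The conditions in the definition of `FQ`. -/
def Cond (n : ℕ) (J : Finset (Fin n)) (d : ℕ →₀ ℕ) (f : Fin n → ℕ) : Prop :=
  (∀ i j : Fin n, i ≤ j → f i ≤ f j) ∧
  (∀ i : Fin n, (i : ℕ) + 1 < n → i ∈ J → f i < f (finSucc i)) ∧
  (∀ k : ℕ, (Finset.univ.filter fun i => f i = k).card = d k)

lemma strictMono_iff_succ {α : Type*} [Preorder α] (g : Fin n → α) :
    StrictMono g ↔ ∀ (i : ℕ) (h : i + 1 < n), g ⟨i, by omega⟩ < g ⟨i + 1, h⟩ := by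
  constructor
  · intro hg i h
    exact hg (by simp [Fin.mk_lt_mk])
  · intro h
    have key : ∀ (m : ℕ) (a b : Fin n), (b : ℕ) = (a : ℕ) + m + 1 → g a < g b := by
      intro m
      induction m with
      | zero =>
        intro a b hb
        have ha : ((a : ℕ) + 1) < n := by omega
        have h1 := h a ha
        have e1 : (⟨(a : ℕ), by omega⟩ : Fin n) = a := by ext; rfl
        have e2 : (⟨(a : ℕ) + 1, ha⟩ : Fin n) = b := by
          ext
          show (a : ℕ) + 1 = (b : ℕ)
          omega
        rwa [e1, e2] at h1
      | succ m ih =>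
        intro a b hb
        have hc : ((a : ℕ) + m + 1) < n := by omega
        have h1 : g a < g ⟨(a : ℕ) + m + 1, hc⟩ := ih a _ (by simp)
        have h2 : g (⟨(a : ℕ) + m + 1, hc⟩ : Fin n) < g b := by
          have ha2 : ((a : ℕ) + m + 1) + 1 < n := by omega
          have h3 := h ((a : ℕ) + m + 1) ha2
          have e2 : (⟨(a : ℕ) + m + 1 + 1, ha2⟩ : Fin n) = b := by
            ext
            show (a : ℕ) + m + 1 + 1 = (b : ℕ)
            omega
          rwa [e2] at h3
        exact lt_trans h1 h2
    intro a b hab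
    exact key ((b : ℕ) - (a : ℕ) - 1) a b (by have := (Fin.lt_iff_val_lt_val).1 hab; omega)

lemma mem_pDes_iff {σ : Equiv.Perm (Fin n)} {i : Fin n} :
    i ∈ pDes σ ↔ (i : ℕ) + 1 < n ∧ σ (finSucc i) < σ i := by
  simp [pDes]

lemma compat_iff_cond (σ : Equiv.Perm (Fin n)) (f : Fin n → ℕ) :
    Compat (f ∘ ⇑σ⁻¹) σ ↔
      (∀ i j : Fin n, i ≤ j → f i ≤ f j) ∧
      (∀ i : Fin n, (i : ℕ) + 1 < n → i ∈ pDes σ → f i < f (finSucc i)) := by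
  have hkey : (kw (f ∘ ⇑σ⁻¹) ∘ ⇑σ) = fun i => toLex (f i, σ i) := by
    funext i
    simp [kw]
  unfold Compat
  rw [hkey]
  constructor
  · intro hsm
    constructor
    · intro i j hij
      rcases eq_or_lt_of_le hij with rfl | h
      · exact le_rfl
      · have := hsm h
        rcases Prod.Lex.toLex_lt_toLex.1 this with h' | h'
        · exact le_of_lt h'
        · exact le_of_eq h'.1
    · intro i hi hdes
      obtain ⟨_, hdes'⟩ := mem_pDes_iff.1 hdes
      have hlt : i < finSucc i := by
        rw [finSucc_eq i hi]
        simp [Fin.lt_iff_val_lt_val]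
      have := hsm hlt
      rcases Prod.Lex.toLex_lt_toLex.1 this with h' | h'
      · exact h'
      · exact absurd h'.2 (asymm hdes')
  · rintro ⟨hmono, hdes⟩
    rw [strictMono_iff_succ]
    intro i h
    set a : Fin n := ⟨i, by omega⟩
    set b : Fin n := ⟨i + 1, h⟩
    have hfs : finSucc a = b := by
      rw [finSucc_eq a h]
    have hab : a ≤ b := by simp [a, b, Fin.le_iff_val_le_val]
    have hle : f a ≤ f b := hmono a b hab
    rcases eq_or_lt_of_le hle with heq | hlt
    · refine Prod.Lex.toLex_lt_toLex.2 (Or.inr ⟨heq, ?_⟩)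
      by_contra hns
      have hne : σ a ≠ σ b := fun hcc => by
        have := σ.injective hcc
        simp [a, b, Fin.ext_iff] at this
      have hba : σ b < σ a := lt_of_le_of_ne (not_lt.1 hns) (Ne.symm hne)
      have hdes' : a ∈ pDes σ := mem_pDes_iff.2 ⟨h, by rwa [hfs]⟩
      have := hdes a h hdes'
      rw [hfs] at this
      exact absurd this (by rw [heq]; exact lt_irrefl _)
    · exact Prod.Lex.toLex_lt_toLex.2 (Or.inl hlt)

lemma cond3_iff_cnt (f : Fin n → ℕ) (d : ℕ →₀ ℕ) :
    (∀ k : ℕ, (Finset.univ.filter fun i => f i = k).card = d k) ↔ (∀ k, cnt f k = d k) :=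
  Iff.rfl

instance cond_finite (J : Finset (Fin n)) (d : ℕ →₀ ℕ) :
    Finite {f : Fin n → ℕ // Cond n J d f} := by
  have hmem : ∀ (f : {f : Fin n → ℕ // Cond n J d f}) (i : Fin n), f.1 i ∈ d.support := by
    intro f i
    have h3 := f.2.2.2 (f.1 i)
    have hi : i ∈ Finset.univ.filter fun j => f.1 j = f.1 i := by simp
    have hpos : 0 < (Finset.univ.filter fun j => f.1 j = f.1 i).card :=
      Finset.card_pos.2 ⟨i, hi⟩
    rw [h3] at hpos
    exact Finsupp.mem_support_iff.2 hpos.ne'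
  have hinj : Function.Injective
      (fun f : {f : Fin n → ℕ // Cond n J d f} =>
        (fun i => (⟨f.1 i, hmem f i⟩ : {k : ℕ // k ∈ d.support}))) := by
    intro f g h
    apply Subtype.ext
    funext i
    exact congrArg Subtype.val (congrFun h i)
  exact Finite.of_injective _ hinj

end GR
namespace GR

open Equiv Tuple

variable {n : ℕ}

/-- Pairs `(σ, f)` with `σ` in the class of `π₀` and `f` satisfying the `FQ` conditions. -/
abbrev TT (n : ℕ) (π₀ : Equiv.Perm (Fin n)) (d : ℕ →₀ ℕ) : Type :=
  Σ σ : {σ : Equiv.Perm (Fin n) // IsConj π₀ σ}, {f : Fin n → ℕ // Cond n (pDes σ.1) d f}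

/-- Words whose canonical sorting permutation lies in the class of `π₀`, with content `d`. -/
def XX (n : ℕ) (π₀ : Equiv.Perm (Fin n)) (d : ℕ →₀ ℕ) : Type :=
  {w : Fin n → ℕ // IsConj π₀ (sortK w) ∧ ∀ k, cnt w k = d k}

lemma TT_ext {π₀ : Equiv.Perm (Fin n)} {d : ℕ →₀ ℕ} (p q : TT n π₀ d)
    (h1 : p.1.1 = q.1.1) (h2 : p.2.1 = q.2.1) : p = q := by
  obtain ⟨⟨σ1, hσ1⟩, f1, hf1⟩ := p
  obtain ⟨⟨σ2, hσ2⟩, f2, hf2⟩ := q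
  dsimp at h1
  subst h1
  dsimp at h2
  subst h2
  rfl

/-- The pairing `(σ, f) ↦ f ∘ σ⁻¹`. -/
noncomputable def TXequiv (π₀ : Equiv.Perm (Fin n)) (d : ℕ →₀ ℕ) :
    TT n π₀ d ≃ XX n π₀ d where
  toFun p := ⟨p.2.1 ∘ ⇑(p.1.1)⁻¹, by
    obtain ⟨⟨σ, hσ⟩, f, hf⟩ := p
    have hcompat : Compat (f ∘ ⇑σ⁻¹) σ := (compat_iff_cond σ f).2 ⟨hf.1, hf.2.1⟩
    have hs : σ = sortK (f ∘ ⇑σ⁻¹) := compat_unique hcompat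
    constructor
    · rw [← hs]; exact hσ
    · intro k
      rw [show cnt (f ∘ ⇑σ⁻¹) = cnt f from cnt_comp_perm f σ⁻¹]
      exact hf.2.2 k⟩
  invFun w := ⟨⟨sortK w.1, w.2.1⟩, ⟨w.1 ∘ ⇑(sortK w.1), by
    have hcompat : Compat w.1 (sortK w.1) := compat_sortK w.1
    have hw : (w.1 ∘ ⇑(sortK w.1)) ∘ ⇑(sortK w.1)⁻¹ = w.1 := by
      funext a; simp
    refine ⟨?_, ?_, ?_⟩
    · exact ((compat_iff_cond (sortK w.1) (w.1 ∘ ⇑(sortK w.1))).1 (by rwa [hw])).1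
    · exact ((compat_iff_cond (sortK w.1) (w.1 ∘ ⇑(sortK w.1))).1 (by rwa [hw])).2
    · intro k
      rw [show (Finset.univ.filter fun i => (w.1 ∘ ⇑(sortK w.1)) i = k).card
            = cnt (w.1 ∘ ⇑(sortK w.1)) k from rfl]
      rw [cnt_comp_perm]
      exact w.2.2 k⟩⟩
  left_inv p := by
    apply TT_ext
    · show sortK (p.2.1 ∘ ⇑(p.1.1)⁻¹) = p.1.1
      exact (compat_unique ((compat_iff_cond p.1.1 p.2.1).2 ⟨p.2.2.1, p.2.2.2.1⟩)).symm
    · show (p.2.1 ∘ ⇑(p.1.1)⁻¹) ∘ ⇑(sortK (p.2.1 ∘ ⇑(p.1.1)⁻¹)) = p.2.1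
      rw [← compat_unique ((compat_iff_cond p.1.1 p.2.1).2 ⟨p.2.2.1, p.2.2.2.1⟩)]
      funext a
      simp
  right_inv w := by
    apply Subtype.ext
    show (w.1 ∘ ⇑(sortK w.1)) ∘ ⇑(sortK w.1)⁻¹ = w.1
    funext a
    simp

/-- Relabelling the alphabet by `e` gives an equivalence between the `XX`s. -/
noncomputable def XXequiv (π₀ : Equiv.Perm (Fin n)) (e : Equiv.Perm ℕ) (d d' : ℕ →₀ ℕ)
    (hd : ∀ k, d' k = d (e⁻¹ k)) : XX n π₀ d ≃ XX n π₀ d' where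
  toFun w := ⟨FF e w.1, by
    constructor
    · exact w.2.1.trans (isConj_sortK_FF e w.1)
    · intro k
      rw [cnt_FF, w.2.2 (e⁻¹ k), hd]⟩
  invFun w := ⟨FF e⁻¹ w.1, by
    constructor
    · exact w.2.1.trans (isConj_sortK_FF e⁻¹ w.1)
    · intro k
      rw [cnt_FF, w.2.2 ((e⁻¹)⁻¹ k), hd]
      simp⟩
  left_inv w := Subtype.ext (FF_roundtrip e w.1)
  right_inv w := Subtype.ext (by
    have := FF_roundtrip e⁻¹ w.1
    rwa [inv_inv] at this)

lemma card_TT (π₀ : Equiv.Perm (Fin n)) (d : ℕ →₀ ℕ) :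
    Nat.card (TT n π₀ d)
      = ∑ σ ∈ Finset.univ.filter (fun σ : Equiv.Perm (Fin n) => IsConj π₀ σ),
          Nat.card {f : Fin n → ℕ // Cond n (pDes σ) d f} := by
  letI : ∀ σ : {σ : Equiv.Perm (Fin n) // IsConj π₀ σ},
      Fintype {f : Fin n → ℕ // Cond n (pDes σ.1) d f} := fun σ => Fintype.ofFinite _
  letI : Fintype {σ : Equiv.Perm (Fin n) // IsConj π₀ σ} := Fintype.ofFinite _
  have h1 : Nat.card (TT n π₀ d)
      = ∑ σ : {σ : Equiv.Perm (Fin n) // IsConj π₀ σ},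
          Nat.card {f : Fin n → ℕ // Cond n (pDes σ.1) d f} := by
    rw [Nat.card_eq_fintype_card, Fintype.card_sigma]
    congr 1
    funext σ
    rw [Nat.card_eq_fintype_card]
  rw [h1]
  rw [← Finset.sum_subtype_eq_sum_filter
    (fun σ => Nat.card {f : Fin n → ℕ // Cond n (pDes σ) d f})
    (s := Finset.univ) (p := fun σ => IsConj π₀ σ)]
  rw [Finset.subtype_univ]

lemma main_count (π₀ : Equiv.Perm (Fin n)) (e : Equiv.Perm ℕ) (d d' : ℕ →₀ ℕ)
    (hd : ∀ k, d' k = d (e⁻¹ k)) :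
    (∑ σ ∈ Finset.univ.filter (fun σ : Equiv.Perm (Fin n) => IsConj π₀ σ),
        Nat.card {f : Fin n → ℕ // Cond n (pDes σ) d' f})
    = ∑ σ ∈ Finset.univ.filter (fun σ : Equiv.Perm (Fin n) => IsConj π₀ σ),
        Nat.card {f : Fin n → ℕ // Cond n (pDes σ) d f} := by
  rw [← card_TT, ← card_TT]
  exact Nat.card_congr
    (((TXequiv π₀ d').trans ((XXequiv π₀ e d d' hd).symm)).trans (TXequiv π₀ d).symm)

end GR

namespace GR

lemma FQ_coeff {n : ℕ} (J : Finset (Fin n)) (d : ℕ →₀ ℕ) :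
    MvPowerSeries.coeff (R := ℚ) d (FQ n J) = (Nat.card {f : Fin n → ℕ // Cond n J d f} : ℚ) := rfl

lemma QB_coeff {n : ℕ} (d : ℕ →₀ ℕ) (B : Multiset (Equiv.Perm (Fin n))) :
    MvPowerSeries.coeff (R := ℚ) d (QB n B)
      = (B.map fun σ => ((Nat.card {f : Fin n → ℕ // Cond n (pDes σ) d f} : ℚ))).sum := by
  rw [MvPowerSeries.coeff_apply]
  unfold QB
  induction B using Multiset.induction_on with
  | empty => rfl
  | cons a s ih =>
    rw [Multiset.map_cons, Multiset.map_cons, Multiset.sum_cons, Multiset.sum_cons]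
    rw [show ((FQ n (pDes a) + (s.map fun π => FQ n (pDes π)).sum) d)
        = FQ n (pDes a) d + ((s.map fun π => FQ n (pDes π)).sum) d from rfl]
    rw [ih]
    rfl

end GR


/-- Every conjugacy class of `S_n` is a symmetric set. -/
theorem conjugacy_class_symmetric (n : ℕ) (π : Equiv.Perm (Fin n)) :
    IsSymmPS (QB n (Finset.univ.filter fun σ : Equiv.Perm (Fin n) => IsConj π σ).val) := by
  intro e d
  rw [GR.QB_coeff, GR.QB_coeff]
  have hfin : ∀ d0 : ℕ →₀ ℕ,
      ((Finset.univ.filter fun σ : Equiv.Perm (Fin n) => IsConj π σ).val.map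
        fun σ => ((Nat.card {f : Fin n → ℕ // GR.Cond n (pDes σ) d0 f} : ℚ))).sum
      = ((∑ σ ∈ Finset.univ.filter (fun σ : Equiv.Perm (Fin n) => IsConj π σ),
          Nat.card {f : Fin n → ℕ // GR.Cond n (pDes σ) d0 f} : ℕ) : ℚ) := by
    intro d0
    rw [Nat.cast_sum]
    rfl
  rw [hfin, hfin]
  congr 1
  exact GR.main_count π e d (Finsupp.equivMapDomain e d)
    (fun k => Finsupp.equivMapDomain_apply e d k)
end
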